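/- arXiv:2007.14723 — 9 statements merged into one kernel-verified Lean document; each statement's English description precedes it below -/
import Mathlib

section
/- Let X and Y be infinite Tychonoff topological spaces such that the product X × Y is not pseudocompact. Then C_p(X × Y) contains a complemented copy of ℝ^ℕ (with the product topology), i.e., there exist continuous linear maps S : ℝ^ℕ → C_p(X × Y) and T : C_p(X × Y) → ℝ^ℕ with T ∘ S = id. -/
open Filter Topology

/-- A topological space is pseudocompact if every continuous real-valued function on it
is bounded. -/
def Pseudocompact (X : Type*) [TopologicalSpace X] : Prop :=
  ∀ f : X → ℝ, Continuous f → ∃ M : ℝ, ∀ x, |f x| ≤ M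

/-- `C_p(X)`: the submodule of `ℝ^X` consisting of continuous functions; as a subtype it
carries the topology of pointwise convergence. -/
def Cp (X : Type*) [TopologicalSpace X] : Submodule ℝ (X → ℝ) where
  carrier := {f | Continuous f}
  add_mem' hf hg := hf.add hg
  zero_mem' := continuous_const
  smul_mem' c f hf := hf.const_smul c

/-- `E` contains a complemented copy of `F`: there are continuous linear maps
`S : F → E` and `T : E → F` with `T ∘ S = id`. -/
def HasComplementedCopy (E F : Type*) [AddCommGroup E] [Module ℝ E] [TopologicalSpace E]
    [AddCommGroup F] [Module ℝ F] [TopologicalSpace F] : Prop :=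
  ∃ (S : F →ₗ[ℝ] E) (T : E →ₗ[ℝ] F), Continuous S ∧ Continuous T ∧ ∀ y, T (S y) = y

/-! Auxiliary bump functions. -/

noncomputable def bfun (s : ℕ → ℝ) (n : ℕ) (t : ℝ) : ℝ := max 0 (1 - |t - s n|)

lemma bfun_cont (s : ℕ → ℝ) (n : ℕ) : Continuous (bfun s n) :=
  continuous_const.max (continuous_const.sub (continuous_id.sub continuous_const).abs)

lemma bfun_self (s : ℕ → ℝ) (n : ℕ) : bfun s n (s n) = 1 := by simp [bfun]

lemma bfun_zero {s : ℕ → ℝ} {n : ℕ} {t : ℝ} (h : 1 ≤ |t - s n|) : bfun s n t = 0 := by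
  unfold bfun
  rw [max_eq_left]
  linarith

lemma bfun_zero_of_le {s : ℕ → ℝ} (hs : ∀ n : ℕ, (n : ℝ) < s n) {n : ℕ} {t : ℝ}
    (h : t + 1 ≤ (n : ℝ)) : bfun s n t = 0 := by
  refine bfun_zero ?_
  have h1 := hs n
  have : 1 ≤ s n - t := by linarith
  calc (1 : ℝ) ≤ s n - t := this
    _ = -(t - s n) := by ring
    _ ≤ |t - s n| := neg_le_abs _

noncomputable def Fsum (s : ℕ → ℝ) (a : ℕ → ℝ) (t : ℝ) : ℝ :=
  ∑ n ∈ Finset.range (⌈t⌉₊ + 2), a n * bfun s n t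

lemma Fsum_stab {s : ℕ → ℝ} (hs : ∀ n : ℕ, (n : ℝ) < s n) (a : ℕ → ℝ) (t : ℝ) {m : ℕ}
    (hm : ⌈t⌉₊ + 2 ≤ m) : Fsum s a t = ∑ n ∈ Finset.range m, a n * bfun s n t := by
  unfold Fsum
  refine Finset.sum_subset (Finset.range_subset_range.mpr hm) (fun n _ hn => ?_)
  rw [Finset.mem_range, not_lt] at hn
  have h1 : ((⌈t⌉₊ : ℕ) : ℝ) + 2 ≤ (n : ℝ) := by exact_mod_cast hn
  have h2 : t ≤ (⌈t⌉₊ : ℝ) := Nat.le_ceil t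
  rw [bfun_zero_of_le hs (by linarith)]
  ring

lemma Fsum_continuous {s : ℕ → ℝ} (hs : ∀ n : ℕ, (n : ℝ) < s n) (a : ℕ → ℝ) :
    Continuous (Fsum s a) := by
  rw [continuous_iff_continuousAt]
  intro t₀
  have hcont : Continuous fun t => ∑ n ∈ Finset.range (⌈t₀ + 1⌉₊ + 2), a n * bfun s n t :=
    continuous_finset_sum _ fun n _ => continuous_const.mul (bfun_cont s n)
  refine hcont.continuousAt.congr ?_
  filter_upwards [Iio_mem_nhds (lt_add_one t₀)] with t ht
  exact (Fsum_stab hs a t (add_le_add_left (Nat.ceil_le_ceil ht.le) 2)).symm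

lemma Fsum_eval {s : ℕ → ℝ} (hs : ∀ n : ℕ, (n : ℝ) < s n)
    (hgap : ∀ m n, m < n → s m + 2 ≤ s n) (a : ℕ → ℝ) (n : ℕ) :
    Fsum s a (s n) = a n := by
  have hn : n < ⌈s n⌉₊ + 2 := by
    have h1 : ((n : ℕ) : ℝ) ≤ ((⌈s n⌉₊ : ℕ) : ℝ) := le_trans (hs n).le (Nat.le_ceil _)
    have h2 : n ≤ ⌈s n⌉₊ := by exact_mod_cast h1
    omega
  unfold Fsum
  rw [Finset.sum_eq_single n]
  · rw [bfun_self]; ring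
  · intro m _ hm
    have hb : (1 : ℝ) ≤ |s n - s m| := by
      rcases Ne.lt_or_gt hm with h | h
      · have := hgap m n h
        rw [abs_of_nonneg] <;> linarith
      · have := hgap n m h
        rw [abs_of_nonpos] <;> linarith
    rw [bfun_zero hb]; ring
  · intro h
    exact absurd (Finset.mem_range.mpr hn) h

lemma Fsum_add (s a a' : ℕ → ℝ) (t : ℝ) :
    Fsum s (a + a') t = Fsum s a t + Fsum s a' t := by
  unfold Fsum
  rw [← Finset.sum_add_distrib]
  exact Finset.sum_congr rfl fun n _ => by simp [add_mul]

lemma Fsum_smul (s : ℕ → ℝ) (c : ℝ) (a : ℕ → ℝ) (t : ℝ) :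
    Fsum s (c • a) t = c * Fsum s a t := by
  unfold Fsum
  rw [Finset.mul_sum]
  exact Finset.sum_congr rfl fun n _ => by simp [mul_assoc]

/-- The key construction: if `Z` carries a continuous function whose absolute value is
unbounded, then `C_p(Z)` contains a complemented copy of `ℝ^ℕ`. -/
theorem aux_copy {Z : Type*} [TopologicalSpace Z] {f : Z → ℝ} (hf : Continuous f)
    (hub : ∀ M : ℝ, ∃ x, M < f x) :
    HasComplementedCopy (↥(Cp Z)) (ℕ → ℝ) := by
  choose u hu using hub
  let z : ℕ → Z := fun n => Nat.rec (u 0) (fun n zn => u (max (f zn + 2) ((n : ℝ) + 1))) n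
  set s : ℕ → ℝ := fun n => f (z n) with hs_def
  have hz0 : (0 : ℝ) < s 0 := hu 0
  have hzs : ∀ n, max (s n + 2) ((n : ℝ) + 1) < s (n + 1) := fun n => hu _
  have hs : ∀ n : ℕ, (n : ℝ) < s n := by
    intro n
    induction n with
    | zero => simpa using hz0
    | succ n ih =>
      have := hzs n
      have h2 : ((n : ℝ) + 1) ≤ max (s n + 2) ((n : ℝ) + 1) := le_max_right _ _
      push_cast
      linarith
  have hmono : ∀ n, s n < s (n + 1) := by
    intro n
    have := hzs n
    have := le_max_left (s n + 2) ((n : ℝ) + 1)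
    linarith
  have hgap : ∀ m n, m < n → s m + 2 ≤ s n := by
    intro m n hmn
    induction n with
    | zero => omega
    | succ n ih =>
      rcases Nat.lt_succ_iff_lt_or_eq.mp hmn with h | h
      · have h1 := ih h
        have h2 := hmono n
        linarith
      · subst h
        have := hzs m
        have := le_max_left (s m + 2) ((m : ℝ) + 1)
        linarith
  refine ⟨{ toFun := fun a => ⟨fun x => Fsum s a (f x), (Fsum_continuous hs a).comp hf⟩
            map_add' := fun a a' => Subtype.ext (funext fun x => Fsum_add s a a' (f x))
            map_smul' := fun c a => Subtype.ext (funext fun x => Fsum_smul s c a (f x)) },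
          { toFun := fun g n => (g : Z → ℝ) (z n)
            map_add' := fun g g' => funext fun n => by simp
            map_smul' := fun c g => funext fun n => by simp },
          ?_, ?_, ?_⟩
  · refine Continuous.subtype_mk (continuous_pi fun x => ?_) _
    unfold Fsum
    exact continuous_finset_sum _ fun n _ => (continuous_apply n).mul continuous_const
  · exact continuous_pi fun n => (continuous_apply (z n)).comp continuous_subtype_val
  · intro a
    funext n
    exact Fsum_eval hs hgap a n

theorem stmt1 (X Y : Type*) [TopologicalSpace X] [TopologicalSpace Y]
    [CompletelyRegularSpace X] [T2Space X] [CompletelyRegularSpace Y] [T2Space Y]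
    [Infinite X] [Infinite Y]
    (hpc : ¬ Pseudocompact (X × Y)) :
    HasComplementedCopy (↥(Cp (X × Y))) (ℕ → ℝ) := by
  unfold Pseudocompact at hpc
  push_neg at hpc
  obtain ⟨f₀, hf₀, hub⟩ := hpc
  exact aux_copy (f := fun p => |f₀ p|) hf₀.abs fun M => hub M
end

section
/- Let X and Y be infinite Tychonoff spaces such that X × Y is pseudocompact. Then X × Y admits a JN-sequence (μ_n); moreover, (μ_n) can be chosen so that there are countable discrete subspaces D ⊆ X and E ⊆ Y with supp(μ_n) ⊆ D × E for every n, the projections of the supports supp(μ_n), n ∈ ℕ, onto X are pairwise disjoint, and the projections of the supports onto Y are pairwise disjoint. -/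
open Filter Topology

/-- A JN-sequence on a topological space `X`: a sequence of finitely supported signed
measures (modelled as finitely supported functions `X →₀ ℝ`) of norm one converging to `0`
on every continuous real-valued function. -/
def IsJNSeq {X : Type*} [TopologicalSpace X] (μ : ℕ → (X →₀ ℝ)) : Prop :=
  (∀ n, ∑ x ∈ (μ n).support, |μ n x| = 1) ∧
  ∀ f : X → ℝ, Continuous f →
    Tendsto (fun n => ∑ x ∈ (μ n).support, μ n x * f x) atTop (nhds 0)

open Function Set

set_option linter.unusedSectionVars false
set_option linter.unusedVariables false

section Tools

variable {Z : Type*} [TopologicalSpace Z]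

lemma lemU (hpc : Pseudocompact Z) (φ : ℕ → Z → ℝ)
    (hc : ∀ n, Continuous (φ n)) (hnn : ∀ n x, 0 ≤ φ n x)
    (hlf : LocallyFinite fun n => support (φ n))
    (hbig : ∀ n, ∃ z, 1 ≤ φ n z) : False := by
  set h : Z → ℝ := fun z => ∑ᶠ (n : ℕ), (n : ℝ) * φ n z with hh
  have hsupp : ∀ n : ℕ, (support fun z => (n : ℝ) * φ n z) ⊆ support (φ n) := by
    intro n z hz
    simp only [mem_support] at hz ⊢
    intro h0; apply hz; rw [h0, mul_zero]
  have hcont : Continuous h := by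
    apply continuous_finsum (fun n => by continuity)
    exact hlf.subset hsupp
  obtain ⟨M, hM⟩ := hpc h hcont
  obtain ⟨n, hn⟩ := exists_nat_gt M
  obtain ⟨z, hz⟩ := hbig n
  have hfin : (support fun m : ℕ => (m : ℝ) * φ m z).Finite := by
    apply Finite.subset (hlf.point_finite z)
    intro m hm
    simp only [mem_setOf_eq, mem_support]
    intro h0
    apply hm
    simp [h0]
  have hle : (n : ℝ) * φ n z ≤ h z :=
    single_le_finsum n hfin (fun m => mul_nonneg (Nat.cast_nonneg m) (hnn m z))
  have h1 : (n : ℝ) ≤ h z := le_trans (by nlinarith [hnn n z]) hle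
  have := hM z
  have : h z ≤ |h z| := le_abs_self _
  linarith

end Tools

section Bump

variable {X : Type*} [TopologicalSpace X] [CompletelyRegularSpace X]

lemma bump {U : Set X} (hU : IsOpen U) {a : X} (ha : a ∈ U) :
    ∃ φ : X → ℝ, Continuous φ ∧ φ a = 1 ∧ (∀ x, 0 ≤ φ x) ∧ (∀ x, φ x ≤ 1) ∧
      ∀ x ∉ U, φ x = 0 := by
  obtain ⟨f, hf, hfa, hfK⟩ := CompletelyRegularSpace.completely_regular a Uᶜ
    hU.isClosed_compl (by simpa using ha)
  refine ⟨fun x => 1 - (f x : ℝ), by continuity, by simp [hfa], ?_, ?_, ?_⟩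
  · intro x; have := (f x).2.2; show (0:ℝ) ≤ 1 - (f x : ℝ); linarith
  · intro x; have := (f x).2.1; show (1:ℝ) - (f x : ℝ) ≤ 1; linarith
  · intro x hx
    have h1 : f x = 1 := hfK hx
    show (1:ℝ) - (f x : ℝ) = 0
    rw [h1]
    norm_num

end Bump

section Feeble

variable {X Y : Type*} [TopologicalSpace X] [TopologicalSpace Y]
  [CompletelyRegularSpace X] [CompletelyRegularSpace Y]

lemma pseudocompact_fst (hpc : Pseudocompact (X × Y)) (y₀ : Y) : Pseudocompact X := by
  intro g hg
  obtain ⟨M, hM⟩ := hpc (fun z => g z.1) (hg.comp continuous_fst)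
  exact ⟨M, fun x => hM (x, y₀)⟩

lemma pseudocompact_snd (hpc : Pseudocompact (X × Y)) (x₀ : X) : Pseudocompact Y := by
  intro g hg
  obtain ⟨M, hM⟩ := hpc (fun z => g z.2) (hg.comp continuous_snd)
  exact ⟨M, fun y => hM (x₀, y)⟩

/-- Feeble compactness: any sequence of nonempty open rectangles in a pseudocompact
product clusters at some point. -/
lemma feeble (hpc : Pseudocompact (X × Y)) (A : ℕ → Set X) (B : ℕ → Set Y)
    (hAo : ∀ n, IsOpen (A n)) (hBo : ∀ n, IsOpen (B n))
    (hAne : ∀ n, (A n).Nonempty) (hBne : ∀ n, (B n).Nonempty) :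
    ∃ p q, ∀ P Q, IsOpen P → IsOpen Q → p ∈ P → q ∈ Q →
      {n | (A n ∩ P).Nonempty ∧ (B n ∩ Q).Nonempty}.Infinite := by
  by_contra hcon
  push_neg at hcon
  -- local finiteness of the rectangles
  have hlf : LocallyFinite fun n => (A n) ×ˢ (B n) := by
    intro z
    obtain ⟨P, Q, hPo, hQo, hzP, hzQ, hfin⟩ := hcon z.1 z.2
    refine ⟨P ×ˢ Q, (hPo.prod hQo).mem_nhds ⟨hzP, hzQ⟩, ?_⟩
    apply hfin.subset
    rintro n ⟨⟨u, v⟩, ⟨⟨hu, hv⟩, hP, hQ⟩⟩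
    exact ⟨⟨u, hu, hP⟩, ⟨v, hv, hQ⟩⟩
  choose a ha using hAne
  choose b hb using hBne
  choose α hαc hα1 hαnn hαle hα0 using fun n => bump (hAo n) (ha n)
  choose β hβc hβ1 hβnn hβle hβ0 using fun n => bump (hBo n) (hb n)
  set φ : ℕ → X × Y → ℝ := fun n z => α n z.1 * β n z.2 with hφ
  apply lemU hpc φ
  · intro n; exact ((hαc n).comp continuous_fst).mul ((hβc n).comp continuous_snd)
  · intro n z; exact mul_nonneg (hαnn n z.1) (hβnn n z.2)
  · apply hlf.subset
    intro n z hz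
    simp only [mem_support, hφ] at hz
    constructor
    · by_contra h; exact hz (by rw [hα0 n z.1 h, zero_mul])
    · by_contra h; exact hz (by rw [hβ0 n z.2 h, mul_zero])
  · intro n
    exact ⟨(a n, b n), by rw [hφ]; simp only; rw [hα1, hβ1]; norm_num⟩

end Feeble

section NormCont

variable {X Y : Type*} [TopologicalSpace X] [TopologicalSpace Y]
  [CompletelyRegularSpace X] [CompletelyRegularSpace Y]

/-- Glicksberg-type lemma: on a pseudocompact product, `x ↦ f (x, ·)` is continuous
for the sup-norm. -/
lemma norm_cont (hpc : Pseudocompact (X × Y)) {f : X × Y → ℝ} (hf : Continuous f)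
    (x₀ : X) {ε : ℝ} (hε : 0 < ε) :
    ∃ N : Set X, IsOpen N ∧ x₀ ∈ N ∧ ∀ x ∈ N, ∀ y, |f (x, y) - f (x₀, y)| ≤ ε := by
  by_contra hcon
  push_neg at hcon
  set g : X × Y → ℝ := fun z => f z - f (x₀, z.2) with hg
  have hgc : Continuous g := hf.sub (hf.comp (by continuity))
  have hgabs : Continuous fun z => |g z| := hgc.abs
  have hbad : ∀ N : Set X, IsOpen N → x₀ ∈ N → ∃ x ∈ N, ∃ y, ε < |g (x, y)| := by
    intro N hNo hNx
    obtain ⟨x, hx, y, hy⟩ := hcon N hNo hNx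
    exact ⟨x, hx, y, hy⟩
  have key : ∀ N : Set X, ∃ (A : Set X) (B : Set Y) (N' : Set X),
      IsOpen N → x₀ ∈ N →
      IsOpen A ∧ IsOpen B ∧ A.Nonempty ∧ B.Nonempty ∧ A ⊆ N ∧
      IsOpen N' ∧ x₀ ∈ N' ∧ N' ⊆ N ∧
      (∀ z ∈ A ×ˢ B, ε / 2 < |g z|) ∧ (∀ x ∈ N', ∀ y ∈ B, |g (x, y)| < ε / 4) := by
    intro N
    by_cases hN : IsOpen N ∧ x₀ ∈ N
    · obtain ⟨x, hxN, y, hxy⟩ := hbad N hN.1 hN.2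
      have hs₁ : IsOpen {z : X × Y | ε / 2 < |g z|} := isOpen_lt continuous_const hgabs
      obtain ⟨u, v, huo, hvo, hxu, hyv, huv⟩ := isOpen_prod_iff.mp hs₁ x y
        (by simp only [mem_setOf_eq]; linarith)
      have hs₂ : IsOpen {z : X × Y | |g z| < ε / 4} := isOpen_lt hgabs continuous_const
      have h0 : g (x₀, y) = 0 := by simp [hg]
      obtain ⟨u₂, v₂, hu₂o, hv₂o, hx₀u₂, hyv₂, hu₂v₂⟩ := isOpen_prod_iff.mp hs₂ x₀ y
        (by simp only [mem_setOf_eq, h0]; rw [abs_zero]; linarith)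
      refine ⟨u ∩ N, v ∩ v₂, N ∩ u₂, fun _ _ => ?_⟩
      refine ⟨(huo.inter hN.1), (hvo.inter hv₂o), ⟨x, hxu, hxN⟩, ⟨y, hyv, hyv₂⟩,
        inter_subset_right, hN.1.inter hu₂o, ⟨hN.2, hx₀u₂⟩, inter_subset_left, ?_, ?_⟩
      · rintro ⟨a, b⟩ ⟨⟨hau, _⟩, ⟨hbv, _⟩⟩
        exact huv ⟨hau, hbv⟩
      · rintro a ⟨_, hau₂⟩ b ⟨_, hbv₂⟩
        exact hu₂v₂ ⟨hau₂, hbv₂⟩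
    · exact ⟨univ, univ, univ, fun h1 h2 => absurd ⟨h1, h2⟩ hN⟩
  choose Af Bf Nf hkey using key
  set NN : ℕ → Set X := fun n => Nat.rec univ (fun _ S => Nf S) n with hNN
  have hNN0 : NN 0 = univ := rfl
  have hNNs : ∀ n, NN (n + 1) = Nf (NN n) := fun n => rfl
  have hinv : ∀ n, IsOpen (NN n) ∧ x₀ ∈ NN n := by
    intro n
    induction n with
    | zero => exact ⟨isOpen_univ, mem_univ _⟩
    | succ n ih =>
      obtain ⟨_, _, _, _, _, h6, h7, _, _, _⟩ := hkey (NN n) ih.1 ih.2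
      exact ⟨h6, h7⟩
  have spec := fun n => hkey (NN n) (hinv n).1 (hinv n).2
  have hmono : ∀ n m, n + 1 ≤ m → NN m ⊆ NN (n + 1) := by
    intro n m hm
    induction m with
    | zero => omega
    | succ m ih =>
      rcases Nat.lt_or_ge (n+1) (m+1) with h | h
      · have h1 : NN (m+1) ⊆ NN m := by
          rw [hNNs m]; exact (spec m).2.2.2.2.2.2.2.1
        exact h1.trans (ih (by omega))
      · have : n + 1 = m + 1 := by omega
        rw [this]
  set A : ℕ → Set X := fun n => Af (NN n) with hA
  set B : ℕ → Set Y := fun n => Bf (NN n) with hB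
  obtain ⟨p, q, hclust⟩ := feeble hpc A B (fun n => (spec n).1) (fun n => (spec n).2.1)
    (fun n => (spec n).2.2.1) (fun n => (spec n).2.2.2.1)
  have hs : IsOpen {z : X × Y | |g z - g (p, q)| < ε / 16} :=
    isOpen_lt (hgc.sub continuous_const).abs continuous_const
  obtain ⟨P, Q, hPo, hQo, hpP, hqQ, hPQ⟩ := isOpen_prod_iff.mp hs p q
    (by simp only [mem_setOf_eq, sub_self, abs_zero]; linarith)
  have hJ := hclust P Q hPo hQo hpP hqQ
  obtain ⟨n, hn⟩ := hJ.nonempty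
  obtain ⟨m, hm, hnm⟩ := hJ.exists_gt n
  obtain ⟨⟨un, hunA, hunP⟩, ⟨vn, hvnB, hvnQ⟩⟩ := hn
  obtain ⟨⟨um, humA, humP⟩, _⟩ := hm
  have h1 : ε / 2 < |g (un, vn)| := (spec n).2.2.2.2.2.2.2.2.1 (un, vn) ⟨hunA, hvnB⟩
  have h2 : |g (um, vn)| < ε / 4 := by
    have hum : um ∈ NN (n + 1) := by
      apply hmono n m hnm
      exact (spec m).2.2.2.2.1 humA
    rw [hNNs n] at hum
    exact (spec n).2.2.2.2.2.2.2.2.2 um hum vn hvnB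
  have h3 : |g (un, vn) - g (p, q)| < ε / 16 := hPQ ⟨hunP, hvnQ⟩
  have h4 : |g (um, vn) - g (p, q)| < ε / 16 := hPQ ⟨humP, hvnQ⟩
  have := abs_sub_abs_le_abs_sub (g (un, vn)) (g (um, vn))
  have := abs_sub (g (un, vn) - g (p, q)) (g (um, vn) - g (p, q))
  -- conclude
  have h5 : |g (un, vn) - g (um, vn)| < ε / 8 := by
    have : g (un, vn) - g (um, vn) =
        (g (un, vn) - g (p, q)) - (g (um, vn) - g (p, q)) := by ring
    rw [this]
    calc |(g (un, vn) - g (p, q)) - (g (um, vn) - g (p, q))|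
        ≤ |g (un, vn) - g (p, q)| + |g (um, vn) - g (p, q)| := abs_sub _ _
      _ < ε / 16 + ε / 16 := by linarith
      _ = ε / 8 := by ring
  have h6 : ε / 4 ≤ |g (un, vn) - g (um, vn)| := by
    have := abs_sub_abs_le_abs_sub (g (un, vn)) (g (um, vn))
    linarith
  linarith

end NormCont

section TB

variable {X Y : Type*} [TopologicalSpace X] [TopologicalSpace Y]
  [CompletelyRegularSpace X] [CompletelyRegularSpace Y]

/-- Total boundedness of the rows of `f` sampled along a sequence of columns. -/
lemma tb [Nonempty X] (hpc : Pseudocompact (X × Y)) {f : X × Y → ℝ} (hf : Continuous f)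
    (yy : ℕ → Y) {ε : ℝ} (hε : 0 < ε) :
    ∃ F : Finset X, ∀ x, ∃ c ∈ F, ∀ j, |f (x, yy j) - f (c, yy j)| ≤ ε := by
  obtain ⟨M, hM⟩ := hpc f hf
  set Φ : X → BoundedContinuousFunction ℕ ℝ := fun x =>
    BoundedContinuousFunction.ofNormedAddCommGroup (fun j => f (x, yy j))
      (continuous_of_discreteTopology) M (fun j => by
        rw [Real.norm_eq_abs]; exact hM (x, yy j)) with hΦ
  have hΦapp : ∀ x j, Φ x j = f (x, yy j) := fun x j => rfl
  have hΦc : Continuous Φ := by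
    rw [continuous_iff_continuousAt]
    intro x₀
    apply Metric.tendsto_nhds.mpr
    intro ε' hε'
    obtain ⟨N, hNo, hNx, hN⟩ := norm_cont hpc hf x₀ (half_pos hε')
    apply eventually_of_mem (hNo.mem_nhds hNx)
    intro x hx
    have : dist (Φ x) (Φ x₀) ≤ ε' / 2 := by
      apply BoundedContinuousFunction.dist_le (le_of_lt (half_pos hε')) |>.mpr
      intro j
      rw [Real.dist_eq]
      exact hN x hx (yy j)
    linarith
  -- suffices: a finite ε-net wrt Φ-distance
  suffices h : ∃ F : Finset X, ∀ x, ∃ c ∈ F, dist (Φ x) (Φ c) ≤ ε by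
    obtain ⟨F, hF⟩ := h
    refine ⟨F, fun x => ?_⟩
    obtain ⟨c, hcF, hc⟩ := hF x
    refine ⟨c, hcF, fun j => ?_⟩
    have := BoundedContinuousFunction.dist_coe_le_dist (f := Φ x) (g := Φ c) j
    rw [Real.dist_eq] at this
    exact le_trans this hc
  by_contra hcon
  push_neg at hcon
  haveI := Classical.decEq X
  choose w hw using hcon
  -- greedy ε-separated sequence
  set aux : ℕ → Finset X := fun n => Nat.rec ∅ (fun _ F => insert (w F) F) n with haux
  have hauxs : ∀ n, aux (n + 1) = insert (w (aux n)) (aux n) := fun n => rfl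
  set e : ℕ → X := fun n => w (aux n) with he
  have hmono : ∀ n m, n ≤ m → aux n ⊆ aux m := by
    intro n m hnm
    induction m with
    | zero => have : n = 0 := by omega
              rw [this]
    | succ m ih =>
      rcases Nat.lt_or_ge n (m+1) with h | h
      · refine (ih (by omega)).trans ?_
        rw [hauxs m]; exact Finset.subset_insert _ _
      · have : n = m + 1 := by omega
        rw [this]
  have hsep : ∀ i j, i < j → ε < dist (Φ (e i)) (Φ (e j)) := by
    intro i j hij
    have hei : e i ∈ aux j := by
      have : e i ∈ aux (i+1) := by rw [hauxs i]; exact Finset.mem_insert_self _ _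
      exact hmono (i+1) j hij this
    have := hw (aux j) (e i) hei
    rwa [dist_comm] at this
  have hsep' : ∀ i j, i ≠ j → ε < dist (Φ (e i)) (Φ (e j)) := by
    intro i j hij
    rcases Nat.lt_or_ge i j with h | h
    · exact hsep i j h
    · have := hsep j i (by omega)
      rwa [dist_comm]
  -- bumps
  set φ : ℕ → X → ℝ := fun k x => max 0 (1 - (4 / ε) * dist (Φ x) (Φ (e k))) with hφ
  have hsupp : ∀ k x, x ∈ support (φ k) → dist (Φ x) (Φ (e k)) < ε / 4 := by
    intro k x hx
    by_contra h
    push_neg at h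
    apply hx
    have : 1 - (4 / ε) * dist (Φ x) (Φ (e k)) ≤ 0 := by
      have h4 : (4 / ε) * (ε / 4) ≤ (4 / ε) * dist (Φ x) (Φ (e k)) := by
        apply mul_le_mul_of_nonneg_left h (by positivity)
      have : (4 / ε) * (ε / 4) = 1 := by field_simp
      linarith
    simp only [hφ, max_eq_left this]
  refine lemU (pseudocompact_fst hpc (yy 0)) φ ?_ ?_ ?_ ?_
  · intro k; exact continuous_const.max
      (continuous_const.sub (continuous_const.mul ((hΦc.dist continuous_const))))
  · intro k x; exact le_max_left _ _
  · intro x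
    refine ⟨Φ ⁻¹' Metric.ball (Φ x) (ε / 4), ?_, ?_⟩
    · exact hΦc.continuousAt.preimage_mem_nhds (Metric.ball_mem_nhds _ (by positivity))
    · apply Set.Subsingleton.finite
      intro k hk l hl
      obtain ⟨xk, hxk1, hxk2⟩ := hk
      obtain ⟨xl, hxl1, hxl2⟩ := hl
      by_contra hkl
      have h1 := hsupp k xk hxk1
      have h2 := hsupp l xl hxl1
      rw [Set.mem_preimage, Metric.mem_ball] at hxk2 hxl2
      have := hsep' k l hkl
      have hd : dist (Φ (e k)) (Φ (e l)) ≤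
          dist (Φ (e k)) (Φ xk) + dist (Φ xk) (Φ x) + dist (Φ x) (Φ xl)
          + dist (Φ xl) (Φ (e l)) := by
        calc dist (Φ (e k)) (Φ (e l)) ≤ dist (Φ (e k)) (Φ xl) + dist (Φ xl) (Φ (e l)) :=
              dist_triangle _ _ _
          _ ≤ (dist (Φ (e k)) (Φ x) + dist (Φ x) (Φ xl)) + dist (Φ xl) (Φ (e l)) := by
              have := dist_triangle (Φ (e k)) (Φ x) (Φ xl); linarith
          _ ≤ (dist (Φ (e k)) (Φ xk) + dist (Φ xk) (Φ x) + dist (Φ x) (Φ xl))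
              + dist (Φ xl) (Φ (e l)) := by
              have := dist_triangle (Φ (e k)) (Φ xk) (Φ x); linarith
      rw [dist_comm (Φ (e k)) (Φ xk), dist_comm (Φ x) (Φ xl)] at hd
      linarith
  · intro k
    refine ⟨e k, ?_⟩
    simp only [hφ, dist_self, mul_zero, sub_zero]
    norm_num

end TB

section Discrete

variable {X : Type*} [TopologicalSpace X] [T2Space X] [Infinite X]

lemma discrete_seq :
    ∃ x : ℕ → X, Function.Injective x ∧ DiscreteTopology ↥(Set.range x) := by
  have step : ∀ S : Set X, ∃ a U, S.Infinite →
      a ∈ S ∧ IsOpen U ∧ a ∈ U ∧ (S \ U).Infinite := by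
    intro S
    by_cases hS : S.Infinite
    · obtain ⟨a, haS⟩ := hS.nonempty
      obtain ⟨b, hbS⟩ := (hS.diff (Set.finite_singleton a)).nonempty
      have hab : a ≠ b := fun h => hbS.2 (by rw [h]; exact rfl)
      obtain ⟨u, v, huo, hvo, hau, hbv, huv⟩ := t2_separation hab
      by_cases hu : (S \ u).Infinite
      · exact ⟨a, u, fun _ => ⟨haS, huo, hau, hu⟩⟩
      · refine ⟨b, v, fun _ => ⟨hbS.1, hvo, hbv, ?_⟩⟩
        rw [Set.not_infinite] at hu
        have : S ⊆ (S \ u) ∪ (S \ v) := by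
          intro x hx
          by_cases hxu : x ∈ u
          · right
            exact ⟨hx, fun hxv => (Set.disjoint_left.mp huv hxu) hxv⟩
          · left; exact ⟨hx, hxu⟩
        by_contra hv
        rw [Set.not_infinite] at hv
        exact hS (Set.Finite.subset (hu.union hv) this)
    · exact ⟨Classical.arbitrary X, ∅, fun h => absurd h hS⟩
  choose af Uf hstep using step
  set SS : ℕ → Set X := fun n => Nat.rec Set.univ (fun _ S => S \ Uf S) n with hSS
  have hSSs : ∀ n, SS (n + 1) = SS n \ Uf (SS n) := fun n => rfl
  have hinf : ∀ n, (SS n).Infinite := by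
    intro n
    induction n with
    | zero => exact Set.infinite_univ
    | succ n ih => rw [hSSs n]; exact (hstep (SS n) ih).2.2.2
  set a : ℕ → X := fun n => af (SS n) with ha
  set U : ℕ → Set X := fun n => Uf (SS n) with hU
  have spec := fun n => hstep (SS n) (hinf n)
  have hdec : ∀ n m, n + 1 ≤ m → SS m ⊆ SS (n + 1) := by
    intro n m hm
    induction m with
    | zero => omega
    | succ m ih =>
      rcases Nat.lt_or_ge (n+1) (m+1) with h | h
      · have h1 : SS (m+1) ⊆ SS m := by rw [hSSs m]; exact Set.diff_subset
        exact h1.trans (ih (by omega))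
      · have : n + 1 = m + 1 := by omega
        rw [this]
  have hnotin : ∀ n m, n < m → a m ∉ U n := by
    intro n m hnm
    have : a m ∈ SS m := (spec m).1
    have h2 : a m ∈ SS (n+1) := hdec n m hnm this
    rw [hSSs n] at h2
    exact h2.2
  have hinj : Function.Injective a := by
    intro n m hnm
    by_contra h
    rcases Nat.lt_or_ge n m with hlt | hge
    · exact (hnotin n m hlt) (hnm ▸ (spec n).2.2.1)
    · have hlt : m < n := by omega
      exact (hnotin m n hlt) (hnm ▸ (spec m).2.2.1)
  refine ⟨a, hinj, ?_⟩
  rw [discreteTopology_iff_isOpen_singleton]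
  rintro ⟨x, hx⟩
  obtain ⟨n, rfl⟩ := hx
  set W : Set X := U n \ (a '' {k | k < n}) with hW
  have hWo : IsOpen W := (spec n).2.1.sdiff ((Set.Finite.image a (Set.finite_lt_nat n)).isClosed)
  have hmem : ∀ m, a m ∈ W → m = n := by
    intro m hm
    by_contra hmn
    rcases Nat.lt_or_ge m n with h | h
    · exact hm.2 ⟨m, h, rfl⟩
    · have : n < m := by omega
      exact (hnotin n m this) hm.1
  convert isOpen_induced (f := Subtype.val) (s := W) hWo using 1
  · rfl
  ext ⟨z, hz⟩
  simp only [Set.mem_singleton_iff, Set.mem_preimage, Subtype.mk.injEq, Subtype.ext_iff]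
  constructor
  · rintro rfl
    refine ⟨(spec n).2.2.1, ?_⟩
    rintro ⟨k, hk, hak⟩
    exact absurd (hinj hak) (Nat.ne_of_lt hk)
  · intro hzW
    obtain ⟨m, rfl⟩ := hz
    exact congrArg a (hmem m hzW)

end Discrete

noncomputable def rad (b : Bool) : ℝ := if b then 1 else -1

lemma abs_rad (b : Bool) : |rad b| = 1 := by
  cases b <;> simp [rad]

lemma rad_not (b : Bool) : rad (!b) = - rad b := by
  cases b <;> simp [rad]

lemma card_bool_fun (N : ℕ) : Fintype.card (Fin N → Bool) = 2 ^ N := by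
  simp [Fintype.card_fun]

lemma orth {N : ℕ} {i i' : Fin N} (h : i ≠ i') :
    ∑ s : Fin N → Bool, rad (s i) * rad (s i') = 0 := by
  refine Finset.sum_involution (fun s _ => Function.update s i (!(s i))) ?_ ?_ ?_ ?_
  · intro s _
    rw [Function.update_self, Function.update_of_ne h.symm, rad_not]
    ring
  · intro s _ hs hupdate
    have h1 := congrFun hupdate i
    rw [Function.update_self] at h1
    exact Bool.not_ne_self (s i) h1
  · intro s _; exact Finset.mem_univ _
  · intro s _
    funext a
    by_cases ha : a = i
    · subst ha
      simp [Function.update_self]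
    · simp [Function.update_of_ne ha]

lemma k1 {N : ℕ} (S : Finset (Fin N)) :
    ∑ s : Fin N → Bool, (∑ i ∈ S, rad (s i)) ^ 2 = (S.card : ℝ) * 2 ^ N := by
  have expand : ∀ s : Fin N → Bool, (∑ i ∈ S, rad (s i)) ^ 2
      = ∑ i ∈ S, ∑ i' ∈ S, rad (s i) * rad (s i') := by
    intro s; rw [sq, Finset.sum_mul_sum]
  rw [Finset.sum_congr rfl (fun s _ => expand s)]
  rw [Finset.sum_comm]
  have swap2 : ∀ i ∈ S, ∑ s : Fin N → Bool, ∑ i' ∈ S, rad (s i) * rad (s i')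
      = ∑ i' ∈ S, ∑ s : Fin N → Bool, rad (s i) * rad (s i') := fun i _ => Finset.sum_comm
  rw [Finset.sum_congr rfl swap2]
  have inner : ∀ i i' : Fin N, ∑ s : Fin N → Bool, rad (s i) * rad (s i')
      = if i = i' then (2:ℝ) ^ N else 0 := by
    intro i i'
    by_cases h : i = i'
    · subst h
      simp only [if_pos rfl]
      have : ∀ s : Fin N → Bool, rad (s i) * rad (s i) = 1 := by
        intro s; cases (s i) <;> simp [rad]
      rw [Finset.sum_congr rfl (fun s _ => this s), Finset.sum_const, Finset.card_univ,
        card_bool_fun]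
      simp
    · rw [if_neg h]
      exact orth h
  calc ∑ i ∈ S, ∑ i' ∈ S, ∑ s : Fin N → Bool, rad (s i) * rad (s i')
      = ∑ i ∈ S, ∑ i' ∈ S, if i = i' then (2:ℝ) ^ N else 0 := by
        exact Finset.sum_congr rfl fun i _ => Finset.sum_congr rfl fun i' _ => inner i i'
    _ = ∑ _i ∈ S, (2:ℝ) ^ N := by
        refine Finset.sum_congr rfl fun i hi => ?_
        rw [Finset.sum_ite_eq S i (fun _ => (2:ℝ)^N), if_pos hi]
    _ = (S.card : ℝ) * 2 ^ N := by rw [Finset.sum_const, nsmul_eq_mul]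

lemma k2 {N : ℕ} (W : (Fin N → Bool) → ℝ) :
    ∑ s : Fin N → Bool, |W s| ≤ Real.sqrt ((2:ℝ) ^ N * ∑ s : Fin N → Bool, (W s) ^ 2) := by
  have hnn : (0:ℝ) ≤ ∑ s : Fin N → Bool, |W s| := Finset.sum_nonneg fun s _ => abs_nonneg _
  have hy : (0:ℝ) ≤ (2:ℝ) ^ N * ∑ s : Fin N → Bool, (W s) ^ 2 := by positivity
  rw [Real.le_sqrt hnn hy]
  have step1 : (∑ s : Fin N → Bool, |W s|) = ∑ s : Fin N → Bool, 1 * |W s| := by simp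
  rw [step1]
  calc (∑ s : Fin N → Bool, 1 * |W s|) ^ 2
      ≤ (∑ s : Fin N → Bool, (1:ℝ) ^ 2) * ∑ s : Fin N → Bool, |W s| ^ 2 :=
        Finset.sum_mul_sq_le_sq_mul_sq _ _ _
    _ = (2:ℝ) ^ N * ∑ s : Fin N → Bool, (W s) ^ 2 := by
        rw [Finset.sum_congr rfl (fun s _ => sq_abs (W s))]
        congr 1
        rw [Finset.sum_const, Finset.card_univ, card_bool_fun]
        simp

/-- The master estimate for the Rademacher grid measure against a function `F`
that is `ε`-approximated by `K` center rows `C`. -/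
lemma est (N K : ℕ) (F : Fin N × (Fin N → Bool) → ℝ) (k : Fin N → Fin K)
    (C : Fin K → (Fin N → Bool) → ℝ) (M ε : ℝ) (hM : 0 ≤ M) (hε : 0 ≤ ε)
    (hFC : ∀ i s, |F (i, s) - C (k i) s| ≤ ε) (hC : ∀ j s, |C j s| ≤ M) :
    |∑ s : Fin N → Bool, ∑ i : Fin N, rad (s i) * F (i, s)| ≤
      2 ^ N * N * ε + K * (M * (2 ^ N * Real.sqrt N)) := by
  have split : ∀ (s : Fin N → Bool) (i : Fin N), rad (s i) * F (i, s)
      = rad (s i) * (F (i, s) - C (k i) s) + rad (s i) * C (k i) s := by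
    intros; ring
  have hsum : (∑ s : Fin N → Bool, ∑ i : Fin N, rad (s i) * F (i, s))
      = (∑ s : Fin N → Bool, ∑ i : Fin N, rad (s i) * (F (i, s) - C (k i) s))
      + (∑ s : Fin N → Bool, ∑ i : Fin N, rad (s i) * C (k i) s) := by
    rw [← Finset.sum_add_distrib]
    refine Finset.sum_congr rfl fun s _ => ?_
    rw [← Finset.sum_add_distrib]
    exact Finset.sum_congr rfl fun i _ => split s i
  rw [hsum]
  have habs1 : |∑ s : Fin N → Bool, ∑ i : Fin N, rad (s i) * (F (i, s) - C (k i) s)|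
      ≤ 2 ^ N * N * ε := by
    calc |∑ s : Fin N → Bool, ∑ i : Fin N, rad (s i) * (F (i, s) - C (k i) s)|
        ≤ ∑ s : Fin N → Bool, |∑ i : Fin N, rad (s i) * (F (i, s) - C (k i) s)| :=
          Finset.abs_sum_le_sum_abs _ _
      _ ≤ ∑ s : Fin N → Bool, ∑ i : Fin N, |rad (s i) * (F (i, s) - C (k i) s)| :=
          Finset.sum_le_sum fun s _ => Finset.abs_sum_le_sum_abs _ _
      _ ≤ ∑ s : Fin N → Bool, ∑ i : Fin N, ε := by
          refine Finset.sum_le_sum fun s _ => Finset.sum_le_sum fun i _ => ?_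
          rw [abs_mul, abs_rad, one_mul]
          exact hFC i s
      _ = 2 ^ N * N * ε := by
          simp only [Finset.sum_const, Finset.card_univ, card_bool_fun, Fintype.card_fin,
            nsmul_eq_mul]
          push_cast
          ring
  have habs2 : |∑ s : Fin N → Bool, ∑ i : Fin N, rad (s i) * C (k i) s|
      ≤ K * (M * (2 ^ N * Real.sqrt N)) := by
    classical
    have fiber : ∀ s : Fin N → Bool, (∑ i : Fin N, rad (s i) * C (k i) s)
        = ∑ j : Fin K, (∑ i ∈ Finset.univ.filter (fun i => k i = j), rad (s i)) * C j s := by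
      intro s
      rw [← Finset.sum_fiberwise Finset.univ k (fun i => rad (s i) * C (k i) s)]
      refine Finset.sum_congr rfl fun j _ => ?_
      rw [Finset.sum_mul]
      refine Finset.sum_congr rfl fun i hi => ?_
      rw [Finset.mem_filter] at hi
      rw [hi.2]
    rw [Finset.sum_congr rfl fun s _ => fiber s, Finset.sum_comm]
    calc |∑ j : Fin K, ∑ s : Fin N → Bool,
            (∑ i ∈ Finset.univ.filter (fun i => k i = j), rad (s i)) * C j s|
        ≤ ∑ j : Fin K, |∑ s : Fin N → Bool,
            (∑ i ∈ Finset.univ.filter (fun i => k i = j), rad (s i)) * C j s| :=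
          Finset.abs_sum_le_sum_abs _ _
      _ ≤ ∑ _j : Fin K, M * (2 ^ N * Real.sqrt N) := by
          refine Finset.sum_le_sum fun j _ => ?_
          set W : (Fin N → Bool) → ℝ :=
            fun s => ∑ i ∈ Finset.univ.filter (fun i => k i = j), rad (s i) with hW
          calc |∑ s : Fin N → Bool, W s * C j s|
              ≤ ∑ s : Fin N → Bool, |W s * C j s| := Finset.abs_sum_le_sum_abs _ _
            _ ≤ ∑ s : Fin N → Bool, |W s| * M := by
                refine Finset.sum_le_sum fun s _ => ?_
                rw [abs_mul]
                exact mul_le_mul_of_nonneg_left (hC j s) (abs_nonneg _)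
            _ = (∑ s : Fin N → Bool, |W s|) * M := by rw [Finset.sum_mul]
            _ ≤ Real.sqrt ((2:ℝ) ^ N * ∑ s : Fin N → Bool, (W s) ^ 2) * M := by
                exact mul_le_mul_of_nonneg_right (k2 W) hM
            _ ≤ (2 ^ N * Real.sqrt N) * M := by
                refine mul_le_mul_of_nonneg_right ?_ hM
                rw [hW]
                rw [k1]
                have hcard : ((Finset.univ.filter (fun i => k i = j)).card : ℝ) ≤ N := by
                  have := Finset.card_filter_le Finset.univ (fun i => k i = j)
                  rw [Finset.card_univ, Fintype.card_fin] at this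
                  exact_mod_cast this
                calc Real.sqrt ((2:ℝ) ^ N * (((Finset.univ.filter (fun i => k i = j)).card : ℝ) * 2 ^ N))
                    ≤ Real.sqrt ((2:ℝ) ^ N * ((N:ℝ) * 2 ^ N)) := by
                      apply Real.sqrt_le_sqrt
                      have h2 : (0:ℝ) ≤ 2 ^ N := by positivity
                      have h3 : ((Finset.univ.filter (fun i => k i = j)).card : ℝ) * 2 ^ N
                          ≤ (N:ℝ) * 2 ^ N := mul_le_mul_of_nonneg_right hcard h2
                      exact mul_le_mul_of_nonneg_left h3 h2
                  _ = 2 ^ N * Real.sqrt N := by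
                      rw [show (2:ℝ) ^ N * ((N:ℝ) * 2 ^ N) = ((2:ℝ)^N)^2 * N by ring,
                        Real.sqrt_mul (by positivity), Real.sqrt_sq (by positivity)]
            _ = M * (2 ^ N * Real.sqrt N) := by ring
      _ = K * (M * (2 ^ N * Real.sqrt N)) := by
          rw [Finset.sum_const, Finset.card_univ, Fintype.card_fin, nsmul_eq_mul]
  calc |_ + _| ≤ _ + _ := abs_add_le _ _
    _ ≤ 2 ^ N * N * ε + K * (M * (2 ^ N * Real.sqrt N)) := add_le_add habs1 habs2

theorem stmt2 (X Y : Type*) [TopologicalSpace X] [TopologicalSpace Y]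
    [CompletelyRegularSpace X] [T2Space X] [CompletelyRegularSpace Y] [T2Space Y]
    [Infinite X] [Infinite Y]
    (hpc : Pseudocompact (X × Y)) :
    ∃ μ : ℕ → ((X × Y) →₀ ℝ), IsJNSeq μ ∧
      ∃ (D : Set X) (E : Set Y), D.Countable ∧ E.Countable ∧
        DiscreteTopology ↥D ∧ DiscreteTopology ↥E ∧
        (∀ n, (↑(μ n).support : Set (X × Y)) ⊆ D ×ˢ E) ∧
        (∀ m n, m ≠ n →
          Disjoint (Prod.fst '' (↑(μ m).support : Set (X × Y)))
            (Prod.fst '' (↑(μ n).support : Set (X × Y)))) ∧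
        (∀ m n, m ≠ n →
          Disjoint (Prod.snd '' (↑(μ m).support : Set (X × Y)))
            (Prod.snd '' (↑(μ n).support : Set (X × Y)))) := by
  obtain ⟨xx, hxxi, hxxd⟩ := discrete_seq (X := X)
  obtain ⟨yy, hyyi, hyyd⟩ := discrete_seq (X := Y)
  obtain ⟨cd, hcd⟩ := exists_injective_nat ((n : ℕ) × (Fin (n+1) → Bool))
  have einj : ∀ n : ℕ, Function.Injective
      (fun p : Fin (n+1) × (Fin (n+1) → Bool) =>
        ((xx (Nat.pair n p.1), yy (cd ⟨n, p.2⟩)) : X × Y)) := by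
    intro n p q h
    simp only [Prod.mk.injEq] at h
    obtain ⟨h1, h2⟩ := h
    have h1' : (p.1 : ℕ) = (q.1 : ℕ) := (Nat.pair_eq_pair.mp (hxxi h1)).2
    have h2' : p.2 = q.2 := sigma_mk_injective (hcd (hyyi h2))
    exact Prod.ext (Fin.ext h1') h2'
  set emb : (n : ℕ) → (Fin (n+1) × (Fin (n+1) → Bool)) ↪ X × Y :=
    fun n => ⟨_, einj n⟩ with hemb
  set cN : ℕ → ℝ := fun n => ((n:ℝ)+1) * 2^(n+1) with hcNdef
  have hcN : ∀ n, 0 < cN n := fun n => by positivity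
  set w : (n : ℕ) → ((Fin (n+1) × (Fin (n+1) → Bool)) →₀ ℝ) := fun n =>
    Finsupp.equivFunOnFinite.symm (fun p => rad (p.2 p.1) / cN n) with hwdef
  have hw : ∀ n p, w n p = rad (p.2 p.1) / cN n := by
    intro n p; simp [hwdef, Finsupp.equivFunOnFinite]
  have hradne : ∀ b, rad b ≠ 0 := by
    intro b
    have := abs_rad b
    intro h; rw [h, abs_zero] at this; norm_num at this
  have hws : ∀ n, (w n).support = Finset.univ := by
    intro n
    ext p
    simp only [Finsupp.mem_support_iff, Finset.mem_univ, iff_true]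
    rw [hw]
    exact div_ne_zero (hradne _) (ne_of_gt (hcN n))
  set μ : ℕ → ((X × Y) →₀ ℝ) := fun n => Finsupp.embDomain (emb n) (w n) with hμdef
  have hsupp : ∀ n, (μ n).support = Finset.univ.map (emb n) := by
    intro n; rw [hμdef]; simp only [Finsupp.support_embDomain, hws]
  have happ : ∀ n p, μ n (emb n p) = w n p := by
    intro n p; rw [hμdef]; exact Finsupp.embDomain_apply_self _ _ _
  have hcard : ∀ n, (Fintype.card (Fin (n+1) × (Fin (n+1) → Bool)) : ℝ) = cN n := by
    intro n
    rw [Fintype.card_prod, Fintype.card_fin, Fintype.card_fun, Fintype.card_bool,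
      Fintype.card_fin]
    push_cast
    ring
  -- the sum against any function
  have hSf : ∀ (g : X × Y → ℝ) (n : ℕ), (∑ x ∈ (μ n).support, μ n x * g x)
      = (∑ s : Fin (n+1) → Bool, ∑ i : Fin (n+1),
          rad (s i) * g (xx (Nat.pair n i), yy (cd ⟨n, s⟩))) / cN n := by
    intro g n
    rw [hsupp n, Finset.sum_map]
    have : ∀ p : Fin (n+1) × (Fin (n+1) → Bool),
        μ n (emb n p) * g (emb n p)
        = (rad (p.2 p.1) * g (xx (Nat.pair n p.1), yy (cd ⟨n, p.2⟩))) / cN n := by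
      intro p
      rw [happ, hw]
      rw [div_mul_eq_mul_div]
      rfl
    rw [Finset.sum_congr rfl fun p _ => this p, ← Finset.sum_div]
    congr 1
    rw [← Finset.sum_comm]
    rw [Fintype.sum_prod_type]
  refine ⟨μ, ⟨?_, ?_⟩, Set.range xx, Set.range yy, Set.countable_range xx,
    Set.countable_range yy, hxxd, hyyd, ?_, ?_, ?_⟩
  · -- norm one
    intro n
    rw [hsupp n, Finset.sum_map]
    have : ∀ p : Fin (n+1) × (Fin (n+1) → Bool), |μ n (emb n p)| = 1 / cN n := by
      intro p
      rw [happ, hw, abs_div, abs_rad, abs_of_pos (hcN n)]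
    rw [Finset.sum_congr rfl fun p _ => this p, Finset.sum_const, Finset.card_univ,
      nsmul_eq_mul, hcard n]
    field_simp [(hcN n).ne']
  · -- tendsto
    intro f hf
    obtain ⟨M, hM⟩ := hpc f hf
    have hM0 : 0 ≤ M := le_trans (abs_nonneg _) (hM (xx 0, yy 0))
    rw [Metric.tendsto_atTop]
    intro ε hε
    obtain ⟨F, hF⟩ := tb hpc hf yy (show (0:ℝ) < ε/4 by linarith)
    choose cF hcF hcval using hF
    set K := F.card with hK
    set m := ⌈((K:ℝ) * M) / (ε/2)⌉₊ with hm
    refine ⟨m^2, fun n hn => ?_⟩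
    have hKM : (K:ℝ) * M ≤ (ε/2) * Real.sqrt ((n:ℝ)+1) := by
      have h1 : ((K:ℝ) * M) / (ε/2) ≤ m := Nat.le_ceil _
      have h2 : (m:ℝ) ≤ Real.sqrt ((n:ℝ)+1) := by
        have hmn : ((m:ℝ))^2 ≤ (n:ℝ)+1 := by
          have h' : (m^2 : ℕ) ≤ n := hn
          have h'' : ((m^2 : ℕ) : ℝ) ≤ (n : ℝ) := Nat.cast_le.mpr h'
          push_cast at h''
          linarith
        calc (m:ℝ) = Real.sqrt ((m:ℝ)^2) := (Real.sqrt_sq (Nat.cast_nonneg m)).symm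
          _ ≤ Real.sqrt ((n:ℝ)+1) := Real.sqrt_le_sqrt hmn
      have h3 : ((K:ℝ) * M) ≤ (ε/2) * m := by
        rw [div_le_iff₀ (by linarith : (0:ℝ) < ε/2)] at h1
        linarith
      have h4 : (ε/2) * (m:ℝ) ≤ (ε/2) * Real.sqrt ((n:ℝ)+1) :=
        mul_le_mul_of_nonneg_left h2 (by linarith)
      linarith
    -- apply the master estimate
    set N' := n + 1 with hN'
    set FF : Fin N' × (Fin N' → Bool) → ℝ :=
      fun p => f (xx (Nat.pair n p.1), yy (cd ⟨n, p.2⟩)) with hFF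
    have hFne : F.Nonempty := ⟨cF (xx 0), hcF _⟩
    set k : Fin N' → Fin K := fun i => F.equivFin ⟨cF (xx (Nat.pair n i)), hcF _⟩ with hk
    set C : Fin K → (Fin N' → Bool) → ℝ :=
      fun j s => f (((F.equivFin.symm j : F) : X), yy (cd ⟨n, s⟩)) with hC
    have hFC : ∀ i s, |FF (i, s) - C (k i) s| ≤ ε/4 := by
      intro i s
      have : C (k i) s = f (cF (xx (Nat.pair n i)), yy (cd ⟨n, s⟩)) := by
        simp only [hC, hk, Equiv.symm_apply_apply]
      rw [this, hFF]
      exact hcval (xx (Nat.pair n i)) (cd ⟨n, s⟩)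
    have hCM : ∀ j s, |C j s| ≤ M := fun j s => hM _
    have hest := est N' K FF k C M (ε/4) hM0 (by linarith) hFC hCM
    -- convert to the measure sum
    rw [Real.dist_eq, sub_zero, hSf f n]
    have heq : (∑ s : Fin N' → Bool, ∑ i : Fin N',
        rad (s i) * f (xx (Nat.pair n i), yy (cd ⟨n, s⟩)))
        = ∑ s : Fin N' → Bool, ∑ i : Fin N', rad (s i) * FF (i, s) := rfl
    rw [abs_div, abs_of_pos (hcN n), heq]
    have hdiv : (2 ^ N' * N' * (ε/4) + K * (M * (2 ^ N' * Real.sqrt N'))) / cN n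
        = ε/4 + (K * M * Real.sqrt ((n:ℝ)+1)) / ((n:ℝ)+1) := by
      have ha : ((2:ℝ))^N' ≠ 0 := by positivity
      have hb : ((n:ℝ)+1) ≠ 0 := by positivity
      rw [hcNdef]
      have : ((N' : ℝ)) = (n:ℝ)+1 := by rw [hN']; push_cast; ring
      field_simp [this]
      rw [this, hN']
      ring
    have hfinal : (K * M * Real.sqrt ((n:ℝ)+1)) / ((n:ℝ)+1) ≤ ε/2 := by
      rw [div_le_iff₀ (by positivity : (0:ℝ) < (n:ℝ)+1)]
      have hs : Real.sqrt ((n:ℝ)+1) * Real.sqrt ((n:ℝ)+1) = (n:ℝ)+1 :=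
        Real.mul_self_sqrt (by positivity)
      calc (K:ℝ) * M * Real.sqrt ((n:ℝ)+1)
          ≤ ((ε/2) * Real.sqrt ((n:ℝ)+1)) * Real.sqrt ((n:ℝ)+1) :=
            mul_le_mul_of_nonneg_right hKM (Real.sqrt_nonneg _)
        _ = (ε/2) * ((n:ℝ)+1) := by rw [mul_assoc, hs]
    calc |∑ s : Fin N' → Bool, ∑ i : Fin N', rad (s i) * FF (i, s)| / cN n
        ≤ (2 ^ N' * N' * (ε/4) + K * (M * (2 ^ N' * Real.sqrt N'))) / cN n := by
          apply div_le_div_of_nonneg_right hest (hcN n).le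
      _ = ε/4 + (K * M * Real.sqrt ((n:ℝ)+1)) / ((n:ℝ)+1) := hdiv
      _ ≤ ε/4 + ε/2 := by linarith
      _ < ε := by linarith
  · -- support in D ×ˢ E
    intro n z hz
    rw [hsupp n, Finset.coe_map] at hz
    obtain ⟨p, _, rfl⟩ := hz
    exact ⟨⟨Nat.pair n p.1, rfl⟩, ⟨cd ⟨n, p.2⟩, rfl⟩⟩
  · -- fst projections disjoint
    intro a b hab
    rw [Set.disjoint_left]
    rintro u ⟨z, hz, rfl⟩ ⟨z', hz', hz'eq⟩
    rw [hsupp a, Finset.coe_map] at hz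
    rw [hsupp b, Finset.coe_map] at hz'
    obtain ⟨p, _, rfl⟩ := hz
    obtain ⟨q, _, rfl⟩ := hz'
    have : xx (Nat.pair b q.1) = xx (Nat.pair a p.1) := hz'eq
    exact hab ((Nat.pair_eq_pair.mp (hxxi this)).1).symm
  · -- snd projections disjoint
    intro a b hab
    rw [Set.disjoint_left]
    rintro u ⟨z, hz, rfl⟩ ⟨z', hz', hz'eq⟩
    rw [hsupp a, Finset.coe_map] at hz
    rw [hsupp b, Finset.coe_map] at hz'
    obtain ⟨p, _, rfl⟩ := hz
    obtain ⟨q, _, rfl⟩ := hz'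
    have : yy (cd ⟨b, q.2⟩) = yy (cd ⟨a, p.2⟩) := hz'eq
    have h2 := hcd (hyyi this)
    have h3 : b = a := congrArg Sigma.fst h2
    exact hab h3.symm
end

section
/- The product βℕ × βℕ admits a JN-sequence (μ_n) such that supp(μ_n) ⊆ ℕ × ℕ for every n, the projections of the supports supp(μ_n), n ∈ ℕ, onto the first factor are pairwise disjoint, and the projections of the supports onto the second factor are pairwise disjoint. -/
open Filter Topology

namespace JN3
noncomputable section

set_option linter.unnecessarySeqFocus false

/-! ### The Walsh sign matrix -/

def χ (b c : Bool) : ℝ := if b && c then -1 else 1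

def w (n : ℕ) (u v : Fin n → Bool) : ℝ := ∏ k, χ (u k) (v k)

lemma abs_χ (b c : Bool) : |χ b c| = 1 := by
  unfold χ; split_ifs <;> norm_num

lemma abs_w (n : ℕ) (u v : Fin n → Bool) : |w n u v| = 1 := by
  rw [w, Finset.abs_prod]
  simp [abs_χ]

lemma orth (n : ℕ) (v v' : Fin n → Bool) :
    ∑ u : Fin n → Bool, w n u v * w n u v' = if v = v' then (2:ℝ)^n else 0 := by
  have h1 : ∀ u : Fin n → Bool, w n u v * w n u v'
      = ∏ k, (χ (u k) (v k) * χ (u k) (v' k)) := by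
    intro u; rw [w, w, Finset.prod_mul_distrib]
  simp_rw [h1]
  have h2 : ∑ u : Fin n → Bool, ∏ k, (χ (u k) (v k) * χ (u k) (v' k))
      = ∏ k, ∑ b : Bool, (χ b (v k) * χ b (v' k)) := by
    rw [Finset.prod_univ_sum (fun _ => (Finset.univ : Finset Bool))]
    rw [Fintype.piFinset_univ]
  rw [h2]
  have h3 : ∀ k, (∑ b : Bool, (χ b (v k) * χ b (v' k)))
      = if v k = v' k then 2 else 0 := by
    intro k
    cases hv : v k <;> cases hv' : v' k <;> simp [χ] <;> norm_num
  simp_rw [h3]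
  by_cases hvv : v = v'
  · subst hvv
    simp [Finset.prod_const]
  · obtain ⟨k0, hk0⟩ := Function.ne_iff.mp hvv
    rw [Finset.prod_eq_zero (Finset.mem_univ k0) (by simp [hk0]), if_neg hvv]

lemma key (n : ℕ) (G H : (Fin n → Bool) → ℝ) (Cg Ch : ℝ)
    (hG : ∀ u, |G u| ≤ Cg) (hH : ∀ v, |H v| ≤ Ch) :
    |∑ u : Fin n → Bool, ∑ v : Fin n → Bool, w n u v * (G u * H v)|
      ≤ (Cg * Ch) * Real.sqrt 8 ^ n := by
  have hCg : 0 ≤ Cg := le_trans (abs_nonneg _) (hG default)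
  have hCh : 0 ≤ Ch := le_trans (abs_nonneg _) (hH default)
  set T : (Fin n → Bool) → ℝ := fun u => ∑ v, w n u v * H v with hT
  have hS : ∀ u, ∑ v : Fin n → Bool, w n u v * (G u * H v) = G u * T u := by
    intro u; rw [hT, Finset.mul_sum]
    exact Finset.sum_congr rfl fun v _ => by ring
  simp_rw [hS]
  have hA : ∑ u, T u ^ 2 = 2 ^ n * ∑ v, H v ^ 2 := by
    have e1 : ∀ u, T u ^ 2 = ∑ v, ∑ v', (w n u v * H v) * (w n u v' * H v') := by
      intro u; rw [sq, hT, Finset.sum_mul_sum]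
    simp_rw [e1]
    rw [Finset.sum_comm]
    have e2 : ∀ v, ∑ u, ∑ v', (w n u v * H v) * (w n u v' * H v')
        = ∑ v', ∑ u, (w n u v * H v) * (w n u v' * H v') := fun v => Finset.sum_comm
    simp_rw [e2]
    have e3 : ∀ v v', ∑ u, (w n u v * H v) * (w n u v' * H v')
        = (∑ u, w n u v * w n u v') * (H v * H v') := by
      intro v v'; rw [Finset.sum_mul]
      exact Finset.sum_congr rfl fun u _ => by ring
    simp_rw [e3, orth, ite_mul, zero_mul]
    rw [Finset.mul_sum]
    apply Finset.sum_congr rfl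
    intro v _
    rw [Finset.sum_ite_eq _ v (fun v' => (2:ℝ)^n * (H v * H v'))]
    simp [sq]
  have hB : ∑ v, H v ^ 2 ≤ 2 ^ n * Ch ^ 2 := by
    calc ∑ v, H v ^ 2 ≤ ∑ _v : Fin n → Bool, Ch ^ 2 := by
          apply Finset.sum_le_sum
          intro v _
          rw [← sq_abs]
          exact pow_le_pow_left₀ (abs_nonneg _) (hH v) 2
      _ = 2 ^ n * Ch ^ 2 := by
          rw [Finset.sum_const, Finset.card_univ, Fintype.card_fun]
          simp [nsmul_eq_mul]
  have hC : (∑ u, |T u|) ^ 2 ≤ 2 ^ n * ∑ u, T u ^ 2 := by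
    have := Finset.sum_mul_sq_le_sq_mul_sq Finset.univ (fun _ : Fin n → Bool => (1:ℝ))
      (fun u => |T u|)
    simp only [one_mul, one_pow, sq_abs] at this
    calc (∑ u, |T u|) ^ 2 ≤ (∑ _u : Fin n → Bool, (1:ℝ)) * ∑ u, T u ^ 2 := this
      _ = 2 ^ n * ∑ u, T u ^ 2 := by
          rw [Finset.sum_const, Finset.card_univ, Fintype.card_fun]
          simp [nsmul_eq_mul]
  have hD : (∑ u, |T u|) ^ 2 ≤ 8 ^ n * Ch ^ 2 := by
    calc (∑ u, |T u|) ^ 2 ≤ 2 ^ n * ∑ u, T u ^ 2 := hC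
      _ = 2 ^ n * (2 ^ n * ∑ v, H v ^ 2) := by rw [hA]
      _ ≤ 2 ^ n * (2 ^ n * (2 ^ n * Ch ^ 2)) := by gcongr
      _ = 8 ^ n * Ch ^ 2 := by
          ring_nf
          rw [show (8:ℝ) = 2*2*2 by norm_num, mul_pow, mul_pow]; ring
  have hE : ∑ u, |T u| ≤ Real.sqrt 8 ^ n * Ch := by
    have hsq : (Real.sqrt 8 ^ n * Ch) ^ 2 = 8 ^ n * Ch ^ 2 := by
      rw [mul_pow, ← pow_mul, mul_comm n 2, pow_mul, Real.sq_sqrt (by norm_num)]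
    have h0 : (0:ℝ) ≤ ∑ u, |T u| := Finset.sum_nonneg fun u _ => abs_nonneg _
    have h1 : (0:ℝ) ≤ Real.sqrt 8 ^ n * Ch := by positivity
    nlinarith [hD, hsq]
  calc |∑ u, G u * T u| ≤ ∑ u, |G u * T u| := Finset.abs_sum_le_sum_abs _ _
    _ ≤ ∑ u, Cg * |T u| := by
        apply Finset.sum_le_sum
        intro u _
        rw [abs_mul]
        exact mul_le_mul_of_nonneg_right (hG u) (abs_nonneg _)
    _ = Cg * ∑ u, |T u| := by rw [Finset.mul_sum]
    _ ≤ Cg * (Real.sqrt 8 ^ n * Ch) := mul_le_mul_of_nonneg_left hE hCg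
    _ = (Cg * Ch) * Real.sqrt 8 ^ n := by ring

/-! ### The measures -/

abbrev X := Ultrafilter ℕ

def enc (n : ℕ) (u : Fin n → Bool) : ℕ := Nat.pair n (Encodable.encode u)

lemma enc_inj (n : ℕ) : Function.Injective (enc n) := by
  intro u u' h
  exact Encodable.encode_injective (Nat.pair_eq_pair.mp h).2

lemma enc_ne (m n : ℕ) (hmn : m ≠ n) (u : Fin m → Bool) (v : Fin n → Bool) :
    enc m u ≠ enc n v := by
  intro h
  exact hmn (Nat.pair_eq_pair.mp h).1

def φ (n : ℕ) : ((Fin n → Bool) × (Fin n → Bool)) ↪ X × X :=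
  ⟨fun p => (pure (enc n p.1), pure (enc n p.2)), by
    intro p q h
    obtain ⟨h1, h2⟩ := Prod.mk.injEq _ _ _ _ ▸ h
    exact Prod.ext (enc_inj n (Ultrafilter.pure_injective h1))
      (enc_inj n (Ultrafilter.pure_injective h2))⟩

def ν (n : ℕ) : ((Fin n → Bool) × (Fin n → Bool)) →₀ ℝ :=
  Finsupp.equivFunOnFinite.symm (fun p => w n p.1 p.2 / 4 ^ n)

lemma ν_apply (n : ℕ) (p : (Fin n → Bool) × (Fin n → Bool)) :
    ν n p = w n p.1 p.2 / 4 ^ n := rfl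

def μ (n : ℕ) : (X × X) →₀ ℝ := Finsupp.embDomain (φ n) (ν n)

lemma μ_sum (n : ℕ) (g : (X × X) → ℝ → ℝ) (hg : ∀ x, g x 0 = 0) :
    ∑ x ∈ (μ n).support, g x (μ n x)
      = ∑ p : (Fin n → Bool) × (Fin n → Bool), g (φ n p) (w n p.1 p.2 / 4 ^ n) := by
  rw [show ∑ x ∈ (μ n).support, g x (μ n x) = (μ n).sum g from rfl]
  rw [μ, Finsupp.sum_embDomain, Finsupp.sum_fintype _ _ (fun p => hg _)]
  simp_rw [ν_apply]

lemma card4 (n : ℕ) :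
    (Fintype.card ((Fin n → Bool) × (Fin n → Bool)) : ℝ) = 4 ^ n := by
  rw [Fintype.card_prod, Fintype.card_fun]
  push_cast
  simp [← mul_pow]
  norm_num

lemma μ_norm (n : ℕ) : ∑ x ∈ (μ n).support, |μ n x| = 1 := by
  rw [μ_sum n (fun _ c => |c|) (fun _ => abs_zero)]
  have : ∀ p : (Fin n → Bool) × (Fin n → Bool),
      |w n p.1 p.2 / 4 ^ n| = 1 / 4 ^ n := by
    intro p
    rw [abs_div, abs_w]
    congr 1
    rw [abs_pow]
    norm_num
  simp_rw [this]
  rw [Finset.sum_const, Finset.card_univ, nsmul_eq_mul, ← card4 n]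
  field_simp

lemma μ_support (n : ℕ) :
    (μ n).support = (ν n).support.map (φ n) := Finsupp.support_embDomain _ _

lemma μ_support_sub (n : ℕ) :
    (↑(μ n).support : Set (X × X)) ⊆
      (Set.range (pure : ℕ → X)) ×ˢ (Set.range (pure : ℕ → X)) := by
  intro x hx
  rw [μ_support] at hx
  simp only [Finset.coe_map, Set.mem_image, Finset.mem_coe] at hx
  obtain ⟨p, _, rfl⟩ := hx
  exact ⟨⟨enc n p.1, rfl⟩, ⟨enc n p.2, rfl⟩⟩

lemma μ_disj_fst (m n : ℕ) (h : m ≠ n) :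
    Disjoint (Prod.fst '' (↑(μ m).support : Set (X × X)))
      (Prod.fst '' (↑(μ n).support : Set (X × X))) := by
  rw [Set.disjoint_left]
  rintro a ⟨x, hx, rfl⟩ ⟨y, hy, hyx⟩
  rw [μ_support] at hx hy
  simp only [Finset.coe_map, Set.mem_image, Finset.mem_coe] at hx hy
  obtain ⟨p, _, rfl⟩ := hx
  obtain ⟨q, _, rfl⟩ := hy
  exact enc_ne n m h.symm q.1 p.1 (Ultrafilter.pure_injective hyx)

lemma μ_disj_snd (m n : ℕ) (h : m ≠ n) :
    Disjoint (Prod.snd '' (↑(μ m).support : Set (X × X)))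
      (Prod.snd '' (↑(μ n).support : Set (X × X))) := by
  rw [Set.disjoint_left]
  rintro a ⟨x, hx, rfl⟩ ⟨y, hy, hyx⟩
  rw [μ_support] at hx hy
  simp only [Finset.coe_map, Set.mem_image, Finset.mem_coe] at hx hy
  obtain ⟨p, _, rfl⟩ := hx
  obtain ⟨q, _, rfl⟩ := hy
  exact enc_ne n m h.symm q.2 p.2 (Ultrafilter.pure_injective hyx)

/-! ### The functional Λ -/

def Λ (F : C(X × X, ℝ)) (n : ℕ) : ℝ := ∑ x ∈ (μ n).support, μ n x * F x

lemma Λ_eq (F : C(X × X, ℝ)) (n : ℕ) :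
    Λ F n = ∑ p : (Fin n → Bool) × (Fin n → Bool),
      (w n p.1 p.2 / 4 ^ n) * F (pure (enc n p.1), pure (enc n p.2)) := by
  rw [Λ, μ_sum n (fun x c => c * F x) (fun x => zero_mul _)]
  rfl

lemma Λ_bound (F : C(X × X, ℝ)) (n : ℕ) : |Λ F n| ≤ ‖F‖ := by
  rw [Λ]
  calc |∑ x ∈ (μ n).support, μ n x * F x|
      ≤ ∑ x ∈ (μ n).support, |μ n x * F x| := Finset.abs_sum_le_sum_abs _ _
    _ ≤ ∑ x ∈ (μ n).support, |μ n x| * ‖F‖ := by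
        apply Finset.sum_le_sum
        intro x _
        rw [abs_mul]
        exact mul_le_mul_of_nonneg_left
          (by rw [← Real.norm_eq_abs]; exact F.norm_coe_le_norm x) (abs_nonneg _)
    _ = (∑ x ∈ (μ n).support, |μ n x|) * ‖F‖ := by rw [Finset.sum_mul]
    _ = ‖F‖ := by rw [μ_norm n, one_mul]

lemma Λ_add (F G : C(X × X, ℝ)) (n : ℕ) : Λ (F + G) n = Λ F n + Λ G n := by
  simp [Λ, mul_add, Finset.sum_add_distrib]

lemma Λ_sub (F G : C(X × X, ℝ)) (n : ℕ) : Λ (F - G) n = Λ F n - Λ G n := by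
  simp [Λ, mul_sub, Finset.sum_sub_distrib]

lemma Λ_smul (a : ℝ) (F : C(X × X, ℝ)) (n : ℕ) : Λ (a • F) n = a * Λ F n := by
  simp only [Λ, ContinuousMap.smul_apply, smul_eq_mul, Finset.mul_sum]
  exact Finset.sum_congr rfl fun x _ => by ring

lemma Λ_zero (n : ℕ) : Λ 0 n = 0 := by simp [Λ]

/-! ### Estimate on product functions -/

lemma gen_est (g h : C(X, ℝ)) (n : ℕ) :
    |Λ ((g.comp ContinuousMap.fst) * (h.comp ContinuousMap.snd)) n|
      ≤ (‖g‖ * ‖h‖) * (Real.sqrt 8 / 4) ^ n := by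
  rw [Λ_eq]
  have e : ∀ p : (Fin n → Bool) × (Fin n → Bool),
      (w n p.1 p.2 / 4 ^ n) *
        (((g.comp ContinuousMap.fst) * (h.comp ContinuousMap.snd) : C(X × X, ℝ))
          (pure (enc n p.1), pure (enc n p.2)))
      = (w n p.1 p.2 * ((g (pure (enc n p.1))) * (h (pure (enc n p.2))))) / 4 ^ n := by
    intro p
    simp only [ContinuousMap.mul_apply, ContinuousMap.comp_apply,
      ContinuousMap.fst_apply, ContinuousMap.snd_apply]
    ring
  have h4 : |(4:ℝ)| = 4 := by norm_num
  simp_rw [e, ← Finset.sum_div]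
  rw [Fintype.sum_prod_type, abs_div, abs_pow, h4, div_pow, ← mul_div_assoc]
  have hk := key n (fun u => g (pure (enc n u))) (fun v => h (pure (enc n v))) ‖g‖ ‖h‖
    (fun u => by rw [← Real.norm_eq_abs]; exact g.norm_coe_le_norm _)
    (fun v => by rw [← Real.norm_eq_abs]; exact h.norm_coe_le_norm _)
  have h4n : (0:ℝ) < 4 ^ n := by positivity
  exact (div_le_div_iff_of_pos_right h4n).mpr hk

/-! ### The subalgebra of sums of products -/

def Pset : Set C(X × X, ℝ) :=
  {F | ∃ g h : C(X, ℝ), F = (g.comp ContinuousMap.fst) * (h.comp ContinuousMap.snd)}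

def M : Submodule ℝ C(X × X, ℝ) := Submodule.span ℝ Pset

lemma one_mem_Pset : (1 : C(X × X, ℝ)) ∈ Pset := by
  refine ⟨1, 1, ?_⟩
  ext x
  simp

lemma Pset_mul : ∀ x ∈ Pset, ∀ y ∈ Pset, x * y ∈ Pset := by
  rintro x ⟨g, h, rfl⟩ y ⟨g', h', rfl⟩
  refine ⟨g * g', h * h', ?_⟩
  ext z
  simp only [ContinuousMap.mul_apply, ContinuousMap.comp_apply,
    ContinuousMap.fst_apply, ContinuousMap.snd_apply]
  ring

lemma M_mul : ∀ x y : C(X × X, ℝ), x ∈ M → y ∈ M → x * y ∈ M := by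
  intro x y hx hy
  have : x * y ∈ M * M := Submodule.mul_mem_mul hx hy
  rw [M, Submodule.span_mul_span] at this
  refine Submodule.span_le.mpr ?_ this
  rintro z hz
  rw [Set.mem_mul] at hz
  obtain ⟨a, ha, b, hb, rfl⟩ := hz
  exact Submodule.subset_span (Pset_mul a ha b hb)

def A : Subalgebra ℝ C(X × X, ℝ) :=
  M.toSubalgebra (Submodule.subset_span one_mem_Pset) M_mul

lemma exists_sep {p p' : X} (h : p ≠ p') : ∃ g : C(X, ℝ), g p ≠ g p' := by
  have hex : ∃ s : Set ℕ, s ∈ p' ∧ s ∉ p := by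
    by_contra hc
    push_neg at hc
    have hle : (p : Filter ℕ) ≤ (p' : Filter ℕ) := fun s hs => hc s hs
    exact h (Ultrafilter.coe_le_coe.mp hle)
  obtain ⟨s, hs', hs⟩ := hex
  have hU : IsOpen {r : X | s ∈ r} := ultrafilter_isOpen_basic s
  have hUc : IsOpen {r : X | s ∉ r} := by
    have h2 : IsOpen {r : X | sᶜ ∈ r} := ultrafilter_isOpen_basic sᶜ
    convert h2 using 1
    ext r
    exact (Ultrafilter.compl_mem_iff_notMem).symm
  classical
  set fI : X → ℝ := Set.indicator {r : X | s ∈ r} (fun _ => (1:ℝ)) with hfI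
  have hlc : IsLocallyConstant fI := by
    intro t
    have hpre : fI ⁻¹' t =
        if (1:ℝ) ∈ t then (if (0:ℝ) ∈ t then Set.univ else {r : X | s ∈ r})
        else (if (0:ℝ) ∈ t then {r : X | s ∉ r} else ∅) := by
      ext r
      by_cases hr : r ∈ {r' : X | s ∈ r'}
      · rw [Set.mem_preimage, hfI, Set.indicator_of_mem hr]
        split_ifs <;> simp_all
      · rw [Set.mem_preimage, hfI, Set.indicator_of_notMem hr]
        split_ifs <;> simp_all
    rw [hpre]
    split_ifs <;> simp [hU, hUc]
  refine ⟨⟨fI, hlc.continuous⟩, ?_⟩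
  have e1 : fI p = 0 := by
    rw [hfI]; exact Set.indicator_of_notMem (by exact hs) _
  have e2 : fI p' = 1 := by
    rw [hfI]; exact Set.indicator_of_mem (by exact hs') _
  simp only [ContinuousMap.coe_mk, e1, e2]
  norm_num

lemma A_sep : A.SeparatesPoints := by
  intro x y hxy
  have : x.1 ≠ y.1 ∨ x.2 ≠ y.2 := by
    by_contra hc
    push_neg at hc
    exact hxy (Prod.ext hc.1 hc.2)
  rcases this with h1 | h2
  · obtain ⟨g, hg⟩ := exists_sep h1
    refine ⟨_, ⟨(g.comp ContinuousMap.fst) * ((1 : C(X,ℝ)).comp ContinuousMap.snd),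
      Submodule.subset_span ⟨g, 1, rfl⟩, rfl⟩, ?_⟩
    simpa using hg
  · obtain ⟨h, hh⟩ := exists_sep h2
    refine ⟨_, ⟨((1 : C(X,ℝ)).comp ContinuousMap.fst) * (h.comp ContinuousMap.snd),
      Submodule.subset_span ⟨1, h, rfl⟩, rfl⟩, ?_⟩
    simpa using hh

lemma tendsto_of_mem (F : C(X × X, ℝ)) (hF : F ∈ M) :
    Tendsto (fun n => Λ F n) atTop (𝓝 0) := by
  induction hF using Submodule.span_induction with
  | mem G hG =>
      obtain ⟨g, h, rfl⟩ := hG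
      refine squeeze_zero_norm (a := fun n => (‖g‖ * ‖h‖) * (Real.sqrt 8 / 4) ^ n)
        (fun n => ?_) ?_
      · rw [Real.norm_eq_abs]; exact gen_est g h n
      have hr0 : (0:ℝ) ≤ Real.sqrt 8 / 4 := by positivity
      have hr1 : Real.sqrt 8 / 4 < 1 := by
        rw [div_lt_one (by norm_num)]
        have : Real.sqrt 8 < Real.sqrt 16 := Real.sqrt_lt_sqrt (by norm_num) (by norm_num)
        rwa [show (16:ℝ) = 4 ^ 2 by norm_num, Real.sqrt_sq (by norm_num)] at this
      have := (tendsto_pow_atTop_nhds_zero_of_lt_one hr0 hr1).const_mul (‖g‖ * ‖h‖)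
      simpa using this
  | zero => simpa [Λ_zero] using tendsto_const_nhds
  | add G G' _ _ hG hG' =>
      have := hG.add hG'
      simp only [add_zero] at this
      simpa [Λ_add] using this
  | smul a G _ hG =>
      have := hG.const_mul a
      simp only [mul_zero] at this
      simpa [Λ_smul] using this

lemma tendsto_all (F : C(X × X, ℝ)) : Tendsto (fun n => Λ F n) atTop (𝓝 0) := by
  have hcl : F ∈ closure (M : Set C(X × X, ℝ)) := by
    have hSW := ContinuousMap.subalgebra_topologicalClosure_eq_top_of_separatesPoints A A_sep
    have : F ∈ A.topologicalClosure := hSW ▸ Algebra.mem_top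
    exact this
  rw [NormedAddCommGroup.tendsto_nhds_zero]
  intro ε hε
  obtain ⟨G, hGA, hdist⟩ := Metric.mem_closure_iff.mp hcl (ε/2) (by positivity)
  have hG0 := tendsto_of_mem G hGA
  have h2 := (NormedAddCommGroup.tendsto_nhds_zero.mp hG0) (ε/2) (by positivity)
  filter_upwards [h2] with n hn
  have hFG : |Λ (F - G) n| ≤ ‖F - G‖ := Λ_bound _ n
  have hnorm : ‖F - G‖ < ε / 2 := by rwa [← dist_eq_norm]
  have hsplit : Λ F n = Λ G n + Λ (F - G) n := by rw [Λ_sub]; ring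
  rw [Real.norm_eq_abs] at hn ⊢
  calc |Λ F n| = |Λ G n + Λ (F - G) n| := by rw [hsplit]
    _ ≤ |Λ G n| + |Λ (F - G) n| := abs_add_le _ _
    _ < ε / 2 + ε / 2 := add_lt_add_of_lt_of_le hn (le_trans hFG hnorm.le)
    _ = ε := by ring

end
end JN3

/-- `βℕ × βℕ` (where `βℕ` is realized as the space `Ultrafilter ℕ` of ultrafilters on `ℕ`
with its usual compact topology, and `ℕ` is identified with the principal ultrafilters via
`pure`) admits a JN-sequence supported on `ℕ × ℕ` whose supports have pairwise disjoint
projections onto each axis. -/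
theorem stmt3 :
    ∃ μ : ℕ → ((Ultrafilter ℕ × Ultrafilter ℕ) →₀ ℝ), IsJNSeq μ ∧
      (∀ n, (↑(μ n).support : Set (Ultrafilter ℕ × Ultrafilter ℕ)) ⊆
        (Set.range (pure : ℕ → Ultrafilter ℕ)) ×ˢ (Set.range (pure : ℕ → Ultrafilter ℕ))) ∧
      (∀ m n, m ≠ n →
        Disjoint (Prod.fst '' (↑(μ m).support : Set (Ultrafilter ℕ × Ultrafilter ℕ)))
          (Prod.fst '' (↑(μ n).support : Set (Ultrafilter ℕ × Ultrafilter ℕ)))) ∧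
      (∀ m n, m ≠ n →
        Disjoint (Prod.snd '' (↑(μ m).support : Set (Ultrafilter ℕ × Ultrafilter ℕ)))
          (Prod.snd '' (↑(μ n).support : Set (Ultrafilter ℕ × Ultrafilter ℕ)))) := by
  refine ⟨JN3.μ, ⟨JN3.μ_norm, ?_⟩, JN3.μ_support_sub, JN3.μ_disj_fst, JN3.μ_disj_snd⟩
  intro f hf
  exact JN3.tendsto_all ⟨f, hf⟩
end

section
/- For a Tychonoff space X the following are equivalent: (1) C_k(X) is the union of a countable family of von Neumann bounded subsets; (2) C_p(X) is the union of a countable family of von Neumann bounded subsets; (3) X is pseudocompact. -/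
open Filter Topology Pointwise

/-- A subset `B` of a real topological vector space is (von Neumann) bounded if for every
neighbourhood `U` of `0` there is `l > 0` with `l • B ⊆ U`. -/
def VNBounded {E : Type*} [AddCommMonoid E] [SMul ℝ E] [TopologicalSpace E]
    (B : Set E) : Prop :=
  ∀ U ∈ nhds (0 : E), ∃ l : ℝ, 0 < l ∧ l • B ⊆ U

section Aux

variable {X : Type*} [TopologicalSpace X]

/-- If `X` is not pseudocompact, then for any countable family of "bound functions"
`M n : X → ℝ` there is a continuous function beating each `M n` at some point. -/
lemma core_not_pseudo (hX : ¬ Pseudocompact X) (M : ℕ → X → ℝ) :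
    ∃ g : C(X, ℝ), ∀ n, ∃ x, M n x < |g x| := by
  unfold Pseudocompact at hX
  push_neg at hX
  obtain ⟨f, hf, hub⟩ := hX
  choose χ hχ using hub
  let x : ℕ → X := fun n => Nat.rec (χ 0) (fun _ xn => χ (|f xn| + 1)) n
  set t : ℕ → ℝ := fun n => |f (x n)| with ht
  have hstep : ∀ n, t n + 1 < t (n + 1) := fun n => hχ (|f (x n)| + 1)
  have hmono : ∀ m k, t m + k ≤ t (m + k) := by
    intro m k
    induction k with
    | zero => simp
    | succ k ih =>
      push_cast
      have := hstep (m + k)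
      have : t (m + k) + 1 ≤ t (m + k + 1) := le_of_lt this
      push_cast at ih
      calc t m + ((k : ℝ) + 1) = (t m + k) + 1 := by ring
        _ ≤ t (m + k) + 1 := by linarith
        _ ≤ t (m + k + 1) := this
  have key : ∀ a b : ℕ, a < b → t a + 1 ≤ t b := by
    intro a b hab
    obtain ⟨k, rfl⟩ := Nat.exists_eq_add_of_lt hab
    have h := hmono a (k + 1)
    have hk : (0:ℝ) ≤ (k : ℝ) := Nat.cast_nonneg k
    rw [show a + (k + 1) = a + k + 1 by omega] at h
    push_cast at h
    linarith
  have hpair : Pairwise fun a b => (1 : ℝ) ≤ dist (t a) (t b) := by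
    intro a b hab
    rcases hab.lt_or_gt with h | h
    · have := key a b h
      rw [Real.dist_eq, abs_sub_comm, abs_of_nonneg (by linarith)]
      linarith
    · have := key b a h
      rw [Real.dist_eq, abs_of_nonneg (by linarith)]
      linarith
  have hemb : IsClosedEmbedding t := Metric.isClosedEmbedding_of_pairwise_le_dist one_pos hpair
  obtain ⟨φ, hφ⟩ := ContinuousMap.exists_extension' hemb
    ⟨fun n => |M n (x n)| + 1, continuous_of_discreteTopology⟩
  refine ⟨φ.comp ⟨fun y => |f y|, hf.abs⟩, fun n => ⟨x n, ?_⟩⟩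
  have hval : φ (t n) = |M n (x n)| + 1 := congrFun hφ n
  have h1 : (0 : ℝ) ≤ |M n (x n)| := abs_nonneg _
  have h2 : M n (x n) ≤ |M n (x n)| := le_abs_self _
  simp only [ContinuousMap.comp_apply, ContinuousMap.coe_mk]
  have : φ |f (x n)| = |M n (x n)| + 1 := hval
  rw [this, abs_of_nonneg (by linarith)]
  linarith

/-- A von Neumann bounded subset of `C_p(X)` is pointwise bounded. -/
lemma vnb_pointwise_cp {B : Set ↥(Cp X)} (hB : VNBounded B) (x : X) :
    ∃ M : ℝ, ∀ g ∈ B, |(g : X → ℝ) x| ≤ M := by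
  have hc : Continuous fun h : ↥(Cp X) => |(h : X → ℝ) x| :=
    ((continuous_apply x).comp continuous_subtype_val).abs
  have hU : {h : ↥(Cp X) | |(h : X → ℝ) x| < 1} ∈ nhds (0 : ↥(Cp X)) := by
    have hop : IsOpen {h : ↥(Cp X) | |(h : X → ℝ) x| < 1} := isOpen_Iio.preimage hc
    refine hop.mem_nhds ?_
    show |((0 : ↥(Cp X)) : X → ℝ) x| < 1
    norm_num
  obtain ⟨l, hl, hlB⟩ := hB _ hU
  refine ⟨1 / l, fun g hg => ?_⟩
  have hmem : l • g ∈ {h : ↥(Cp X) | |(h : X → ℝ) x| < 1} :=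
    hlB (Set.smul_mem_smul_set hg)
  have : |((l • g : ↥(Cp X)) : X → ℝ) x| < 1 := hmem
  have hx : |l * (g : X → ℝ) x| < 1 := by
    simpa using this
  rw [abs_mul, abs_of_pos hl] at hx
  rw [le_div_iff₀ hl]
  nlinarith [abs_nonneg ((g : X → ℝ) x)]

/-- A von Neumann bounded subset of `C_k(X)` is pointwise bounded. -/
lemma vnb_pointwise_ck {B : Set C(X, ℝ)} (hB : VNBounded B) (x : X) :
    ∃ M : ℝ, ∀ g ∈ B, |g x| ≤ M := by
  have hc : Continuous fun h : C(X, ℝ) => |h x| :=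
    (continuous_eval_const x).abs
  have hU : {h : C(X, ℝ) | |h x| < 1} ∈ nhds (0 : C(X, ℝ)) := by
    have hop : IsOpen {h : C(X, ℝ) | |h x| < 1} := isOpen_Iio.preimage hc
    refine hop.mem_nhds ?_
    show |(0 : C(X, ℝ)) x| < 1
    norm_num
  obtain ⟨l, hl, hlB⟩ := hB _ hU
  refine ⟨1 / l, fun g hg => ?_⟩
  have hmem : l • g ∈ {h : C(X, ℝ) | |h x| < 1} := hlB (Set.smul_mem_smul_set hg)
  have hx : |l * g x| < 1 := by simpa using hmem
  rw [abs_mul, abs_of_pos hl] at hx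
  rw [le_div_iff₀ hl]
  nlinarith [abs_nonneg (g x)]

/-- Uniformly bounded sets are von Neumann bounded in `C_k(X)`. -/
lemma vnb_unif_ck (n : ℕ) : VNBounded {g : C(X, ℝ) | ∀ x, |g x| ≤ n} := by
  intro U hU
  have hb := nhds_basis_uniformity' (x := (0 : C(X, ℝ)))
    ContinuousMap.hasBasis_compactConvergenceUniformity
  rw [hb.mem_iff] at hU
  obtain ⟨⟨K, V⟩, ⟨hK, hV⟩, hsub⟩ := hU
  obtain ⟨ε, hε, hball⟩ := Metric.mem_uniformity_dist.mp hV
  refine ⟨ε / (2 * (n + 1)), by positivity, ?_⟩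
  rintro _ ⟨g, hg, rfl⟩
  refine hsub ?_
  intro y hy
  refine hball ?_
  have hgy : |g y| ≤ (n : ℝ) := hg y
  have : dist ((0 : C(X, ℝ)) y) (((ε / (2 * (n + 1))) • g) y) = ε / (2 * (n + 1)) * |g y| := by
    simp [Real.dist_eq, abs_mul, abs_of_pos (show (0:ℝ) < ε / (2 * (n + 1)) by positivity)]
  rw [this]
  have hlt : ε / (2 * (n + 1)) * |g y| ≤ ε / (2 * (n + 1)) * n := by
    have : (0:ℝ) < ε / (2 * (n + 1)) := by positivity
    nlinarith
  have : ε / (2 * (n + 1)) * n < ε := by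
    rw [div_mul_eq_mul_div, div_lt_iff₀ (by positivity)]
    nlinarith
  linarith

/-- Uniformly bounded sets are von Neumann bounded in `C_p(X)`. -/
lemma vnb_unif_cp (n : ℕ) : VNBounded {g : ↥(Cp X) | ∀ x, |(g : X → ℝ) x| ≤ n} := by
  intro U hU
  rw [mem_nhds_subtype] at hU
  obtain ⟨t, ht, hsub⟩ := hU
  rw [show ((0 : ↥(Cp X)) : X → ℝ) = (0 : X → ℝ) from rfl, nhds_pi, Filter.mem_pi] at ht
  obtain ⟨I, hI, V, hV, hIV⟩ := ht
  choose ε hε hball using fun i => Metric.mem_nhds_iff.mp (hV i)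
  rcases I.eq_empty_or_nonempty with rfl | hne
  · refine ⟨1, one_pos, ?_⟩
    rintro _ ⟨g, hg, rfl⟩
    exact hsub (hIV (by simp))
  · obtain ⟨i₀, hi₀, hmin⟩ := Set.exists_min_image I ε hI hne
    have hl : (0:ℝ) < ε i₀ / (2 * (n + 1)) := div_pos (hε i₀) (by positivity)
    refine ⟨ε i₀ / (2 * (n + 1)), hl, ?_⟩
    rintro _ ⟨g, hg, rfl⟩
    refine hsub (hIV ?_)
    intro i hi
    show (((ε i₀ / (2 * (n + 1))) • g : ↥(Cp X)) : X → ℝ) i ∈ V i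
    refine hball i ?_
    have hval : (((ε i₀ / (2 * (n + 1))) • g : ↥(Cp X)) : X → ℝ) i
        = ε i₀ / (2 * (n + 1)) * (g : X → ℝ) i := rfl
    have h0 : (0 : X → ℝ) i = 0 := rfl
    rw [Metric.mem_ball, Real.dist_eq, hval, h0, sub_zero, abs_mul, abs_of_pos hl]
    have hgy : |(g : X → ℝ) i| ≤ (n : ℝ) := hg i
    have h1 : ε i₀ / (2 * (n + 1)) * |(g : X → ℝ) i| ≤ ε i₀ / (2 * (n + 1)) * n := by
      nlinarith
    have h2 : ε i₀ / (2 * (n + 1)) * n < ε i₀ := by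
      rw [div_mul_eq_mul_div, div_lt_iff₀ (by positivity)]
      nlinarith [hε i₀]
    have h3 : ε i₀ ≤ ε i := hmin i hi
    linarith

end Aux

/-- `C_k(X)` is realized as `C(X, ℝ)` with its compact-open topology (the default topology
on `ContinuousMap`). The three conditions are equivalent:
(1) `C_k(X)` is a countable union of bounded sets;
(2) `C_p(X)` is a countable union of bounded sets;
(3) `X` is pseudocompact. -/
theorem stmt7 (X : Type*) [TopologicalSpace X] [CompletelyRegularSpace X] [T2Space X] :
    ((∃ B : ℕ → Set C(X, ℝ), (∀ n, VNBounded (B n)) ∧ (⋃ n, B n) = Set.univ) ↔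
      (∃ B : ℕ → Set ↥(Cp X), (∀ n, VNBounded (B n)) ∧ (⋃ n, B n) = Set.univ)) ∧
    ((∃ B : ℕ → Set ↥(Cp X), (∀ n, VNBounded (B n)) ∧ (⋃ n, B n) = Set.univ) ↔
      Pseudocompact X) := by
  have h31 : Pseudocompact X →
      (∃ B : ℕ → Set C(X, ℝ), (∀ n, VNBounded (B n)) ∧ (⋃ n, B n) = Set.univ) := by
    intro hP
    refine ⟨fun n => {g : C(X, ℝ) | ∀ x, |g x| ≤ n}, fun n => vnb_unif_ck n, ?_⟩
    ext g
    simp only [Set.mem_iUnion, Set.mem_univ, iff_true, Set.mem_setOf_eq]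
    obtain ⟨M, hM⟩ := hP g g.continuous
    exact ⟨⌈M⌉₊, fun x => (hM x).trans (Nat.le_ceil M)⟩
  have h32 : Pseudocompact X →
      (∃ B : ℕ → Set ↥(Cp X), (∀ n, VNBounded (B n)) ∧ (⋃ n, B n) = Set.univ) := by
    intro hP
    refine ⟨fun n => {g : ↥(Cp X) | ∀ x, |(g : X → ℝ) x| ≤ n}, fun n => vnb_unif_cp n, ?_⟩
    ext g
    simp only [Set.mem_iUnion, Set.mem_univ, iff_true, Set.mem_setOf_eq]
    obtain ⟨M, hM⟩ := hP (g : X → ℝ) g.2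
    exact ⟨⌈M⌉₊, fun x => (hM x).trans (Nat.le_ceil M)⟩
  have h13 : (∃ B : ℕ → Set C(X, ℝ), (∀ n, VNBounded (B n)) ∧ (⋃ n, B n) = Set.univ) →
      Pseudocompact X := by
    rintro ⟨B, hB, hcov⟩
    by_contra hX
    choose M hM using fun n x => vnb_pointwise_ck (hB n) x
    obtain ⟨g, hg⟩ := core_not_pseudo hX M
    have hmem : g ∈ ⋃ n, B n := hcov ▸ Set.mem_univ g
    obtain ⟨n, hn⟩ := Set.mem_iUnion.mp hmem
    obtain ⟨x, hx⟩ := hg n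
    exact absurd (hM n x g hn) (not_le.mpr hx)
  have h23 : (∃ B : ℕ → Set ↥(Cp X), (∀ n, VNBounded (B n)) ∧ (⋃ n, B n) = Set.univ) →
      Pseudocompact X := by
    rintro ⟨B, hB, hcov⟩
    by_contra hX
    choose M hM using fun n x => vnb_pointwise_cp (hB n) x
    obtain ⟨g, hg⟩ := core_not_pseudo hX M
    have hgmem : (⇑g : X → ℝ) ∈ Cp X := g.continuous
    have hmem : (⟨⇑g, hgmem⟩ : ↥(Cp X)) ∈ ⋃ n, B n := hcov ▸ Set.mem_univ _
    obtain ⟨n, hn⟩ := Set.mem_iUnion.mp hmem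
    obtain ⟨x, hx⟩ := hg n
    exact absurd (hM n x _ hn) (not_le.mpr hx)
  exact ⟨⟨fun h => h32 (h13 h), fun h => h31 (h23 h)⟩, ⟨h23, h32⟩⟩
end

section
/- Let Y be a subspace of a Tychonoff space X, and let R : C_k(X) → C_k(Y) be the restriction operator R(f) = f|_Y. Then R is an open map if and only if Y is closed in X and C-embedded in X. -/
open Filter Topology Set unitInterval

/-- nhds basis for the compact-open (= compact convergence) topology on `C(Z, ℝ)`. -/
lemma stmt9_nhds_basis {Z : Type*} [TopologicalSpace Z] (f : C(Z, ℝ)) :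
    (𝓝 f).HasBasis (fun Kε : Set Z × ℝ => IsCompact Kε.1 ∧ 0 < Kε.2)
      (fun Kε => {g : C(Z, ℝ) | ∀ x ∈ Kε.1, dist (f x) (g x) < Kε.2}) :=
  nhds_basis_uniformity' (Metric.uniformity_basis_dist.compactConvergenceUniformity)

/-- In a completely regular space, a compact set can be separated from a disjoint
closed set by a `[0,1]`-valued continuous function. -/
lemma stmt9_sep {X : Type*} [TopologicalSpace X] [CompletelyRegularSpace X]
    {C Y : Set X} (hC : IsCompact C) (hY : IsClosed Y) (hd : ∀ x ∈ C, x ∉ Y) :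
    ∃ θ : C(X, ℝ), Set.EqOn θ 1 Y ∧ Set.EqOn θ 0 C ∧ ∀ x, θ x ∈ Set.Icc (0:ℝ) 1 := by
  classical
  have key : ∀ x : C, ∃ f : X → I, Continuous f ∧ f (x : X) = 0 ∧ Set.EqOn f 1 Y :=
    fun x => CompletelyRegularSpace.completely_regular (x : X) Y hY (hd x x.2)
  choose F hFc hFx hFY using key
  set U : C → Set X := fun x => {z | (F x z : ℝ) < 1/2} with hU
  have hUopen : ∀ x : C, IsOpen (U x) := fun x =>
    isOpen_lt (continuous_subtype_val.comp (hFc x)) continuous_const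
  have hcover : C ⊆ ⋃ x : C, U x := by
    intro z hz
    exact Set.mem_iUnion.2 ⟨⟨z, hz⟩, by simp [hU, hFx ⟨z, hz⟩]⟩
  obtain ⟨t, ht⟩ := hC.elim_finite_subcover U hUopen hcover
  have hfac : ∀ (x : C), Continuous fun z => max (2 * (F x z : ℝ) - 1) 0 := by
    intro x
    exact (((continuous_const.mul (continuous_subtype_val.comp (hFc x))).sub
      continuous_const).max continuous_const)
  refine ⟨⟨fun z => ∏ x ∈ t, max (2 * (F x z : ℝ) - 1) 0, by
    exact continuous_finset_prod _ fun x _ => hfac x⟩, ?_, ?_, ?_⟩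
  · intro y hy
    simp only [ContinuousMap.coe_mk, Pi.one_apply]
    have : ∀ x ∈ t, max (2 * (F x y : ℝ) - 1) 0 = 1 := by
      intro x _
      have : F x y = 1 := hFY x hy
      rw [this]
      norm_num
    rw [Finset.prod_congr rfl this]
    simp
  · intro z hz
    simp only [ContinuousMap.coe_mk, Pi.zero_apply]
    obtain ⟨x, hxt, hxz⟩ : ∃ x ∈ t, z ∈ U x := by
      have := ht hz
      simpa using this
    refine Finset.prod_eq_zero hxt ?_
    have : (F x z : ℝ) < 1/2 := hxz
    have h2 : 2 * (F x z : ℝ) - 1 < 0 := by linarith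
    simp [max_eq_right h2.le]
  · intro z
    constructor
    · exact Finset.prod_nonneg fun x _ => le_max_right _ _
    · refine Finset.prod_le_one (fun x _ => le_max_right _ _) ?_
      intro x _
      have h1 : (F x z : ℝ) ≤ 1 := (F x z).2.2
      have h0 : (0:ℝ) ≤ 1 := by norm_num
      exact max_le (by linarith) h0

/-- For a subspace `Y` of a Tychonoff space `X`, the restriction operator
`R : C_k(X) → C_k(Y)` (both spaces of continuous real-valued functions carrying the
compact-open topology, the default topology on `ContinuousMap`) is an open map if and
only if `Y` is closed in `X` and C-embedded in `X` (every continuous real-valued function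
on `Y` extends continuously over `X`). -/
theorem stmt9 (X : Type*) [TopologicalSpace X] [CompletelyRegularSpace X] [T2Space X]
    (Y : Set X) :
    IsOpenMap (fun f : C(X, ℝ) => f.restrict Y) ↔
      (IsClosed Y ∧ ∀ g : C(↥Y, ℝ), ∃ f : C(X, ℝ), f.restrict Y = g) := by
  constructor
  · intro hR
    constructor
    · -- Y is closed
      rw [← closure_subset_iff_isClosed]
      intro x₀ hx₀
      by_contra hx₀Y
      -- the set of f with f x₀ < 1 is open
      have hWopen : IsOpen {f : C(X, ℝ) | f x₀ < 1} :=
        isOpen_lt (continuous_eval_const x₀) continuous_const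
      have himg := hR _ hWopen
      have h0mem : (0 : C(X, ℝ)).restrict Y ∈
          (fun f : C(X, ℝ) => f.restrict Y) '' {f : C(X, ℝ) | f x₀ < 1} :=
        ⟨0, by simp, rfl⟩
      have hnhds := himg.mem_nhds h0mem
      obtain ⟨⟨K, ε⟩, ⟨hK, hε⟩, hKε⟩ :=
        (stmt9_nhds_basis ((0 : C(X, ℝ)).restrict Y)).mem_iff.1 hnhds
      -- K' is the image of K in X; it's compact, closed, and misses x₀
      set K' : Set X := Subtype.val '' K with hK'
      have hK'c : IsCompact K' := hK.image continuous_subtype_val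
      have hx₀K' : x₀ ∉ K' := fun ⟨y, _, hy⟩ => hx₀Y (hy ▸ y.2)
      obtain ⟨f₀, hf₀c, hf₀x, hf₀K⟩ :=
        CompletelyRegularSpace.completely_regular x₀ K' hK'c.isClosed hx₀K'
      set f : C(X, ℝ) := ⟨fun z => 2 * (1 - (f₀ z : ℝ)),
        continuous_const.mul (continuous_const.sub (continuous_subtype_val.comp hf₀c))⟩
        with hf
      have hfrestrict : f.restrict Y ∈ {g : C(↥Y, ℝ) |
          ∀ y ∈ K, dist (((0 : C(X, ℝ)).restrict Y) y) (g y) < ε} := by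
        intro y hy
        have : f₀ (y : X) = 1 := hf₀K ⟨y, hy, rfl⟩
        simp [hf, ContinuousMap.restrict_apply, this, Real.dist_eq, hε]
      obtain ⟨h, hhW, hhf⟩ := hKε hfrestrict
      -- h agrees with f on Y, hence on the closure of Y, hence at x₀
      have heq : Set.EqOn h f Y := by
        intro y hy
        have := DFunLike.congr_fun hhf (⟨y, hy⟩ : ↥Y)
        simpa [ContinuousMap.restrict_apply] using this
      have heqc : Set.EqOn h f (closure Y) :=
        Set.EqOn.closure heq h.continuous f.continuous
      have : h x₀ = 2 := by
        have := heqc hx₀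
        rw [this]
        simp [hf, hf₀x]
      simp only [Set.mem_setOf_eq] at hhW
      rw [this] at hhW
      norm_num at hhW
    · -- C-embedded: every g extends
      intro g
      have himg := hR _ isOpen_univ
      have h0mem : (0 : C(X, ℝ)).restrict Y ∈
          (fun f : C(X, ℝ) => f.restrict Y) '' Set.univ := ⟨0, trivial, rfl⟩
      obtain ⟨⟨K, ε⟩, ⟨hK, hε⟩, hKε⟩ :=
        (stmt9_nhds_basis ((0 : C(X, ℝ)).restrict Y)).mem_iff.1 (himg.mem_nhds h0mem)
      obtain ⟨M, hM⟩ : ∃ M : ℝ, ∀ y ∈ K, |g y| ≤ M := by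
        obtain ⟨M, hM⟩ := hK.exists_bound_of_continuousOn (map_continuous g).continuousOn
        exact ⟨M, fun y hy => by simpa [Real.norm_eq_abs] using hM y hy⟩
      obtain ⟨n, hn⟩ := exists_nat_gt (M / ε)
      set a : ℝ := (n : ℝ) + 1 with ha
      have ha0 : 0 < a := by positivity
      have hsmall : (ContinuousMap.const ↥Y a⁻¹) * g ∈ {g' : C(↥Y, ℝ) |
          ∀ y ∈ K, dist (((0 : C(X, ℝ)).restrict Y) y) (g' y) < ε} := by
        intro y hy
        have h1 : |g y| ≤ M := hM y hy
        have hMnn : M < a * ε := by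
          have : M / ε < a := by simp only [ha]; linarith
          calc M = (M / ε) * ε := by field_simp
            _ < a * ε := by exact mul_lt_mul_of_pos_right this hε
        simp only [Real.dist_eq, ContinuousMap.restrict_apply, ContinuousMap.zero_apply,
          ContinuousMap.mul_apply, ContinuousMap.const_apply, zero_sub, abs_neg, abs_mul,
          abs_inv]
        rw [abs_of_pos ha0]
        calc a⁻¹ * |g y| ≤ a⁻¹ * M := by
              exact mul_le_mul_of_nonneg_left h1 (by positivity)
          _ < ε := by
              rw [inv_mul_lt_iff₀ ha0]
              nlinarith
      obtain ⟨f, _, hf⟩ := hKε hsmall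
      refine ⟨(ContinuousMap.const X a) * f, ?_⟩
      ext y
      have := DFunLike.congr_fun hf y
      simp only [ContinuousMap.restrict_apply, ContinuousMap.mul_apply,
        ContinuousMap.const_apply] at this ⊢
      rw [this]
      field_simp
  · rintro ⟨hYc, hExt⟩
    intro U hU
    rw [isOpen_iff_mem_nhds]
    rintro g ⟨f₀, hf₀U, rfl⟩
    obtain ⟨⟨K, ε⟩, ⟨hK, hε⟩, hKU⟩ :=
      (stmt9_nhds_basis f₀).mem_iff.1 (hU.mem_nhds hf₀U)
    rw [(stmt9_nhds_basis (f₀.restrict Y)).mem_iff]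
    refine ⟨(Subtype.val ⁻¹' K, ε), ⟨?_, hε⟩, ?_⟩
    · -- the preimage of K in Y is compact since Y is closed
      rw [Topology.IsEmbedding.subtypeVal.isCompact_iff, Subtype.image_preimage_coe]
      exact hK.inter_left hYc
    · intro g' hg'
      -- extend g' - f₀|Y and damp it outside
      obtain ⟨e, he⟩ := hExt (g' - f₀.restrict Y)
      set V : Set X := {x | |e x| < ε} with hV
      have hVopen : IsOpen V :=
        isOpen_lt (continuous_abs.comp e.continuous) continuous_const
      have hCc : IsCompact (K \ V) := hK.diff hVopen
      have hCd : ∀ x ∈ K \ V, x ∉ Y := by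
        rintro x ⟨hxK, hxV⟩ hxY
        apply hxV
        have h1 : e x = g' ⟨x, hxY⟩ - f₀ x := by
          have := DFunLike.congr_fun he (⟨x, hxY⟩ : ↥Y)
          simpa [ContinuousMap.restrict_apply] using this
        have h2 := hg' ⟨x, hxY⟩ hxK
        simp only [Real.dist_eq, ContinuousMap.restrict_apply] at h2
        simp only [hV, Set.mem_setOf_eq, h1]
        rw [abs_sub_comm]
        exact h2
      obtain ⟨θ, hθY, hθC, hθI⟩ := stmt9_sep hCc hYc hCd
      refine ⟨f₀ + e * θ, hKU ?_, ?_⟩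
      · intro x hx
        simp only [ContinuousMap.add_apply, ContinuousMap.mul_apply, Real.dist_eq]
        have habs : |f₀ x - (f₀ x + e x * θ x)| = |e x| * |θ x| := by
          rw [show f₀ x - (f₀ x + e x * θ x) = -(e x * θ x) by ring, abs_neg, abs_mul]
        rw [habs]
        by_cases hxV : x ∈ V
        · have h1 : |e x| < ε := hxV
          have h2 : |θ x| ≤ 1 := abs_le.2 ⟨by linarith [(hθI x).1], (hθI x).2⟩
          calc |e x| * |θ x| ≤ |e x| * 1 :=
                mul_le_mul_of_nonneg_left h2 (abs_nonneg _)
            _ < ε := by simpa using h1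
        · have h0 : θ x = 0 := hθC ⟨hx, hxV⟩
          simp [h0, hε]
      · ext y
        have h1 : θ (y : X) = 1 := hθY y.2
        have h2 : e (y : X) = g' y - f₀ (y : X) := by
          have := DFunLike.congr_fun he y
          simpa [ContinuousMap.restrict_apply] using this
        simp only [ContinuousMap.restrict_apply, ContinuousMap.add_apply,
          ContinuousMap.mul_apply, h1, h2]
        ring
end

section
/- Every space X in the class HS is pseudocompact, has cardinality 𝔠 = 2^ℵ₀, and every compact subspace of X is finite. -/
open Filter Topology

/-- An ultrafilter on `ℕ` is free if it is not principal. -/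
def IsFreeUltrafilter (u : Ultrafilter ℕ) : Prop := ∀ n : ℕ, u ≠ pure n

/-- A subset `X` of `βℕ` (realized as `Ultrafilter ℕ` with its usual compact topology,
`ℕ` being identified with the principal ultrafilters via `pure`) is in the class HS if
there is an assignment `A ↦ u_A` of a free ultrafilter containing `A` to each infinite
`A ⊆ ℕ` such that `X = ℕ ∪ {u_A : A infinite}`. -/
def IsHS (X : Set (Ultrafilter ℕ)) : Prop :=
  ∃ u : Set ℕ → Ultrafilter ℕ,
    (∀ A : Set ℕ, A.Infinite → A ∈ u A ∧ IsFreeUltrafilter (u A)) ∧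
    X = Set.range (pure : ℕ → Ultrafilter ℕ) ∪ {v | ∃ A : Set ℕ, A.Infinite ∧ v = u A}





lemma exists_basic {U : Set (Ultrafilter ℕ)} (hU : IsOpen U) {u : Ultrafilter ℕ} (hu : u ∈ U) :
    ∃ s ∈ u, {v : Ultrafilter ℕ | s ∈ v} ⊆ U := by
  obtain ⟨B, hB, huB, hBU⟩ := ultrafilterBasis_is_basis.exists_subset_of_mem_open hu hU
  obtain ⟨s, rfl⟩ := hB
  exact ⟨s, huB, hBU⟩

lemma free_infinite {u : Ultrafilter ℕ} (hu : IsFreeUltrafilter u) {s : Set ℕ} (hs : s ∈ u) :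
    s.Infinite := by
  by_contra hfin
  rw [Set.not_infinite] at hfin
  obtain ⟨n, -, hn⟩ := Ultrafilter.eq_pure_of_finite_mem hfin hs
  exact hu n hn

lemma ne_of_mem_compl_mem {u v : Ultrafilter ℕ} {s : Set ℕ} (hs : s ∈ u) (hs' : sᶜ ∈ v) :
    u ≠ v := by
  rintro rfl
  have := Filter.inter_mem hs hs'
  simp at this

lemma exists_mem_not_mem {u v : Ultrafilter ℕ} (h : u ≠ v) : ∃ s : Set ℕ, s ∈ u ∧ sᶜ ∈ v := by
  by_contra hc
  push_neg at hc
  have hle : (v : Filter ℕ) ≤ (u : Filter ℕ) := by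
    intro s hs
    have := hc s hs
    rwa [Ultrafilter.compl_mem_iff_notMem, not_not] at this
  exact h (Ultrafilter.coe_le_coe.mp hle).symm


abbrev PP := Finset ℕ × Finset (Finset ℕ)

def Ifam (A : Set ℕ) : Set PP := {p | ∃ q ∈ p.2, (q : Set ℕ) = ↑p.1 ∩ A}

lemma indep {𝒜 ℬ : Set (Set ℕ)} (h𝒜 : 𝒜.Finite) (hℬ : ℬ.Finite)
    (hd : ∀ A ∈ 𝒜, ∀ B ∈ ℬ, A ≠ B) :
    ∃ p : PP, (∀ A ∈ 𝒜, p ∈ Ifam A) ∧ (∀ B ∈ ℬ, p ∉ Ifam B) := by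
  classical
  -- witness function
  set wit : Set ℕ × Set ℕ → ℕ := fun z =>
    if h : ∃ n, n ∈ (z.1 \ z.2) ∪ (z.2 \ z.1) then h.choose else 0 with hwit
  have hwitmem : ∀ A B : Set ℕ, A ≠ B → wit (A, B) ∈ (A \ B) ∪ (B \ A) := by
    intro A B hne
    have hex : ∃ n, n ∈ (A \ B) ∪ (B \ A) := by
      by_contra hc
      push_neg at hc
      apply hne
      ext n
      have := hc n
      simp only [Set.mem_union, Set.mem_diff, not_or, not_and, not_not] at this
      exact ⟨fun h => this.1 h, fun h => this.2 h⟩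
    show (if h : ∃ n, n ∈ (A \ B) ∪ (B \ A) then h.choose else 0) ∈ (A \ B) ∪ (B \ A)
    rw [dif_pos hex]
    exact hex.choose_spec
  have hFfin : (wit '' (𝒜 ×ˢ ℬ)).Finite := (h𝒜.prod hℬ).image _
  set F : Finset ℕ := hFfin.toFinset with hF
  set g : Set ℕ → Finset ℕ := fun A => (F.finite_toSet.inter_of_left A).toFinset with hg
  have hgcoe : ∀ A, ((g A : Set ℕ)) = ↑F ∩ A := fun A => Set.Finite.coe_toFinset _
  set 𝔉 : Finset (Finset ℕ) := (h𝒜.image g).toFinset with h𝔉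
  refine ⟨(F, 𝔉), ?_, ?_⟩
  · intro A hA
    exact ⟨g A, by simp [h𝔉, Set.Finite.mem_toFinset]; exact ⟨A, hA, rfl⟩, hgcoe A⟩
  · rintro B hB ⟨q, hq, hqeq⟩
    simp only [h𝔉, Set.Finite.mem_toFinset, Set.mem_image] at hq
    obtain ⟨A, hA, rfl⟩ := hq
    rw [hgcoe A] at hqeq
    have hne := hd A hA B hB
    have hnmem := hwitmem A B hne
    have hnF : wit (A, B) ∈ (F : Set ℕ) := by
      rw [hF, Set.Finite.coe_toFinset]
      exact ⟨(A, B), Set.mk_mem_prod hA hB, rfl⟩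
    have := Set.ext_iff.mp hqeq (wit (A, B))
    rcases hnmem with ⟨h1, h2⟩ | ⟨h1, h2⟩
    · exact h2 (this.mp ⟨hnF, h1⟩).2
    · exact h2 (this.mpr ⟨hnF, h1⟩).2

lemma Ifam_inj : Function.Injective Ifam := by
  intro A B hAB
  by_contra hne
  obtain ⟨p, h1, h2⟩ := indep (Set.finite_singleton A) (Set.finite_singleton B)
    (by simpa using hne)
  exact h2 B rfl (hAB ▸ h1 A rfl)

lemma many_ultra : ∀ 𝒮 : Set (Set ℕ), ∃ w : Ultrafilter PP,
    (∀ A ∈ 𝒮, Ifam A ∈ w) ∧ (∀ A ∉ 𝒮, (Ifam A)ᶜ ∈ w) := by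
  intro 𝒮
  have fip : ∀ T : Finset (Set PP), ↑T ⊆ ((Ifam '' 𝒮) ∪ ((fun A => (Ifam A)ᶜ) '' 𝒮ᶜ)) →
      (⋂₀ (↑T : Set (Set PP))).Nonempty := by
    intro T hT
    set 𝒜 : Set (Set ℕ) := 𝒮 ∩ (Ifam ⁻¹' ↑T) with h𝒜
    set ℬ : Set (Set ℕ) := 𝒮ᶜ ∩ ((fun A => (Ifam A)ᶜ) ⁻¹' ↑T) with hℬ
    have h𝒜f : 𝒜.Finite :=
      ((T : Set (Set PP)).toFinite.preimage Ifam_inj.injOn).inter_of_right _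
    have hℬf : ℬ.Finite := by
      refine (((T : Set (Set PP)).toFinite.preimage ?_).inter_of_right _)
      exact (compl_injective.comp Ifam_inj).injOn
    obtain ⟨p, hp1, hp2⟩ := indep h𝒜f hℬf (by
      rintro A ⟨hA, -⟩ B ⟨hB, -⟩ rfl; exact hB hA)
    refine ⟨p, ?_⟩
    rintro t ht
    rcases hT ht with ⟨A, hA, rfl⟩ | ⟨A, hA, rfl⟩
    · exact hp1 A ⟨hA, ht⟩
    · exact hp2 A ⟨hA, ht⟩
  obtain ⟨w, hw⟩ := Ultrafilter.exists_ultrafilter_of_finite_inter_nonempty _ fip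
  exact ⟨w, fun A hA => hw (Or.inl ⟨A, hA, rfl⟩), fun A hA => hw (Or.inr ⟨A, hA, rfl⟩)⟩

lemma card_ultra_gt : Cardinal.continuum < Cardinal.mk (Ultrafilter ℕ) := by
  classical
  -- injection Set (Set ℕ) → Ultrafilter PP
  choose w hw1 hw2 using many_ultra
  have hwinj : Function.Injective w := by
    intro 𝒮 𝒮' h
    by_contra hne
    have : ∃ A, (A ∈ 𝒮 ∧ A ∉ 𝒮') ∨ (A ∈ 𝒮' ∧ A ∉ 𝒮) := by
      by_contra hc
      push_neg at hc
      apply hne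
      ext A
      exact ⟨fun hA => (hc A).1 hA, fun hA => (hc A).2 hA⟩
    obtain ⟨A, ⟨h1, h2⟩ | ⟨h1, h2⟩⟩ := this
    · have := Filter.inter_mem (hw1 𝒮 A h1) (h ▸ hw2 𝒮' A h2)
      simp at this
    · have := Filter.inter_mem (hw1 𝒮' A h1) (h.symm ▸ hw2 𝒮 A h2)
      simp at this
  -- Ultrafilter PP ≃ injects into Ultrafilter ℕ via an equiv PP ≃ ℕ
  have : Nonempty (PP ≃ ℕ) := ⟨(Denumerable.eqv PP)⟩
  obtain ⟨e⟩ := this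
  have hmapinj : Function.Injective (Ultrafilter.map e : Ultrafilter PP → Ultrafilter ℕ) := by
    intro u v h
    apply Ultrafilter.coe_injective
    apply Filter.map_injective e.injective
    exact congrArg Ultrafilter.toFilter h
  have hinj : Function.Injective ((Ultrafilter.map e) ∘ w) := hmapinj.comp hwinj
  have h1 : Cardinal.mk (Set (Set ℕ)) ≤ Cardinal.mk (Ultrafilter ℕ) :=
    Cardinal.mk_le_of_injective hinj
  have h2 : Cardinal.mk (Set (Set ℕ)) = 2 ^ Cardinal.continuum := by
    rw [Cardinal.mk_set, Cardinal.mk_set, Cardinal.mk_nat, Cardinal.two_power_aleph0]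
  calc Cardinal.continuum < 2 ^ Cardinal.continuum := Cardinal.cantor _
    _ ≤ Cardinal.mk (Ultrafilter ℕ) := h2 ▸ h1


lemma exists_disjoint_seq {K : Set (Ultrafilter ℕ)} (hK : K.Infinite) :
    ∃ (d : ℕ → Ultrafilter ℕ) (T : ℕ → Set ℕ), (∀ k, d k ∈ K) ∧ (∀ k, T k ∈ d k) ∧
      ∀ i j, i ≠ j → Disjoint (T i) (T j) := by
  classical
  set Q : Set ℕ → Prop := fun S => {w ∈ K | S ∈ w}.Infinite with hQ
  have step : ∀ S : Set ℕ, ∃ (T' : Set ℕ) (w : Ultrafilter ℕ),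
      Q S → w ∈ K ∧ T' ∈ w ∧ T' ⊆ S ∧ Q (S \ T') := by
    intro S
    by_cases hQS : Q S
    · obtain ⟨w₁, hw₁, w₂, hw₂, hne⟩ := hQS.nontrivial
      obtain ⟨E, hE1, hE2⟩ := exists_mem_not_mem hne
      have hsplit : {w ∈ K | S ∈ w} ⊆ {w ∈ K | S ∩ E ∈ w} ∪ {w ∈ K | S ∩ Eᶜ ∈ w} := by
        rintro w ⟨hwK, hwS⟩
        rcases w.mem_or_compl_mem E with hE | hE
        · exact Or.inl ⟨hwK, Filter.inter_mem hwS hE⟩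
        · exact Or.inr ⟨hwK, Filter.inter_mem hwS hE⟩
      rcases (Set.infinite_union.mp (hQS.mono hsplit)) with hinf | hinf
      · -- continue inside S ∩ E; emit w₂ with S ∩ Eᶜ
        refine ⟨S ∩ Eᶜ, w₂, fun _ => ⟨hw₂.1, Filter.inter_mem hw₂.2 hE2, Set.inter_subset_left, ?_⟩⟩
        refine hinf.mono ?_
        rintro w ⟨hwK, hw⟩
        refine ⟨hwK, Filter.mem_of_superset hw ?_⟩
        rintro n ⟨hnS, hnE⟩
        exact ⟨hnS, fun hc => hc.2 hnE⟩
      · refine ⟨S ∩ E, w₁, fun _ => ⟨hw₁.1, Filter.inter_mem hw₁.2 hE1, Set.inter_subset_left, ?_⟩⟩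
        refine hinf.mono ?_
        rintro w ⟨hwK, hw⟩
        refine ⟨hwK, Filter.mem_of_superset hw ?_⟩
        rintro n ⟨hnS, hnE⟩
        exact ⟨hnS, fun hc => hnE hc.2⟩
    · exact ⟨∅, Classical.arbitrary _, fun h => absurd h hQS⟩
  choose T' w hstep using step
  set S : ℕ → Set ℕ := fun k => Nat.rec Set.univ (fun _ Sk => Sk \ T' Sk) k with hS
  have hS0 : S 0 = Set.univ := rfl
  have hSsucc : ∀ k, S (k + 1) = S k \ T' (S k) := fun k => rfl
  have hQS : ∀ k, Q (S k) := by
    intro k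
    induction k with
    | zero =>
      rw [hS0]
      refine hK.mono ?_
      intro w hw
      exact ⟨hw, Filter.univ_mem⟩
    | succ k ih =>
      rw [hSsucc]
      exact (hstep (S k) ih).2.2.2
  have hprops : ∀ k, w (S k) ∈ K ∧ T' (S k) ∈ w (S k) ∧ T' (S k) ⊆ S k :=
    fun k => ⟨(hstep _ (hQS k)).1, (hstep _ (hQS k)).2.1, (hstep _ (hQS k)).2.2.1⟩
  have hmono : ∀ i j, i ≤ j → S j ⊆ S i := by
    intro i j hij
    induction j with
    | zero => simp_all
    | succ j ih =>
      rcases Nat.lt_or_ge i (j+1) with h | h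
      · have := ih (Nat.lt_succ_iff.mp h)
        rw [hSsucc]
        exact (Set.diff_subset).trans this
      · have : i = j + 1 := le_antisymm hij h
        subst this; rfl
  refine ⟨fun k => w (S k), fun k => T' (S k), fun k => (hprops k).1, fun k => (hprops k).2.1, ?_⟩
  have key : ∀ i j, i < j → Disjoint (T' (S i)) (T' (S j)) := by
    intro i j hij
    have h1 : T' (S j) ⊆ S j := (hprops j).2.2
    have h2 : S j ⊆ S (i + 1) := hmono _ _ hij
    rw [hSsucc] at h2
    exact Set.disjoint_of_subset_right (h1.trans h2) Set.disjoint_sdiff_right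
  intro i j hij
  rcases Nat.lt_or_ge i j with h | h
  · exact key i j h
  · exact (key j i (lt_of_le_of_ne h (Ne.symm hij))).symm
lemma compact_subset_finite {X K : Set (Ultrafilter ℕ)}
    (hcard : Cardinal.mk ↥X = Cardinal.continuum) (hKX : K ⊆ X) (hKc : IsCompact K) :
    K.Finite := by
  by_contra hinf
  rw [← Set.not_infinite, not_not] at hinf
  obtain ⟨d, T, hdK, hTd, hdisj⟩ := exists_disjoint_seq hinf
  set Φ : Ultrafilter ℕ → Ultrafilter ℕ := fun v => v.bind d with hΦ
  have hmem : ∀ (v : Ultrafilter ℕ) (s : Set ℕ), s ∈ Φ v ↔ {k | s ∈ d k} ∈ v := fun _ _ => Iff.rfl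
  have hΦinj : Function.Injective Φ := by
    intro v v' h
    by_contra hne
    obtain ⟨M, hM, hMc⟩ := exists_mem_not_mem hne
    set U : Set ℕ := ⋃ k ∈ M, T k with hU
    have h1 : U ∈ Φ v := by
      rw [hmem]
      refine Filter.mem_of_superset hM fun k hk => ?_
      exact Filter.mem_of_superset (hTd k) (Set.subset_biUnion_of_mem hk)
    have h2 : Uᶜ ∈ Φ v' := by
      rw [hmem]
      refine Filter.mem_of_superset hMc fun k hk => ?_
      refine Filter.mem_of_superset (hTd k) fun n hn hnU => ?_
      obtain ⟨j, hj, hnj⟩ := Set.mem_iUnion₂.mp hnU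
      exact (hdisj j k (fun hjk => hk (hjk ▸ hj))).le_bot ⟨hnj, hn⟩
    exact ne_of_mem_compl_mem h1 (h ▸ h2) rfl
  have hclos : ∀ v : Ultrafilter ℕ, Φ v ∈ K := by
    intro v
    have h1 : Φ v ∈ closure (Set.range d) := by
      rw [mem_closure_iff]
      intro o ho hΦo
      obtain ⟨s, hs, hso⟩ := exists_basic ho hΦo
      obtain ⟨k, hk⟩ := v.nonempty_of_mem ((hmem v s).mp hs)
      exact ⟨d k, hso hk, Set.mem_range_self k⟩
    have h2 : closure (Set.range d) ⊆ K :=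
      closure_minimal (Set.range_subset_iff.mpr hdK) hKc.isClosed
    exact h2 h1
  have hle : Cardinal.mk (Ultrafilter ℕ) ≤ Cardinal.mk ↥X := by
    refine le_trans (Cardinal.mk_le_of_injective (f := fun v => (⟨Φ v, hKX (hclos v)⟩ : ↥X)) ?_)
      le_rfl
    intro v v' h
    exact hΦinj (congrArg Subtype.val h)
  rw [hcard] at hle
  exact absurd hle (not_le.mpr card_ultra_gt)
section parts
variable {X : Set (Ultrafilter ℕ)} {u : Set ℕ → Ultrafilter ℕ}
  (hu : ∀ A : Set ℕ, A.Infinite → A ∈ u A ∧ IsFreeUltrafilter (u A))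
  (hXeq : X = Set.range (pure : ℕ → Ultrafilter ℕ) ∪ {v | ∃ A : Set ℕ, A.Infinite ∧ v = u A})

include hXeq in
lemma hpure : ∀ n : ℕ, pure n ∈ X := fun n => hXeq ▸ Or.inl (Set.mem_range_self n)

include hu hXeq in
lemma part1 : Pseudocompact ↥X := by
  intro f hf
  by_contra hb
  push_neg at hb
  have hp := hpure hXeq
  set g : ℕ → ℝ := fun m => |f ⟨pure m, hp m⟩| with hg
  -- near any point of X, over any member of the ultrafilter, there is a pure point with close value
  have key : ∀ (x : ↥X) (ε : ℝ), 0 < ε → ∀ C : Set ℕ, C ∈ (↑x : Ultrafilter ℕ) →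
      ∃ n ∈ C, |f ⟨pure n, hp n⟩ - f x| < ε := by
    intro x ε hε C hC
    have hV : IsOpen (f ⁻¹' Metric.ball (f x) ε) := (Metric.isOpen_ball).preimage hf
    rw [isOpen_induced_iff] at hV
    obtain ⟨U, hU, hUV⟩ := hV
    have hxU : (↑x : Ultrafilter ℕ) ∈ U := by
      have hx : x ∈ f ⁻¹' Metric.ball (f x) ε := by simp [hε]
      rw [← hUV] at hx
      exact hx
    obtain ⟨s, hs, hsU⟩ := exists_basic hU hxU
    obtain ⟨n, hns, hnC⟩ := (↑x : Ultrafilter ℕ).nonempty_of_mem (Filter.inter_mem hs hC)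
    have hpm : (⟨pure n, hp n⟩ : ↥X) ∈ f ⁻¹' Metric.ball (f x) ε := by
      rw [← hUV]
      exact hsU hns
    refine ⟨n, hnC, ?_⟩
    simpa [Real.dist_eq] using hpm
  -- g is unbounded
  have gub : ∀ M : ℝ, ∃ m : ℕ, M < g m := by
    intro M
    obtain ⟨x, hx⟩ := hb M
    obtain ⟨n, -, hn⟩ := key x (|f x| - M) (by linarith) Set.univ Filter.univ_mem
    refine ⟨n, ?_⟩
    have h1 := abs_sub_abs_le_abs_sub (f x) (f ⟨pure n, hp n⟩)
    rw [abs_sub_comm] at h1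
    have : g n = |f ⟨pure n, hp n⟩| := rfl
    linarith
  choose m hm using fun k : ℕ => gub (k : ℝ)
  set A : Set ℕ := Set.range m with hA
  have hAinf : A.Infinite := by
    by_contra hfin
    rw [Set.not_infinite] at hfin
    obtain ⟨b, hbnd⟩ := (hfin.image g).bddAbove
    obtain ⟨k, hk⟩ := exists_nat_gt b
    have : g (m k) ≤ b := hbnd (Set.mem_image_of_mem g (Set.mem_range_self k))
    have := hm k
    linarith
  obtain ⟨hwA, hwfree⟩ := hu A hAinf
  set xw : ↥X := ⟨u A, by rw [hXeq]; exact Or.inr ⟨A, hAinf, rfl⟩⟩ with hxw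
  -- the bad set is finite
  set bad : Set ℕ := {n ∈ A | g n ≤ |f xw| + 1} with hbad
  have hbadfin : bad.Finite := by
    have hsub : bad ⊆ m '' {k : ℕ | (k : ℝ) ≤ |f xw| + 1} := by
      rintro n ⟨hnA, hng⟩
      obtain ⟨k, rfl⟩ := hnA
      exact ⟨k, le_trans (le_of_lt (hm k)) hng, rfl⟩
    refine Set.Finite.subset (Set.Finite.image m ?_) hsub
    refine Set.Finite.subset (Set.finite_Iic ⌈|f xw| + 1⌉₊) fun k hk => ?_
    simp only [Set.mem_setOf_eq] at hk
    exact Set.mem_Iic.mpr (Nat.cast_le.mp (hk.trans (Nat.le_ceil _)))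
  have hAbad : A \ bad ∈ u A := by
    refine Filter.diff_mem hwA ?_
    show badᶜ ∈ u A
    rw [Ultrafilter.compl_mem_iff_notMem]
    intro hmem
    exact (free_infinite hwfree hmem) hbadfin
  obtain ⟨n, hnA, hn⟩ := key xw 1 one_pos (A \ bad) hAbad
  have h1 : g n ≤ |f xw| + 1 := by
    have := abs_sub_abs_le_abs_sub (f ⟨pure n, hp n⟩) (f xw)
    have hgn : g n = |f ⟨pure n, hp n⟩| := rfl
    linarith
  exact hnA.2 ⟨hnA.1, h1⟩
include hu hXeq in
lemma part2 : Cardinal.mk ↥X = Cardinal.continuum := by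
  have hup : Cardinal.mk ↥X ≤ Cardinal.continuum := by
    rw [hXeq]
    refine le_trans (Cardinal.mk_union_le _ _) ?_
    have h1 : Cardinal.mk ↥(Set.range (pure : ℕ → Ultrafilter ℕ)) ≤ Cardinal.aleph0 :=
      le_trans Cardinal.mk_range_le (by simp)
    have h2 : Cardinal.mk ↥{v | ∃ A : Set ℕ, A.Infinite ∧ v = u A} ≤ Cardinal.continuum := by
      have hsub : {v | ∃ A : Set ℕ, A.Infinite ∧ v = u A} ⊆ Set.range u := by
        rintro v ⟨A, -, rfl⟩; exact ⟨A, rfl⟩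
      refine le_trans (Cardinal.mk_le_mk_of_subset hsub) (le_trans Cardinal.mk_range_le ?_)
      rw [Cardinal.mk_set, Cardinal.mk_nat, Cardinal.two_power_aleph0]
    calc Cardinal.mk ↥(Set.range (pure : ℕ → Ultrafilter ℕ))
          + Cardinal.mk ↥{v | ∃ A : Set ℕ, A.Infinite ∧ v = u A}
        ≤ Cardinal.continuum + Cardinal.continuum :=
          add_le_add (h1.trans Cardinal.aleph0_le_continuum) h2
      _ = Cardinal.continuum := Cardinal.add_eq_self Cardinal.aleph0_le_continuum
  have hlow : Cardinal.continuum ≤ Cardinal.mk ↥X := by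
    classical
    set enc : (ℕ → Bool) → ℕ → ℕ :=
      fun σ k => Encodable.encode ((List.range k).map σ) with henc
    have henc_inj : ∀ σ, Function.Injective (enc σ) := by
      intro σ k k' h
      have := Encodable.encode_injective h
      have hlen := congrArg List.length this
      simpa using hlen
    set A : (ℕ → Bool) → Set ℕ := fun σ => Set.range (enc σ) with hA
    have hAinf : ∀ σ, (A σ).Infinite := fun σ => Set.infinite_range_of_injective (henc_inj σ)
    have hkey : ∀ σ τ : ℕ → Bool, σ ≠ τ → u (A σ) ≠ u (A τ) := by
      intro σ τ hne heq
      obtain ⟨i, hi⟩ := Function.ne_iff.mp hne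
      have hmem : A σ ∩ A τ ∈ u (A σ) :=
        Filter.inter_mem (hu _ (hAinf σ)).1 (heq ▸ (hu _ (hAinf τ)).1)
      have hinf := free_infinite (hu _ (hAinf σ)).2 hmem
      have hfin : (A σ ∩ A τ).Finite := by
        refine Set.Finite.subset (Set.Finite.image (enc σ) (Set.finite_Iic i)) ?_
        rintro x ⟨⟨k, rfl⟩, ⟨k', hk'⟩⟩
        have hlist : (List.range k').map τ = (List.range k).map σ := Encodable.encode_injective hk'
        have hlen : k' = k := by simpa using congrArg List.length hlist
        subst hlen
        have hpt : ∀ j ∈ List.range k', τ j = σ j := List.map_eq_map_iff.mp hlist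
        have hki : k' ≤ i := by
          by_contra hgt
          exact hi ((hpt i (List.mem_range.mpr (lt_of_not_ge hgt))).symm)
        exact ⟨k', Set.mem_Iic.mpr hki, rfl⟩
      exact hinf hfin
    have hmk : Cardinal.mk (ℕ → Bool) = Cardinal.continuum := by
      rw [← Cardinal.power_def, Cardinal.mk_bool, Cardinal.mk_nat, Cardinal.two_power_aleph0]
    rw [← hmk]
    refine Cardinal.mk_le_of_injective
      (f := fun σ => (⟨u (A σ), by rw [hXeq]; exact Or.inr ⟨A σ, hAinf σ, rfl⟩⟩ : ↥X)) ?_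
    intro σ τ h
    by_contra hne
    exact hkey σ τ hne (congrArg Subtype.val h)
  exact le_antisymm hup hlow
end parts

theorem stmt10 (X : Set (Ultrafilter ℕ)) (hX : IsHS X) :
    Pseudocompact ↥X ∧ Cardinal.mk ↥X = Cardinal.continuum ∧
      (∀ K : Set (Ultrafilter ℕ), K ⊆ X → IsCompact K → K.Finite) := by
  obtain ⟨u, hu, hXeq⟩ := hX
  exact ⟨part1 hu hXeq, part2 hu hXeq,
    fun K hKX hKc => compact_subset_finite (part2 hu hXeq) hKX hKc⟩
end

section
/- Let X be a subspace of βℕ with ℕ ⊆ X. The following are equivalent: (1) X belongs to the class HS; (2) X is pseudocompact and has cardinality 𝔠 = 2^ℵ₀; (3) X has cardinality 𝔠 and every infinite subset S of ℕ has an accumulation point in X (a point x ∈ X every neighbourhood of which contains infinitely many elements of S). -/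
open Filter Topology

/-! ### Auxiliary material -/

namespace StmtAux

abbrev P : ℕ → Ultrafilter ℕ := pure

lemma free_iff_not_range (u : Ultrafilter ℕ) :
    IsFreeUltrafilter u ↔ u ∉ Set.range P := by
  simp [IsFreeUltrafilter, Set.mem_range, not_exists, eq_comm, P]

lemma free_infinite_mem {u : Ultrafilter ℕ} (hu : IsFreeUltrafilter u) {A : Set ℕ} (hA : A ∈ u) :
    A.Infinite := by
  by_contra hfin
  rw [Set.not_infinite] at hfin
  obtain ⟨x, -, hx⟩ := Ultrafilter.eq_pure_of_finite_mem hfin hA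
  exact hu x hx

lemma acc_of_mem {x : Ultrafilter ℕ} (hx : IsFreeUltrafilter x) {S : Set ℕ} (hS : S ∈ x)
    {U : Set (Ultrafilter ℕ)} (hU : IsOpen U) (hxU : x ∈ U) :
    (U ∩ (P '' S)).Infinite := by
  obtain ⟨t, ⟨s, rfl⟩, hxt, htU⟩ := ultrafilterBasis_is_basis.exists_subset_of_mem_open hxU hU
  have hsx : s ∈ x := hxt
  have hinf : (s ∩ S).Infinite := free_infinite_mem hx (x.1.inter_sets hsx hS)
  have himg : (P '' (s ∩ S)).Infinite :=
    hinf.image (Set.injOn_of_injective Ultrafilter.pure_injective)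
  refine himg.mono ?_
  rintro - ⟨n, ⟨hns, hnS⟩, rfl⟩
  exact ⟨htU hns, Set.mem_image_of_mem _ hnS⟩

lemma singleton_basic (n : ℕ) : {u : Ultrafilter ℕ | ({n} : Set ℕ) ∈ u} = {P n} := by
  ext u
  simp only [Set.mem_setOf_eq, Set.mem_singleton_iff]
  constructor
  · intro h
    obtain ⟨m, hm, rfl⟩ := Ultrafilter.eq_pure_of_finite_mem (Set.finite_singleton n) h
    simp_all [P]
  · rintro rfl; simp [P]

lemma acc_mem_free {x : Ultrafilter ℕ} {S : Set ℕ}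
    (h : ∀ U : Set (Ultrafilter ℕ), IsOpen U → x ∈ U → (U ∩ (P '' S)).Infinite) :
    S ∈ x ∧ IsFreeUltrafilter x := by
  constructor
  · by_contra hS
    have hSc : Sᶜ ∈ x := Ultrafilter.compl_mem_iff_notMem.mpr hS
    obtain ⟨v, hv1, n, hnS, rfl⟩ := (h {u | Sᶜ ∈ u} (ultrafilter_isOpen_basic _) hSc).nonempty
    exact (hv1 : Sᶜ ∈ P n) hnS
  · intro n hn
    have h2 := h {u | ({n} : Set ℕ) ∈ u} (ultrafilter_isOpen_basic _) (by rw [hn]; simp [P])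
    refine h2 (Set.Finite.subset (Set.finite_singleton (P n)) ?_)
    rw [← singleton_basic]
    exact Set.inter_subset_left

/-! ### An almost disjoint family of size continuum -/

open Classical in
noncomputable def adset (x : Set ℕ) : ℕ → ℕ := fun n =>
  Encodable.encode ((List.range n).map fun i => if i ∈ x then (1:ℕ) else 0)

lemma adset_inj (x : Set ℕ) : Function.Injective (adset x) := by
  intro m n h
  have := Encodable.encode_injective h
  have := congrArg List.length this
  simpa using this

lemma adset_almost_disjoint {x y : Set ℕ} (hxy : x ≠ y) :
    (Set.range (adset x) ∩ Set.range (adset y)).Finite := by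
  classical
  have : ∃ i, ¬(i ∈ x ↔ i ∈ y) := by
    by_contra h
    push_neg at h
    exact hxy (Set.ext fun i => h i)
  obtain ⟨i, hi⟩ := this
  refine Set.Finite.subset ((Set.finite_Iic i).image (adset x)) ?_
  rintro - ⟨⟨m, rfl⟩, ⟨n, hn⟩⟩
  have hl := Encodable.encode_injective hn
  have hlen : n = m := by simpa using congrArg List.length hl
  subst hlen
  refine ⟨n, ?_, rfl⟩
  by_contra hni
  simp only [Set.mem_Iic, not_le] at hni  -- i < n
  have hin : i < n := by simpa using hni
  have := congrArg (fun l : List ℕ => l[i]?) hl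
  simp only [List.getElem?_map, List.getElem?_range, hin, if_pos, List.getElem?_eq_getElem,
    List.getElem_range, Option.map_some, Option.some.injEq] at this
  apply hi
  constructor <;> intro hmem <;> [skip; skip] <;> by_contra hc <;> simp [hmem, hc] at this

/-! ### The accumulation point property -/

def HasAcc (X : Set (Ultrafilter ℕ)) : Prop :=
  ∀ S : Set ℕ, S.Infinite → ∃ x ∈ X,
    ∀ U : Set (Ultrafilter ℕ), IsOpen U → x ∈ U → (U ∩ (P '' S)).Infinite

lemma hs_to_acc {X : Set (Ultrafilter ℕ)} (h : IsHS X) : HasAcc X := by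
  obtain ⟨u, hu, hXeq⟩ := h
  intro S hS
  refine ⟨u S, ?_, fun U hU hxU => acc_of_mem (hu S hS).2 (hu S hS).1 hU hxU⟩
  rw [hXeq]; exact Or.inr ⟨S, hS, rfl⟩

open Cardinal in
lemma hs_card {X : Set (Ultrafilter ℕ)} (h : IsHS X) :
    Cardinal.mk ↥X = Cardinal.continuum := by
  obtain ⟨u, hu, hXeq⟩ := h
  apply le_antisymm
  · calc #↥X = #↥(Set.range P ∪ {v | ∃ A : Set ℕ, A.Infinite ∧ v = u A}) := by rw [← hXeq]
    _ ≤ #↥(Set.range P) + #↥{v | ∃ A : Set ℕ, A.Infinite ∧ v = u A} := mk_union_le _ _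
    _ ≤ ℵ₀ + 𝔠 := by
        gcongr
        · exact mk_range_le.trans (by simp)
        · have hsub : {v | ∃ A : Set ℕ, A.Infinite ∧ v = u A} ⊆ Set.range u := by
            rintro v ⟨A, -, rfl⟩; exact ⟨A, rfl⟩
          exact le_trans (mk_le_mk_of_subset hsub) (mk_range_le.trans mk_set_nat.le)
    _ = 𝔠 := aleph0_add_continuum
  · rw [← mk_set_nat]
    refine mk_le_of_injective (f := fun x : Set ℕ => (⟨u (Set.range (adset x)), ?_⟩ : ↥X)) ?_
    · rw [hXeq]
      exact Or.inr ⟨_, Set.infinite_range_of_injective (adset_inj x), rfl⟩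
    · intro x y hxy
      simp only [Subtype.mk.injEq] at hxy
      by_contra hne
      have hx := hu _ (Set.infinite_range_of_injective (adset_inj x))
      have hy := hu _ (Set.infinite_range_of_injective (adset_inj y))
      have hmem : Set.range (adset x) ∩ Set.range (adset y) ∈ u (Set.range (adset x)) :=
        (u _).1.inter_sets hx.1 (hxy ▸ hy.1)
      exact (free_infinite_mem hx.2 hmem) (adset_almost_disjoint hne)

/-! ### Pseudocompactness and accumulation points -/

lemma pseudo_to_acc {X : Set (Ultrafilter ℕ)} (hX : Set.range P ⊆ X)
    (hp : Pseudocompact ↥X) : HasAcc X := by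
  classical
  intro S hS
  by_contra hcon
  push_neg at hcon
  set φ : ↥X → ℝ := fun y => if h : ∃ n ∈ S, y.1 = P n then (h.choose : ℝ) else 0 with hφ
  have hval : ∀ n ∈ S, ∀ (hy : P n ∈ X), φ ⟨P n, hy⟩ = n := by
    intro n hn hy
    have h : ∃ m ∈ S, (⟨P n, hy⟩ : ↥X).1 = P m := ⟨n, hn, rfl⟩
    rw [hφ]
    simp only [dif_pos h]
    have := h.choose_spec.2
    have : h.choose = n := Ultrafilter.pure_injective this.symm
    rw [this]
  have hcont : Continuous φ := by
    rw [continuous_iff_continuousAt]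
    intro y
    obtain ⟨U, hUo, hyU, hUfin⟩ := hcon y.1 y.2
    by_cases hy : ∃ n ∈ S, y.1 = P n
    · obtain ⟨n, hnS, hyn⟩ := hy
      have hopen : IsOpen {u : Ultrafilter ℕ | ({n} : Set ℕ) ∈ u} := ultrafilter_isOpen_basic _
      have hmem : (Subtype.val ⁻¹' {u : Ultrafilter ℕ | ({n} : Set ℕ) ∈ u}) ∈ 𝓝 y := by
        refine (hopen.preimage continuous_subtype_val).mem_nhds ?_
        have : y.1 ∈ {u : Ultrafilter ℕ | ({n} : Set ℕ) ∈ u} := by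
          rw [singleton_basic, hyn]; rfl
        exact this
      refine Filter.EventuallyEq.continuousAt (y := φ y) ?_
      filter_upwards [hmem] with z hz
      have : z.1 ∈ ({P n} : Set (Ultrafilter ℕ)) := by rw [← singleton_basic]; exact hz
      have hzy : z = y := Subtype.ext (by rw [this, hyn])
      rw [hzy]
    · have hy' : y.1 ∉ P '' S := by
        rintro ⟨n, hn, hpn⟩; exact hy ⟨n, hn, hpn.symm⟩
      have hVo : IsOpen (U \ (U ∩ P '' S)) := hUo.sdiff hUfin.isClosed
      have hmem : (Subtype.val ⁻¹' (U \ (U ∩ P '' S))) ∈ 𝓝 y :=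
        (hVo.preimage continuous_subtype_val).mem_nhds ⟨hyU, fun h => hy' h.2⟩
      refine Filter.EventuallyEq.continuousAt (y := φ y) ?_
      filter_upwards [hmem] with z hz
      have hz' : ¬∃ n ∈ S, z.1 = P n := by
        rintro ⟨n, hn, hpn⟩
        exact hz.2 ⟨hz.1, n, hn, hpn.symm⟩
      rw [hφ]; simp only [dif_neg hz', dif_neg hy]
  obtain ⟨M, hM⟩ := hp φ hcont
  obtain ⟨n, hnS, hn⟩ := hS.exists_gt ⌈M⌉₊
  have h1 := hM ⟨P n, hX ⟨n, rfl⟩⟩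
  rw [hval n hnS] at h1
  have : M ≤ (⌈M⌉₊ : ℝ) := Nat.le_ceil M
  have : (n : ℝ) ≤ M := le_trans (le_abs_self _) h1
  have : (⌈M⌉₊ : ℝ) < n := by exact_mod_cast hn
  linarith [Nat.le_ceil M]

lemma acc_to_pseudo {X : Set (Ultrafilter ℕ)} (hX : Set.range P ⊆ X)
    (hacc : HasAcc X) : Pseudocompact ↥X := by
  classical
  intro f hf
  by_contra hM
  push_neg at hM
  -- Step 1: f is unbounded on ℕ
  have hnat : ∀ M : ℝ, ∃ n : ℕ, M < |f ⟨P n, hX ⟨n, rfl⟩⟩| := by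
    intro M
    obtain ⟨x, hx⟩ := hM (M + 1)
    have hcont : ContinuousAt f x := hf.continuousAt
    have hball : f ⁻¹' Metric.ball (f x) 1 ∈ 𝓝 x :=
      hcont.preimage_mem_nhds (Metric.ball_mem_nhds _ one_pos)
    rw [nhds_subtype_eq_comap, Filter.mem_comap] at hball
    obtain ⟨t, ht, hsub⟩ := hball
    obtain ⟨U, hUt, hUo, hxU⟩ := mem_nhds_iff.mp ht
    obtain ⟨n, hn⟩ := denseRange_pure.exists_mem_open hUo ⟨x.1, hxU⟩
    have hmem : (⟨P n, hX ⟨n, rfl⟩⟩ : ↥X) ∈ f ⁻¹' Metric.ball (f x) 1 :=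
      hsub (by exact hUt hn)
    have hd : dist (f ⟨P n, hX ⟨n, rfl⟩⟩) (f x) < 1 := hmem
    rw [Real.dist_eq] at hd
    refine ⟨n, ?_⟩
    have := abs_sub_abs_le_abs_sub (f x) (f ⟨P n, hX ⟨n, rfl⟩⟩)
    rw [abs_sub_comm] at hd
    linarith
  -- Step 2: for every M and m there is n > m with M < |f (pure n)|
  have hstep : ∀ (M : ℝ) (m : ℕ), ∃ n : ℕ, m < n ∧ M < |f ⟨P n, hX ⟨n, rfl⟩⟩| := by
    intro M m
    set C : ℝ := |M| + ∑ k ∈ Finset.range (m + 1), |f ⟨P k, hX ⟨k, rfl⟩⟩| with hC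
    obtain ⟨n, hn⟩ := hnat C
    have hCM : M ≤ C := by
      have : (0:ℝ) ≤ ∑ k ∈ Finset.range (m + 1), |f ⟨P k, hX ⟨k, rfl⟩⟩| :=
        Finset.sum_nonneg fun _ _ => abs_nonneg _
      calc M ≤ |M| := le_abs_self M
      _ ≤ C := by rw [hC]; linarith
    refine ⟨n, ?_, lt_of_le_of_lt hCM hn⟩
    by_contra hle
    push_neg at hle
    have hmem : n ∈ Finset.range (m + 1) := Finset.mem_range.mpr (Nat.lt_succ_of_le hle)
    have : |f ⟨P n, hX ⟨n, rfl⟩⟩| ≤ C := by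
      rw [hC]
      have := Finset.single_le_sum (f := fun k => |f ⟨P k, hX ⟨k, rfl⟩⟩|)
        (fun _ _ => abs_nonneg _) hmem
      have h0 : (0:ℝ) ≤ |M| := abs_nonneg _
      linarith
    linarith
  choose g hg1 hg2 using hstep
  -- Step 3: a sequence along which f grows
  let seq : ℕ → ℕ := fun k => Nat.rec (g 0 0) (fun k ih => g (k + 1 : ℕ) ih) k
  have hseq_succ : ∀ k, seq (k + 1) = g ((k:ℕ) + 1 : ℕ) (seq k) := fun k => rfl
  have hseq_mono : StrictMono seq := strictMono_nat_of_lt_succ fun k => by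
    rw [hseq_succ]; exact hg1 _ _
  have hseq_val : ∀ k : ℕ, (k : ℝ) < |f ⟨P (seq k), hX ⟨seq k, rfl⟩⟩| := by
    intro k
    cases k with
    | zero => rw [Nat.cast_zero]; exact hg2 (0:ℝ) 0
    | succ k =>
      have := hg2 ((k:ℕ) + 1 : ℕ) (seq k)
      rw [← hseq_succ] at this
      exact_mod_cast this
  obtain ⟨x, hxX, hx⟩ := hacc (Set.range seq) (Set.infinite_range_of_injective hseq_mono.injective)
  set x' : ↥X := ⟨x, hxX⟩ with hx'
  have hcont : ContinuousAt f x' := hf.continuousAt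
  have hball : f ⁻¹' Metric.ball (f x') 1 ∈ 𝓝 x' :=
    hcont.preimage_mem_nhds (Metric.ball_mem_nhds _ one_pos)
  rw [nhds_subtype_eq_comap, Filter.mem_comap] at hball
  obtain ⟨t, ht, hsub⟩ := hball
  obtain ⟨U, hUt, hUo, hxU⟩ := mem_nhds_iff.mp ht
  have hinf := hx U hUo hxU
  have hTinf : {k : ℕ | P (seq k) ∈ U}.Infinite := by
    by_contra hfin
    rw [Set.not_infinite] at hfin
    apply hinf
    refine Set.Finite.subset (hfin.image (fun k => P (seq k))) ?_
    rintro v ⟨hvU, m, ⟨k, rfl⟩, rfl⟩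
    exact ⟨k, hvU, rfl⟩
  obtain ⟨k, hkT, hk⟩ := hTinf.exists_gt ⌈|f x'| + 1⌉₊
  have hmem : (⟨P (seq k), hX ⟨seq k, rfl⟩⟩ : ↥X) ∈ f ⁻¹' Metric.ball (f x') 1 :=
    hsub (hUt hkT)
  have hd : dist (f ⟨P (seq k), hX ⟨seq k, rfl⟩⟩) (f x') < 1 := hmem
  rw [Real.dist_eq] at hd
  have h1 := hseq_val k
  have h2 : |f x'| + 1 ≤ (⌈|f x'| + 1⌉₊ : ℝ) := Nat.le_ceil _
  have h3 : (⌈|f x'| + 1⌉₊ : ℝ) < (k : ℝ) := by exact_mod_cast hk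
  have h4 := abs_sub_abs_le_abs_sub (f ⟨P (seq k), hX ⟨seq k, rfl⟩⟩) (f x')
  linarith

/-! ### From the accumulation property and cardinality bound to HS -/

def Ev : Set ℕ := {n | Even n}

lemma mem_oddimg (s : Set ℕ) (k : ℕ) :
    (2 * k + 1) ∈ Ev ∪ ((fun j => 2 * j + 1) '' s) ↔ k ∈ s := by
  simp only [Set.mem_union, Set.mem_image, Ev, Set.mem_setOf_eq]
  constructor
  · rintro (h | ⟨j, hj, hjk⟩)
    · rw [Nat.even_iff] at h; omega
    · obtain rfl : j = k := by omega
      exact hj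
  · intro h; exact Or.inr ⟨k, h, rfl⟩

lemma mem_evenimg (s : Set ℕ) (k : ℕ) :
    (2 * k) ∈ Evᶜ ∪ ((fun j => 2 * j) '' s) ↔ k ∈ s := by
  simp only [Set.mem_union, Set.mem_image, Ev, Set.mem_compl_iff, Set.mem_setOf_eq]
  constructor
  · rintro (h | ⟨j, hj, hjk⟩)
    · exact absurd (even_two_mul k) h
    · obtain rfl : j = k := by omega
      exact hj
  · intro h; exact Or.inr ⟨k, h, rfl⟩

lemma two_mul_mem_Ev (k : ℕ) : 2 * k ∈ Ev := even_two_mul k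
lemma two_mul_add_one_mem_Evc (k : ℕ) : 2 * k + 1 ∈ Evᶜ := by
  simp only [Ev, Set.mem_compl_iff, Set.mem_setOf_eq, Nat.even_iff]; omega

open Classical in
noncomputable def gfun {X : Set (Ultrafilter ℕ)} (emb : ↥X ↪ Set ℕ) (y : ↥X) : Set ℕ :=
  if Ev ∈ y.1 then Ev ∪ ((fun k => 2 * k + 1) '' emb y)
  else Evᶜ ∪ ((fun k => 2 * k) '' emb y)

lemma gfun_pos {X : Set (Ultrafilter ℕ)} (emb : ↥X ↪ Set ℕ) {y : ↥X} (h : Ev ∈ y.1) :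
    gfun emb y = Ev ∪ ((fun k => 2 * k + 1) '' emb y) := by rw [gfun, if_pos h]

lemma gfun_neg {X : Set (Ultrafilter ℕ)} (emb : ↥X ↪ Set ℕ) {y : ↥X} (h : Ev ∉ y.1) :
    gfun emb y = Evᶜ ∪ ((fun k => 2 * k) '' emb y) := by rw [gfun, if_neg h]

lemma card_acc_to_hs {X : Set (Ultrafilter ℕ)} (hX : Set.range P ⊆ X)
    (hcard : Cardinal.mk ↥X ≤ Cardinal.continuum) (hacc : HasAcc X) : IsHS X := by
  classical
  obtain ⟨emb⟩ := (Cardinal.le_def _ _).mp (hcard.trans_eq Cardinal.mk_set_nat.symm)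
  set g : ↥X → Set ℕ := gfun emb with hg
  have hgmem : ∀ y : ↥X, g y ∈ y.1 := by
    intro y
    by_cases h : Ev ∈ y.1
    · rw [hg, gfun_pos emb h]
      exact Filter.mem_of_superset h Set.subset_union_left
    · rw [hg, gfun_neg emb h]
      exact Filter.mem_of_superset (Ultrafilter.compl_mem_iff_notMem.mpr h)
        Set.subset_union_left
  have hginj : Function.Injective g := by
    intro a b hab
    by_cases ha : Ev ∈ a.1 <;> by_cases hb : Ev ∈ b.1
    · apply emb.injective
      ext k
      rw [← mem_oddimg (emb a) k, ← mem_oddimg (emb b) k]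
      rw [hg, gfun_pos emb ha, gfun_pos emb hb] at hab
      rw [hab]
    · exfalso
      rw [hg, gfun_pos emb ha, gfun_neg emb hb] at hab
      have hbuniv : ∀ k, k ∈ emb b := by
        intro k
        rw [← mem_evenimg (emb b) k, ← hab]
        exact Or.inl (two_mul_mem_Ev k)
      have hauniv : ∀ k, k ∈ emb a := by
        intro k
        rw [← mem_oddimg (emb a) k, hab]
        exact Or.inl (two_mul_add_one_mem_Evc k)
      have : emb a = emb b := by
        ext k; simp [hauniv k, hbuniv k]
      have hab' : a = b := emb.injective this
      rw [hab'] at ha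
      exact hb ha
    · exfalso
      rw [hg, gfun_neg emb ha, gfun_pos emb hb] at hab
      have hauniv : ∀ k, k ∈ emb a := by
        intro k
        rw [← mem_evenimg (emb a) k, hab]
        exact Or.inl (two_mul_mem_Ev k)
      have hbuniv : ∀ k, k ∈ emb b := by
        intro k
        rw [← mem_oddimg (emb b) k, ← hab]
        exact Or.inl (two_mul_add_one_mem_Evc k)
      have : emb a = emb b := by
        ext k; simp [hauniv k, hbuniv k]
      have hab' : a = b := emb.injective this
      rw [hab'] at ha
      exact ha hb
    · apply emb.injective
      ext k
      rw [← mem_evenimg (emb a) k, ← mem_evenimg (emb b) k]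
      rw [hg, gfun_neg emb ha, gfun_neg emb hb] at hab
      rw [hab]
  have key : ∀ A : Set ℕ, A.Infinite → ∃ x, x ∈ X ∧ A ∈ x ∧ IsFreeUltrafilter x := by
    intro A hA
    obtain ⟨x, hxX, hx⟩ := hacc A hA
    obtain ⟨h1, h2⟩ := acc_mem_free hx
    exact ⟨x, hxX, h1, h2⟩
  refine ⟨fun A =>
    if h1 : ∃ y : ↥X, IsFreeUltrafilter y.1 ∧ g y = A then h1.choose.1
    else if h2 : A.Infinite then (key A h2).choose else pure 0, ?_, ?_⟩
  · intro A hA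
    by_cases h1 : ∃ y : ↥X, IsFreeUltrafilter y.1 ∧ g y = A
    · simp only [dif_pos h1]
      refine ⟨?_, h1.choose_spec.1⟩
      have hm := hgmem h1.choose
      rwa [h1.choose_spec.2] at hm
    · simp only [dif_neg h1, dif_pos hA]
      exact ⟨(key A hA).choose_spec.2.1, (key A hA).choose_spec.2.2⟩
  · ext x
    constructor
    · intro hxX
      by_cases hp : x ∈ Set.range P
      · exact Or.inl hp
      · right
        set y : ↥X := ⟨x, hxX⟩ with hy
        have hfree : IsFreeUltrafilter x := (free_iff_not_range x).mpr hp
        have hAinf : (g y).Infinite := free_infinite_mem hfree (hgmem y)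
        refine ⟨g y, hAinf, ?_⟩
        have h1 : ∃ y' : ↥X, IsFreeUltrafilter y'.1 ∧ g y' = g y := ⟨y, hfree, rfl⟩
        simp only [dif_pos h1]
        have := hginj h1.choose_spec.2
        rw [this]
    · rintro (hx | ⟨A, hAinf, rfl⟩)
      · exact hX hx
      · by_cases h1 : ∃ y : ↥X, IsFreeUltrafilter y.1 ∧ g y = A
        · simp only [dif_pos h1]
          exact h1.choose.2
        · simp only [dif_neg h1, dif_pos hAinf]
          exact (key A hAinf).choose_spec.1

end StmtAux

open StmtAux in
/-- For a subspace `X` of `βℕ` containing `ℕ`, the following are equivalent: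
(1) `X ∈ HS`; (2) `X` is pseudocompact of cardinality continuum; (3) `X` has cardinality
continuum and every infinite `S ⊆ ℕ` has an accumulation point in `X`. -/
theorem stmt12 (X : Set (Ultrafilter ℕ))
    (hX : Set.range (pure : ℕ → Ultrafilter ℕ) ⊆ X) :
    (IsHS X ↔ (Pseudocompact ↥X ∧ Cardinal.mk ↥X = Cardinal.continuum)) ∧
    (IsHS X ↔ (Cardinal.mk ↥X = Cardinal.continuum ∧
      ∀ S : Set ℕ, S.Infinite → ∃ x ∈ X,
        ∀ U : Set (Ultrafilter ℕ), IsOpen U → x ∈ U →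
          (U ∩ ((pure : ℕ → Ultrafilter ℕ) '' S)).Infinite)) := by
  constructor
  · constructor
    · intro h
      exact ⟨acc_to_pseudo hX (hs_to_acc h), hs_card h⟩
    · rintro ⟨hp, hc⟩
      exact card_acc_to_hs hX hc.le (pseudo_to_acc hX hp)
  · constructor
    · intro h
      exact ⟨hs_card h, hs_to_acc h⟩
    · rintro ⟨hc, hacc⟩
      exact card_acc_to_hs hX hc.le hacc
end

section
/- Let X = ℕ ∪ {u_A : A ⊆ ℕ infinite} be a space in the class HS such that for all distinct infinite A, B ⊆ ℕ the ultrafilters u_A and u_B are not isomorphic. Then the square X × X is not pseudocompact. -/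
open Filter Topology

/-- Two ultrafilters on `ℕ` are isomorphic if one is the image of the other under a
bijection of `ℕ`. -/
def UltraIso (u v : Ultrafilter ℕ) : Prop :=
  ∃ f : ℕ → ℕ, Function.Bijective f ∧ Ultrafilter.map f u = v

/-- The fixed-point-free involution of `ℕ` swapping evens and odds. -/
def sigSwap (n : ℕ) : ℕ := if n % 2 = 0 then n + 1 else n - 1

lemma sigSwap_invol : Function.Involutive sigSwap := by
  intro n; unfold sigSwap; split_ifs <;> omega

lemma sigSwap_even (n : ℕ) : sigSwap (2 * n) = 2 * n + 1 := by
  unfold sigSwap; split_ifs <;> omega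

lemma singleton_mem_iff_eq_pure {v : Ultrafilter ℕ} {k : ℕ} :
    {k} ∈ v ↔ v = pure k := by
  constructor
  · intro h
    obtain ⟨x, hx, hvx⟩ := Ultrafilter.eq_pure_of_finite_mem (Set.finite_singleton k) h
    simpa [hx.symm] using hvx
  · rintro rfl; simp [Ultrafilter.mem_pure]

lemma compl_singleton_mem_of_ne {v : Ultrafilter ℕ} {k : ℕ} (h : v ≠ pure k) :
    ({k}ᶜ : Set ℕ) ∈ v :=
  Ultrafilter.compl_mem_iff_notMem.2 (fun hk => h (singleton_mem_iff_eq_pure.1 hk))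

lemma exists_sep {v w : Ultrafilter ℕ} (h : v ≠ w) : ∃ s : Set ℕ, s ∈ v ∧ sᶜ ∈ w := by
  by_contra hc
  push_neg at hc
  apply h
  ext s
  constructor
  · intro hs
    by_contra hw
    exact hc s hs (Ultrafilter.compl_mem_iff_notMem.2 hw)
  · intro hs
    by_contra hv
    have hcv : sᶜ ∈ v := Ultrafilter.compl_mem_iff_notMem.2 hv
    exact hc sᶜ hcv (by simpa using hs)

/-- If `X = ℕ ∪ {u_A : A ⊆ ℕ infinite}` is a space in the class HS (a subspace of `βℕ`,
realized as `Ultrafilter ℕ`, with `ℕ` identified with the principal ultrafilters) such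
that the ultrafilters `u_A`, `u_B` are non-isomorphic for distinct infinite `A, B ⊆ ℕ`,
then `X × X` is not pseudocompact. -/
theorem stmt13 (u : Set ℕ → Ultrafilter ℕ)
    (hu : ∀ A : Set ℕ, A.Infinite → A ∈ u A ∧ IsFreeUltrafilter (u A))
    (hiso : ∀ A B : Set ℕ, A.Infinite → B.Infinite → A ≠ B → ¬UltraIso (u A) (u B))
    (X : Set (Ultrafilter ℕ))
    (hX : X = Set.range (pure : ℕ → Ultrafilter ℕ) ∪
      {v | ∃ A : Set ℕ, A.Infinite ∧ v = u A}) :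
    ¬Pseudocompact (↥X × ↥X) := by
  intro hP
  have hpure : ∀ k : ℕ, (pure k : Ultrafilter ℕ) ∈ X := by
    intro k; rw [hX]; exact Or.inl ⟨k, rfl⟩
  -- the discrete "diagonal" sequence
  set e : ℕ → Ultrafilter ℕ × Ultrafilter ℕ :=
    fun n => (pure (2 * n), pure (2 * n + 1)) with he
  have einj : Function.Injective e := by
    intro a b hab
    have h1 := congrArg Prod.fst hab
    simp only [he] at h1
    have : ({2 * a} : Set ℕ) ∈ (pure (2 * b) : Ultrafilter ℕ) := by
      rw [← h1]; simp [Ultrafilter.mem_pure]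
    rw [Ultrafilter.mem_pure] at this
    simp at this
    omega
  set g : Ultrafilter ℕ × Ultrafilter ℕ → ℝ :=
    Function.extend e (fun n => (n : ℝ)) (fun _ => 0) with hg
  set f : ↥X × ↥X → ℝ := fun p => g ((p.1 : Ultrafilter ℕ), (p.2 : Ultrafilter ℕ)) with hf
  have hfcont : Continuous f := by
    rw [continuous_iff_continuousAt]
    rintro ⟨⟨v, hvX⟩, ⟨w, hwX⟩⟩
    -- enough: f is locally constant near the point
    suffices h : ∃ s t : Set ℕ, s ∈ v ∧ t ∈ w ∧
        ∀ q : ↥X × ↥X, s ∈ (q.1 : Ultrafilter ℕ) → t ∈ (q.2 : Ultrafilter ℕ) →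
          f q = f (⟨⟨v, hvX⟩, ⟨w, hwX⟩⟩ : ↥X × ↥X) by
      obtain ⟨s, t, hs, ht, hconst⟩ := h
      have hRopen : IsOpen {q : ↥X × ↥X |
          s ∈ (q.1 : Ultrafilter ℕ) ∧ t ∈ (q.2 : Ultrafilter ℕ)} := by
        have h1 : IsOpen {q : ↥X × ↥X | s ∈ (q.1 : Ultrafilter ℕ)} :=
          (ultrafilter_isOpen_basic s).preimage
            (continuous_subtype_val.comp continuous_fst)
      
        have h2 : IsOpen {q : ↥X × ↥X | t ∈ (q.2 : Ultrafilter ℕ)} :=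
          (ultrafilter_isOpen_basic t).preimage
            (continuous_subtype_val.comp continuous_snd)
        exact h1.inter h2
      have hR : {q : ↥X × ↥X | s ∈ (q.1 : Ultrafilter ℕ) ∧ t ∈ (q.2 : Ultrafilter ℕ)} ∈
          𝓝 (⟨⟨v, hvX⟩, ⟨w, hwX⟩⟩ : ↥X × ↥X) := hRopen.mem_nhds ⟨hs, ht⟩
      exact continuousAt_const.congr
        ((Filter.eventuallyEq_of_mem hR (fun q hq => hconst q hq.1 hq.2)).symm)
    by_cases h1 : ∃ n, v = pure (2 * n) ∧ w = pure (2 * n + 1)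
    · obtain ⟨n, hv1, hw1⟩ := h1
      refine ⟨{2 * n}, {2 * n + 1}, ?_, ?_, ?_⟩
      · rw [hv1]; simp [Ultrafilter.mem_pure]
      · rw [hw1]; simp [Ultrafilter.mem_pure]
      · intro q hq1 hq2
        have e1 : (q.1 : Ultrafilter ℕ) = v := by
          rw [singleton_mem_iff_eq_pure.1 hq1, hv1]
        have e2 : (q.2 : Ultrafilter ℕ) = w := by
          rw [singleton_mem_iff_eq_pure.1 hq2, hw1]
        simp only [hf, e1, e2]
    · have key : ∃ s t : Set ℕ, s ∈ v ∧ t ∈ w ∧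
          ∀ n : ℕ, ¬(2 * n ∈ s ∧ 2 * n + 1 ∈ t) := by
        by_cases hv2 : ∃ m, v = pure m
        · obtain ⟨m, rfl⟩ := hv2
          by_cases hm : ∃ n, m = 2 * n
          · obtain ⟨n, rfl⟩ := hm
            have hw2 : w ≠ pure (2 * n + 1) := fun h => h1 ⟨n, rfl, h⟩
            refine ⟨{2 * n}, {2 * n + 1}ᶜ, by simp [Ultrafilter.mem_pure],
              compl_singleton_mem_of_ne hw2, ?_⟩
            rintro n' ⟨ha, hb⟩
            simp only [Set.mem_singleton_iff] at ha
            have : n' = n := by omega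
            subst this
            exact hb rfl
          · refine ⟨{m}, Set.univ, by simp [Ultrafilter.mem_pure], univ_mem, ?_⟩
            rintro n' ⟨ha, _⟩
            exact hm ⟨n', by simpa using ha.symm⟩
        · by_cases hw2 : ∃ k, w = pure k
          · obtain ⟨k, rfl⟩ := hw2
            by_cases hk : ∃ n, k = 2 * n + 1
            · obtain ⟨n, rfl⟩ := hk
              have hvp : v ≠ pure (2 * n) := fun h => hv2 ⟨_, h⟩
              refine ⟨{2 * n}ᶜ, {2 * n + 1}, compl_singleton_mem_of_ne hvp,
                by simp [Ultrafilter.mem_pure], ?_⟩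
              rintro n' ⟨ha, hb⟩
              simp only [Set.mem_singleton_iff] at hb
              have : n' = n := by omega
              subst this
              exact ha rfl
            · refine ⟨Set.univ, {k}, univ_mem, by simp [Ultrafilter.mem_pure], ?_⟩
              rintro n' ⟨_, hb⟩
              exact hk ⟨n', by simpa using hb.symm⟩
          · -- both free ultrafilters
            have hvfree : ∃ C : Set ℕ, C.Infinite ∧ v = u C := by
              have := hvX; rw [hX] at this
              rcases this with ⟨m, hm⟩ | ⟨C, hC, hvc⟩
              · exact absurd ⟨m, hm.symm⟩ hv2
              · exact ⟨C, hC, hvc⟩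
            have hwfree : ∃ E : Set ℕ, E.Infinite ∧ w = u E := by
              have := hwX; rw [hX] at this
              rcases this with ⟨m, hm⟩ | ⟨E, hE, hwc⟩
              · exact absurd ⟨m, hm.symm⟩ hw2
              · exact ⟨E, hE, hwc⟩
            have hne : Ultrafilter.map sigSwap v ≠ w := by
              intro heq
              obtain ⟨C, hC, rfl⟩ := hvfree
              obtain ⟨E, hE, rfl⟩ := hwfree
              have hCE : C = E := by
                by_contra hne'
                exact hiso C E hC hE hne' ⟨sigSwap, sigSwap_invol.bijective, heq⟩
              subst hCE
              set Ev : Set ℕ := {n | n % 2 = 0} with hEv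
              have hsub1 : Ev ⊆ sigSwap ⁻¹' Evᶜ := by
                intro n hn
                simp only [hEv, Set.mem_setOf_eq, Set.mem_preimage, Set.mem_compl_iff] at *
                unfold sigSwap; split_ifs <;> omega
              have hsub2 : Evᶜ ⊆ sigSwap ⁻¹' Ev := by
                intro n hn
                simp only [hEv, Set.mem_setOf_eq, Set.mem_preimage, Set.mem_compl_iff] at *
                unfold sigSwap; split_ifs <;> omega
              rcases (u C).mem_or_compl_mem Ev with h | h
              · have h2 : Evᶜ ∈ u C := by
                  have hm1 : sigSwap ⁻¹' Evᶜ ∈ u C := mem_of_superset h hsub1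
                  have hm2 : Evᶜ ∈ Ultrafilter.map sigSwap (u C) :=
                    Ultrafilter.mem_map.2 hm1
                  rwa [heq] at hm2
                exact (Ultrafilter.compl_mem_iff_notMem.1 h2) h
              · have h2 : Ev ∈ u C := by
                  have hm1 : sigSwap ⁻¹' Ev ∈ u C := mem_of_superset h hsub2
                  have hm2 : Ev ∈ Ultrafilter.map sigSwap (u C) :=
                    Ultrafilter.mem_map.2 hm1
                  rwa [heq] at hm2
                exact (Ultrafilter.compl_mem_iff_notMem.1 h) h2
            obtain ⟨T, hT1, hT2⟩ := exists_sep hne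
            refine ⟨sigSwap ⁻¹' T, Tᶜ, Ultrafilter.mem_map.1 hT1, hT2, ?_⟩
            rintro n ⟨ha, hb⟩
            rw [Set.mem_preimage, sigSwap_even] at ha
            exact hb ha
      obtain ⟨s, t, hs, ht, hprop⟩ := key
      have hzero : ∀ v' w' : Ultrafilter ℕ, s ∈ v' → t ∈ w' → g (v', w') = 0 := by
        intro v' w' h1' h2'
        rw [hg]
        rw [Function.extend_apply' _ _ _ ?_]
        rintro ⟨n, hn⟩
        have hfst := congrArg Prod.fst hn
        have hsnd := congrArg Prod.snd hn
        simp only [he] at hfst hsnd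
        rw [← hfst] at h1'
        rw [← hsnd] at h2'
        rw [Ultrafilter.mem_pure] at h1' h2'
        exact hprop n ⟨h1', h2'⟩
      refine ⟨s, t, hs, ht, fun q hq1 hq2 => ?_⟩
      simp only [hf]
      rw [hzero _ _ hq1 hq2, hzero _ _ hs ht]
  obtain ⟨M, hM⟩ := hP f hfcont
  obtain ⟨n, hn⟩ := exists_nat_gt M
  have hMn := hM (⟨⟨pure (2 * n), hpure _⟩, ⟨pure (2 * n + 1), hpure _⟩⟩ : ↥X × ↥X)
  have hfn : f (⟨⟨pure (2 * n), hpure _⟩, ⟨pure (2 * n + 1), hpure _⟩⟩ : ↥X × ↥X) = n := by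
    simp only [hf, hg]
    have : ((pure (2 * n) : Ultrafilter ℕ), (pure (2 * n + 1) : Ultrafilter ℕ)) = e n := rfl
    rw [this, einj.extend_apply]
  rw [hfn] at hMn
  have : |(n : ℝ)| = n := abs_of_nonneg (by positivity)
  rw [this] at hMn
  linarith
end

section
/- There exists a space Y in the class HS such that the square Y × Y is pseudocompact. -/
open Filter Topology

section HSproof

open Set Cardinal

namespace HSaux


open Set Cardinal

abbrev Pt := Set ℕ × Ultrafilter ℕ

lemma freeOf (A : Set ℕ) (hA : A.Infinite) :
    ∃ w : Ultrafilter ℕ, A ∈ w ∧ (w : Filter ℕ) ≤ cofinite := by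
  have h : (cofinite ⊓ 𝓟 A).NeBot := hA.cofinite_inf_principal_neBot
  refine ⟨Ultrafilter.of (cofinite ⊓ 𝓟 A), ?_, ?_⟩
  · exact le_principal_iff.mp ((Ultrafilter.of_le _).trans inf_le_right)
  · exact (Ultrafilter.of_le _).trans inf_le_left

lemma not_mem_of_finite {w : Ultrafilter ℕ} (hw : (w : Filter ℕ) ≤ cofinite) {s : Set ℕ}
    (hs : s.Finite) : s ∉ w :=
  Ultrafilter.compl_mem_iff_notMem.mp (hw hs.compl_mem_cofinite)

lemma free_of_le_cofinite {w : Ultrafilter ℕ} (hw : (w : Filter ℕ) ≤ cofinite) :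
    IsFreeUltrafilter w := by
  intro n hn
  have h1 : ({n} : Set ℕ) ∈ w := by rw [hn]; exact Ultrafilter.mem_pure.2 rfl
  exact not_mem_of_finite hw (finite_singleton n) h1

lemma eq_pure_of_singleton_mem {u : Ultrafilter ℕ} {c : ℕ} (h : {c} ∈ u) : u = pure c := by
  refine Ultrafilter.ext fun s => ⟨fun hs => ?_, fun hs => ?_⟩
  · obtain ⟨x, hx1, hx2⟩ := Ultrafilter.nonempty_of_mem (inter_mem hs h)
    rw [Ultrafilter.mem_pure]
    rwa [mem_singleton_iff.mp hx2] at hx1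
  · exact mem_of_superset h (singleton_subset_iff.2 (Ultrafilter.mem_pure.1 hs))

lemma map_eq_pure {w : Ultrafilter ℕ} {m : ℕ → ℕ} {c : ℕ} (h : m ⁻¹' {c} ∈ w) :
    w.map m = pure c :=
  eq_pure_of_singleton_mem (Ultrafilter.mem_map.2 h)

lemma map_congr' {w : Ultrafilter ℕ} {m n : ℕ → ℕ} (h : {k | m k = n k} ∈ w) :
    w.map m = w.map n := by
  apply Ultrafilter.coe_injective
  rw [Ultrafilter.coe_map, Ultrafilter.coe_map]
  exact Filter.map_congr h

lemma map_free {w : Ultrafilter ℕ} (hw : (w : Filter ℕ) ≤ cofinite) {m : ℕ → ℕ} {K : Set ℕ}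
    (hK : K ∈ w) (hm : Set.InjOn m K) : IsFreeUltrafilter (w.map m) := by
  intro c hc
  have h1 : m ⁻¹' {c} ∈ w := Ultrafilter.mem_map.1 (by rw [hc]; exact Ultrafilter.mem_pure.2 rfl)
  have h2 : m ⁻¹' {c} ∩ K ∈ w := inter_mem h1 hK
  refine not_mem_of_finite hw (Set.Subsingleton.finite ?_) h2
  intro x hx y hy
  have hx1 : m x = c := hx.1
  have hy1 : m y = c := hy.1
  exact hm hx.2 hy.2 (by rw [hx1, hy1])



lemma exists_const_or_injOn (m : ℕ → ℕ) (K : Set ℕ) (hK : K.Infinite) :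
    ∃ K' ⊆ K, K'.Infinite ∧ ((∃ c, ∀ k ∈ K', m k = c) ∨ Set.InjOn m K') := by
  by_cases h : ∃ c, (K ∩ m ⁻¹' {c}).Infinite
  · obtain ⟨c, hc⟩ := h
    exact ⟨K ∩ m ⁻¹' {c}, inter_subset_left, hc, Or.inl ⟨c, fun k hk => hk.2⟩⟩
  · push_neg at h
    have hfib : ∀ c, (K ∩ m ⁻¹' {c}).Finite := fun c => h c
    have himg : (m '' K).Infinite := by
      intro hfin
      refine hK ?_
      have hsub : K ⊆ ⋃ c ∈ m '' K, K ∩ m ⁻¹' {c} := by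
        intro k hk
        exact mem_biUnion ⟨k, hk, rfl⟩ ⟨hk, rfl⟩
      exact (hfin.biUnion (fun c _ => hfib c)).subset hsub
    have hsec : ∀ c, ∃ k, c ∈ m '' K → (k ∈ K ∧ m k = c) := by
      intro c
      by_cases hc : c ∈ m '' K
      · obtain ⟨k, hk, hmk⟩ := hc
        exact ⟨k, fun _ => ⟨hk, hmk⟩⟩
      · exact ⟨0, fun h' => absurd h' hc⟩
    choose g hg using hsec
    refine ⟨g '' (m '' K), ?_, ?_, Or.inr ?_⟩
    · rintro _ ⟨c, hc, rfl⟩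
      exact (hg c hc).1
    · have : Set.InjOn g (m '' K) := by
        intro c hc c' hc' hgc
        rw [← (hg c hc).2, ← (hg c' hc').2, hgc]
      exact himg.image this
    · rintro _ ⟨c, hc, rfl⟩ _ ⟨c', hc', rfl⟩ hmm
      rw [(hg c hc).2, (hg c' hc').2] at hmm
      rw [hmm]

lemma exists_disjoint_images (m n : ℕ → ℕ) (K : Set ℕ) (hK : K.Infinite)
    (hm : Set.InjOn m K) (hn : Set.InjOn n K) (hne : ∀ k ∈ K, m k ≠ n k) :
    ∃ K' ⊆ K, K'.Infinite ∧ (m '' K') ∩ (n '' K') = ∅ := by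
  have key : ∀ (f : ℕ → ℕ), Set.InjOn f K → ∀ (S : Set ℕ), S.Finite →
      {k | k ∈ K ∧ f k ∈ S}.Finite := by
    intro f hf S hS
    have hsub : {k | k ∈ K ∧ f k ∈ S} ⊆ ⋃ v ∈ S, {k | k ∈ K ∧ f k = v} := by
      intro k hk
      exact mem_biUnion hk.2 ⟨hk.1, rfl⟩
    refine (hS.biUnion fun v _ => ?_).subset hsub
    apply Set.Subsingleton.finite
    intro a ha b hb
    exact hf ha.1 hb.1 (ha.2.trans hb.2.symm)
  have step : ∀ F : Finset ℕ, ∃ k, k ∈ K ∧ m k ∉ (m '' F ∪ n '' F) ∧ n k ∉ (m '' F ∪ n '' F) := by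
    intro F
    have hSfin : ((m '' F ∪ n '' F : Set ℕ)).Finite :=
      ((F.finite_toSet.image m).union (F.finite_toSet.image n))
    have hbad : ({k | k ∈ K ∧ m k ∈ (m '' F ∪ n '' F)} ∪
        {k | k ∈ K ∧ n k ∈ (m '' F ∪ n '' F)}).Finite :=
      (key m hm _ hSfin).union (key n hn _ hSfin)
    obtain ⟨k, hk⟩ := (hK.diff hbad).nonempty
    refine ⟨k, hk.1, ?_, ?_⟩
    · intro hmem; exact hk.2 (Or.inl ⟨hk.1, hmem⟩)
    · intro hmem; exact hk.2 (Or.inr ⟨hk.1, hmem⟩)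
  choose pick hpick1 hpick2 hpick3 using step
  let F : ℕ → Finset ℕ := fun i => Nat.rec (∅ : Finset ℕ) (fun j Fj => insert (pick Fj) Fj) i
  have hFsucc : ∀ i, F (i + 1) = insert (pick (F i)) (F i) := fun i => rfl
  set a : ℕ → ℕ := fun i => pick (F i) with ha
  have hpick2' : ∀ i, m (a i) ∉ (m '' {x : ℕ | x ∈ F i} ∪ n '' {x : ℕ | x ∈ F i}) := by
    intro i; simp only [ha]; exact hpick2 (F i)
  have hpick3' : ∀ i, n (a i) ∉ (m '' {x : ℕ | x ∈ F i} ∪ n '' {x : ℕ | x ∈ F i}) := by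
    intro i; simp only [ha]; exact hpick3 (F i)
  have hFmono : ∀ i j, i ≤ j → F i ⊆ F j := by
    intro i j hij
    induction j with
    | zero =>
      have : i = 0 := Nat.le_zero.mp hij
      subst this; exact Finset.Subset.refl _
    | succ j ih =>
      rcases Nat.lt_or_ge i (j+1) with h | h
      · have := ih (Nat.lt_succ_iff.mp h)
        rw [hFsucc]
        exact this.trans (Finset.subset_insert _ _)
      · have : i = j + 1 := le_antisymm hij h
        subst this; exact Finset.Subset.refl _
  have hmem : ∀ i j, i < j → a i ∈ F j := by
    intro i j hij
    have : a i ∈ F (i+1) := by simp only [ha]; rw [hFsucc]; exact Finset.mem_insert_self _ _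
    exact hFmono (i+1) j hij this
  have haK : ∀ i, a i ∈ K := by intro i; simp only [ha]; exact hpick1 (F i)
  have haInj : Function.Injective a := by
    intro i j hij
    by_contra hne'
    rcases Nat.lt_or_ge i j with h | h
    · have h1 : a i ∈ F j := hmem i j h
      have h2 : m (a i) = m (a j) := congrArg m hij
      exact hpick2' j (Or.inl ⟨a i, h1, h2⟩)
    · have h' : j < i := lt_of_le_of_ne h (Ne.symm hne')
      have h1 : a j ∈ F i := hmem j i h'
      have h2 : m (a j) = m (a i) := congrArg m hij.symm
      exact hpick2' i (Or.inl ⟨a j, h1, h2⟩)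
  refine ⟨Set.range a, ?_, Set.infinite_range_of_injective haInj, ?_⟩
  · rintro _ ⟨i, rfl⟩; exact haK i
  · ext v
    simp only [mem_inter_iff, mem_empty_iff_false, iff_false]
    rintro ⟨⟨_, ⟨i, rfl⟩, hvi⟩, ⟨_, ⟨j, rfl⟩, hvj⟩⟩
    rcases lt_trichotomy i j with h | h | h
    · exact hpick3' j (Or.inl ⟨a i, hmem i j h, hvi.trans hvj.symm⟩)
    · subst h; exact hne (a i) (haK i) (hvi.trans hvj.symm)
    · exact hpick2' i (Or.inr ⟨a j, hmem j i h, hvj.trans hvi.symm⟩)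

lemma injOn_image_cancel {m : ℕ → ℕ} {K S S' : Set ℕ} (hm : Set.InjOn m K)
    (hS : S ⊆ K) (hS' : S' ⊆ K) (h : m '' S = m '' S') : S = S' := by
  ext k
  constructor
  · intro hk
    have : m k ∈ m '' S' := h ▸ mem_image_of_mem m hk
    obtain ⟨k', hk', hmk⟩ := this
    rwa [hm (hS' hk') (hS hk) hmk] at hk'
  · intro hk
    have : m k ∈ m '' S := h.symm ▸ mem_image_of_mem m hk
    obtain ⟨k', hk', hmk⟩ := this
    rwa [hm (hS hk') (hS' hk) hmk] at hk'

lemma exists_fresh (K : Set ℕ) (hK : K.Infinite) (m n : ℕ → ℕ)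
    (hm : Set.InjOn m K) (hn : Set.InjOn n K) (used : Set (Set ℕ)) (hu : #used < 𝔠) :
    ∃ K' ⊆ K, K'.Infinite ∧ m '' K' ∉ used ∧ n '' K' ∉ used := by
  by_contra hcon
  push_neg at hcon
  set T : Set (Set ℕ) := {S | S ⊆ K ∧ S.Infinite} with hT
  set Bm : Set (Set ℕ) := {S | S ∈ T ∧ m '' S ∈ used} with hBm
  set Bn : Set (Set ℕ) := {S | S ∈ T ∧ n '' S ∈ used} with hBn
  have hTsub : T ⊆ Bm ∪ Bn := by
    rintro S ⟨hS1, hS2⟩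
    by_cases hmu : m '' S ∈ used
    · exact Or.inl ⟨⟨hS1, hS2⟩, hmu⟩
    · exact Or.inr ⟨⟨hS1, hS2⟩, hcon S hS1 hS2 hmu⟩
  have hBmle : #Bm ≤ #used := by
    refine Cardinal.mk_le_of_injective (f := fun S => (⟨m '' S.1, S.2.2⟩ : used)) ?_
    intro S S' hSS
    have := congrArg Subtype.val hSS
    simp only at this
    exact Subtype.ext (injOn_image_cancel hm S.2.1.1 S'.2.1.1 this)
  have hBnle : #Bn ≤ #used := by
    refine Cardinal.mk_le_of_injective (f := fun S => (⟨n '' S.1, S.2.2⟩ : used)) ?_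
    intro S S' hSS
    have := congrArg Subtype.val hSS
    simp only at this
    exact Subtype.ext (injOn_image_cancel hn S.2.1.1 S'.2.1.1 this)
  have hTge : 𝔠 ≤ #T := by
    have e : ℕ ↪ ↥K := hK.natEmbedding
    set E : ℕ → ℕ := fun i => (e i : ℕ) with hE
    have hEinj : Function.Injective E := fun i j hij => e.injective (Subtype.ext hij)
    have hEK : ∀ i, E i ∈ K := fun i => (e i).2
    set code : Set ℕ → Set ℕ := fun X => (fun i => 2*i) '' X ∪ (fun i => 2*i+1) '' univ with hcode
    have hcodeinj : Function.Injective code := by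
      intro X X' hXX
      have hrec : ∀ Y : Set ℕ, {i | 2*i ∈ code Y} = Y := by
        intro Y
        ext i
        simp only [hcode, mem_setOf_eq, mem_union, mem_image, mem_univ, true_and]
        constructor
        · rintro (⟨j, hj, hji⟩ | ⟨j, hji⟩)
          · rwa [← Nat.eq_of_mul_eq_mul_left (by norm_num) hji.symm] at hj
          · omega
        · intro hi; exact Or.inl ⟨i, hi, rfl⟩
      rw [← hrec X, ← hrec X', hXX]
    have hcodeinf : ∀ X, (code X).Infinite := by
      intro X
      have hodd : ((fun i => 2*i+1) '' univ : Set ℕ).Infinite := by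
        rw [Set.image_univ]
        exact Set.infinite_range_of_injective (fun i j hij => by omega)
      exact hodd.mono subset_union_right
    have hΦinj : Function.Injective (fun X : Set ℕ =>
        (⟨E '' code X, fun x hx => by obtain ⟨i, _, rfl⟩ := hx; exact hEK i,
          ((hcodeinf X).image (hEinj.injOn))⟩ : T)) := by
      intro X X' hXX
      have h1 : E '' code X = E '' code X' := congrArg Subtype.val hXX
      exact hcodeinj ((Set.image_injective.mpr hEinj) h1)
    calc 𝔠 = #(Set ℕ) := mk_set_nat.symm
    _ ≤ #T := Cardinal.mk_le_of_injective hΦinj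
  have hchain : 𝔠 ≤ #used + #used :=
    hTge.trans ((Cardinal.mk_le_mk_of_subset hTsub).trans
      ((Cardinal.mk_union_le _ _).trans (add_le_add hBmle hBnle)))
  exact absurd hchain (not_le.mpr (Cardinal.add_lt_of_lt aleph0_le_continuum hu hu))




def goodPatch (m n : ℕ → ℕ) (used : Set (Set ℕ)) (P : Set Pt) : Prop :=
  P.Finite ∧
  (∀ q ∈ P, q.1.Infinite ∧ q.1 ∈ q.2 ∧ IsFreeUltrafilter q.2 ∧ q.1 ∉ used) ∧
  (∀ q ∈ P, ∀ q' ∈ P, q.1 = q'.1 → q = q') ∧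
  ∃ w : Ultrafilter ℕ, (w : Filter ℕ) ≤ cofinite ∧
    (w.map m ∈ Set.range (pure : ℕ → Ultrafilter ℕ) ∨ ∃ q ∈ P, w.map m = q.2) ∧
    (w.map n ∈ Set.range (pure : ℕ → Ultrafilter ℕ) ∨ ∃ q ∈ P, w.map n = q.2)

lemma mem_map_image {w : Ultrafilter ℕ} {m : ℕ → ℕ} {K : Set ℕ} (hK : K ∈ w) :
    m '' K ∈ w.map m :=
  Ultrafilter.mem_map.2 (mem_of_superset hK (subset_preimage_image m K))

lemma core (m n : ℕ → ℕ) (used : Set (Set ℕ)) (hu : #used < 𝔠) :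
    ∃ P : Set Pt, goodPatch m n used P := by
  obtain ⟨K₁, hK₁sub, hK₁, hm1⟩ := exists_const_or_injOn m univ infinite_univ
  obtain ⟨K₂, hK₂sub, hK₂, hn2⟩ := exists_const_or_injOn n K₁ hK₁
  have hm2 : (∃ c, ∀ k ∈ K₂, m k = c) ∨ Set.InjOn m K₂ := by
    rcases hm1 with ⟨c, h⟩ | h
    · exact Or.inl ⟨c, fun k hk => h k (hK₂sub hk)⟩
    · exact Or.inr (h.mono hK₂sub)
  -- helper to build singleton patches
  have single : ∀ (K : Set ℕ) (g : ℕ → ℕ), K.Infinite → Set.InjOn g K → g '' K ∉ used →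
      ∀ w : Ultrafilter ℕ, K ∈ w → (w : Filter ℕ) ≤ cofinite →
      (∀ q ∈ ({(g '' K, w.map g)} : Set Pt),
        q.1.Infinite ∧ q.1 ∈ q.2 ∧ IsFreeUltrafilter q.2 ∧ q.1 ∉ used) := by
    intro K g hKinf hginj hfresh w hKw hwcof q hq
    rw [mem_singleton_iff] at hq
    subst hq
    exact ⟨hKinf.image hginj, mem_map_image hKw, map_free hwcof hKw hginj, hfresh⟩
  rcases hm2 with ⟨c, hc⟩ | hminj
  · rcases hn2 with ⟨d, hd⟩ | hninj
    · -- both constant on K₂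
      obtain ⟨w, hwK, hwcof⟩ := freeOf K₂ hK₂
      refine ⟨∅, finite_empty, by simp, by simp, w, hwcof,
        Or.inl ⟨c, (map_eq_pure (mem_of_superset hwK fun k hk => hc k hk)).symm⟩,
        Or.inl ⟨d, (map_eq_pure (mem_of_superset hwK fun k hk => hd k hk)).symm⟩⟩
    · -- m constant, n injective on K₂
      obtain ⟨K₃, hK₃sub, hK₃, hfn, _⟩ :=
        exists_fresh K₂ hK₂ n n hninj hninj used hu
      obtain ⟨w, hwK, hwcof⟩ := freeOf K₃ hK₃
      have hninj₃ := hninj.mono hK₃sub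
      refine ⟨{(n '' K₃, w.map n)}, finite_singleton _,
        single K₃ n hK₃ hninj₃ hfn w hwK hwcof, ?_, w, hwcof,
        Or.inl ⟨c, (map_eq_pure (mem_of_superset hwK fun k hk => hc k (hK₃sub hk))).symm⟩,
        Or.inr ⟨_, mem_singleton _, rfl⟩⟩
      rintro q hq q' hq' _
      rw [mem_singleton_iff] at hq hq'
      rw [hq, hq']
  · rcases hn2 with ⟨d, hd⟩ | hninj
    · -- n constant, m injective on K₂
      obtain ⟨K₃, hK₃sub, hK₃, hfm, _⟩ :=
        exists_fresh K₂ hK₂ m m hminj hminj used hu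
      obtain ⟨w, hwK, hwcof⟩ := freeOf K₃ hK₃
      have hminj₃ := hminj.mono hK₃sub
      refine ⟨{(m '' K₃, w.map m)}, finite_singleton _,
        single K₃ m hK₃ hminj₃ hfm w hwK hwcof, ?_, w, hwcof,
        Or.inr ⟨_, mem_singleton _, rfl⟩,
        Or.inl ⟨d, (map_eq_pure (mem_of_superset hwK fun k hk => hd k (hK₃sub hk))).symm⟩⟩
      rintro q hq q' hq' _
      rw [mem_singleton_iff] at hq hq'
      rw [hq, hq']
    · -- both injective on K₂
      by_cases heq : {k | k ∈ K₂ ∧ m k = n k}.Infinite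
      · set K₃ := {k | k ∈ K₂ ∧ m k = n k} with hK₃def
        have hK₃sub : K₃ ⊆ K₂ := fun k hk => hk.1
        obtain ⟨K₄, hK₄sub, hK₄, hfm, _⟩ :=
          exists_fresh K₃ heq m m (hminj.mono hK₃sub) (hminj.mono hK₃sub) used hu
        obtain ⟨w, hwK, hwcof⟩ := freeOf K₄ hK₄
        have hminj₄ := hminj.mono (hK₄sub.trans hK₃sub)
        have hmapeq : w.map n = w.map m :=
          (map_congr' (mem_of_superset hwK fun k hk => (hK₄sub hk).2)).symm
        refine ⟨{(m '' K₄, w.map m)}, finite_singleton _,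
          single K₄ m hK₄ hminj₄ hfm w hwK hwcof, ?_, w, hwcof,
          Or.inr ⟨_, mem_singleton _, rfl⟩,
          Or.inr ⟨_, mem_singleton _, hmapeq⟩⟩
        rintro q hq q' hq' _
        rw [mem_singleton_iff] at hq hq'
        rw [hq, hq']
      · have hne : {k | k ∈ K₂ ∧ m k ≠ n k}.Infinite := by
          have hsub : K₂ ⊆ {k | k ∈ K₂ ∧ m k = n k} ∪ {k | k ∈ K₂ ∧ m k ≠ n k} := by
            intro k hk
            by_cases h : m k = n k
            · exact Or.inl ⟨hk, h⟩
            · exact Or.inr ⟨hk, h⟩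
          rcases Set.infinite_union.mp (hK₂.mono hsub) with h | h
          · exact absurd h heq
          · exact h
        set K₃ := {k | k ∈ K₂ ∧ m k ≠ n k} with hK₃def
        have hK₃sub : K₃ ⊆ K₂ := fun k hk => hk.1
        obtain ⟨K₄, hK₄sub, hK₄, hdisj⟩ :=
          exists_disjoint_images m n K₃ hne (hminj.mono hK₃sub) (hninj.mono hK₃sub)
            (fun k hk => hk.2)
        obtain ⟨K₅, hK₅sub, hK₅, hfm, hfn⟩ :=
          exists_fresh K₄ hK₄ m n (hminj.mono (hK₄sub.trans hK₃sub))
            (hninj.mono (hK₄sub.trans hK₃sub)) used hu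
        obtain ⟨w, hwK, hwcof⟩ := freeOf K₅ hK₅
        have hminj₅ := hminj.mono (hK₅sub.trans (hK₄sub.trans hK₃sub))
        have hninj₅ := hninj.mono (hK₅sub.trans (hK₄sub.trans hK₃sub))
        have hdisj₅ : (m '' K₅) ∩ (n '' K₅) = ∅ :=
          Set.eq_empty_of_subset_empty
            ((Set.inter_subset_inter (Set.image_mono (f := m) hK₅sub)
              (Set.image_mono (f := n) hK₅sub)).trans hdisj.subset)
        have hneq : m '' K₅ ≠ n '' K₅ := by
          intro h
          obtain ⟨v, hv⟩ := (hK₅.image hminj₅).nonempty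
          have : v ∈ (m '' K₅) ∩ (n '' K₅) := ⟨hv, h ▸ hv⟩
          rw [hdisj₅] at this
          exact this
        refine ⟨{(m '' K₅, w.map m), (n '' K₅, w.map n)}, (finite_singleton _).insert _,
          ?_, ?_, w, hwcof,
          Or.inr ⟨_, mem_insert _ _, rfl⟩,
          Or.inr ⟨_, mem_insert_of_mem _ (mem_singleton _), rfl⟩⟩
        · rintro q (hq | hq)
          · rw [hq]
            exact ⟨hK₅.image hminj₅, mem_map_image hwK, map_free hwcof hwK hminj₅, hfm⟩
          · rw [mem_singleton_iff] at hq
            rw [hq]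
            exact ⟨hK₅.image hninj₅, mem_map_image hwK, map_free hwcof hwK hninj₅, hfn⟩
        · rintro q (hq | hq) q' (hq' | hq') hqq
          · rw [hq, hq']
          · rw [mem_singleton_iff] at hq'
            rw [hq, hq'] at hqq
            exact absurd hqq hneq
          · rw [mem_singleton_iff] at hq
            rw [hq, hq'] at hqq
            exact absurd hqq.symm hneq
          · rw [mem_singleton_iff] at hq hq'
            rw [hq, hq']




abbrev J : Type := (Cardinal.mk ((ℕ → ℕ) × (ℕ → ℕ))).ord.ToType

lemma mk_J : #J = #((ℕ → ℕ) × (ℕ → ℕ)) := by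
  rw [Cardinal.mk_toType, Cardinal.card_ord]

lemma mk_fun_pair : #((ℕ → ℕ) × (ℕ → ℕ)) = 𝔠 := by
  have h1 : #(ℕ → ℕ) = 𝔠 := by
    rw [Cardinal.mk_arrow]
    simp [Cardinal.aleph0_power_aleph0]
  rw [Cardinal.mk_prod, h1]
  simp [Cardinal.mul_eq_self aleph0_le_continuum]


noncomputable def enc : J ≃ ((ℕ → ℕ) × (ℕ → ℕ)) :=
  Classical.choice (Cardinal.eq.1 mk_J)

instance : IsWellOrder J ((· < ·) : J → J → Prop) := isWellOrder_lt

lemma mk_Iio_lt (j : J) : #{t : J // t < j} < 𝔠 := by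
  have h1 : (Ordinal.typein ((· < ·) : J → J → Prop) j).card = #{t : J // t < j} :=
    Ordinal.card_typein _
  have h2 : Ordinal.typein ((· < ·) : J → J → Prop) j < (Cardinal.mk ((ℕ → ℕ) × (ℕ → ℕ))).ord :=
    Ordinal.typein_lt_self j
  rw [Cardinal.lt_ord] at h2
  rw [← h1]
  exact h2.trans_le (le_of_eq mk_fun_pair)

open scoped Classical in
noncomputable def trunc (s : Set (Set ℕ)) : Set (Set ℕ) := if #s < 𝔠 then s else ∅

lemma trunc_lt (s : Set (Set ℕ)) : #(trunc s) < 𝔠 := by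
  unfold trunc
  split
  · assumption
  · rw [Cardinal.mk_emptyCollection]
    exact continuum_pos

def usedOf (j : J) (prev : ∀ t : J, t < j → Set Pt) : Set (Set ℕ) :=
  {A | ∃ t : J, ∃ h : t < j, ∃ q ∈ prev t h, q.1 = A}

noncomputable def patch : J → Set Pt :=
  (IsWellFounded.wf (r := ((· < ·) : J → J → Prop))).fix
    (fun j prev => (core (enc j).1 (enc j).2 (trunc (usedOf j prev)) (trunc_lt _)).choose)

lemma patch_eq (j : J) : patch j =
    (core (enc j).1 (enc j).2 (trunc (usedOf j (fun t _ => patch t))) (trunc_lt _)).choose :=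
  WellFounded.fix_eq _ _ j

def used (j : J) : Set (Set ℕ) := {A | ∃ t : J, t < j ∧ ∃ q ∈ patch t, q.1 = A}

lemma usedOf_patch (j : J) : usedOf j (fun t _ => patch t) = used j := by
  ext A
  simp only [usedOf, used, mem_setOf_eq]
  constructor
  · rintro ⟨t, h, hq⟩; exact ⟨t, h, hq⟩
  · rintro ⟨t, h, hq⟩; exact ⟨t, h, hq⟩

lemma patch_spec' (j : J) :
    goodPatch (enc j).1 (enc j).2 (trunc (used j)) (patch j) := by
  rw [patch_eq, usedOf_patch]
  exact (core (enc j).1 (enc j).2 (trunc (used j)) (trunc_lt _)).choose_spec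

lemma patch_finite (j : J) : (patch j).Finite := (patch_spec' j).1

lemma used_small (j : J) : #(used j) < 𝔠 := by
  have hsub : used j ⊆ ⋃ t : {t : J // t < j}, Prod.fst '' (patch t.1) := by
    rintro A ⟨t, ht, q, hq, rfl⟩
    exact mem_iUnion.2 ⟨⟨t, ht⟩, mem_image_of_mem _ hq⟩
  have h1 : #(used j) ≤ #(⋃ t : {t : J // t < j}, Prod.fst '' (patch t.1)) :=
    Cardinal.mk_le_mk_of_subset hsub
  have h2 : #(⋃ t : {t : J // t < j}, Prod.fst '' (patch t.1)) ≤
      #{t : J // t < j} * ℵ₀ := by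
    refine (Cardinal.mk_iUnion_le _).trans ?_
    refine mul_le_mul_right ?_ _
    refine ciSup_le' fun t => ?_
    exact le_of_lt ((patch_finite t.1).image _).lt_aleph0
  have h3 : #{t : J // t < j} * ℵ₀ < 𝔠 :=
    Cardinal.mul_lt_of_lt aleph0_le_continuum (mk_Iio_lt j) aleph0_lt_continuum
  exact (h1.trans h2).trans_lt h3

lemma trunc_used (j : J) : trunc (used j) = used j := if_pos (used_small j)

lemma patch_spec (j : J) :
    goodPatch (enc j).1 (enc j).2 (used j) (patch j) := by
  have := patch_spec' j
  rwa [trunc_used] at this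

lemma patch_unique {j j' : J} {q q' : Pt} (h : q ∈ patch j) (h' : q' ∈ patch j')
    (he : q.1 = q'.1) : q.2 = q'.2 := by
  rcases lt_trichotomy j j' with hlt | heq | hgt
  · exfalso
    have h1 : q'.1 ∉ used j' := ((patch_spec j').2.1 q' h').2.2.2
    exact h1 ⟨j, hlt, q, h, he⟩
  · subst heq
    exact congrArg Prod.snd ((patch_spec j).2.2.1 q h q' h' he)
  · exfalso
    have h1 : q.1 ∉ used j := ((patch_spec j).2.1 q h).2.2.2
    exact h1 ⟨j', hgt, q', h', he.symm⟩

open scoped Classical in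
noncomputable def dfltU (A : Set ℕ) : Ultrafilter ℕ :=
  if h : A.Infinite then (freeOf A h).choose else pure 0

open scoped Classical in
noncomputable def uFun : Set ℕ → Ultrafilter ℕ := fun A =>
  if h : ∃ q : Pt, (∃ j : J, q ∈ patch j) ∧ q.1 = A then h.choose.2 else dfltU A

lemma uFun_patch {j : J} {q : Pt} (hq : q ∈ patch j) : uFun q.1 = q.2 := by
  have h : ∃ q' : Pt, (∃ j : J, q' ∈ patch j) ∧ q'.1 = q.1 := ⟨q, ⟨j, hq⟩, rfl⟩
  classical
  rw [uFun]
  rw [dif_pos h]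
  obtain ⟨⟨j', hj'⟩, he⟩ := h.choose_spec
  exact patch_unique hj' hq he

lemma uFun_spec : ∀ A : Set ℕ, A.Infinite → A ∈ uFun A ∧ IsFreeUltrafilter (uFun A) := by
  intro A hA
  classical
  rw [uFun]
  split
  · rename_i h
    obtain ⟨⟨j, hj⟩, he⟩ := h.choose_spec
    have hs := (patch_spec j).2.1 _ hj
    rw [he] at hs
    exact ⟨hs.2.1, hs.2.2.1⟩
  · rw [dfltU, dif_pos hA]
    obtain ⟨h1, h2⟩ := (freeOf A hA).choose_spec
    refine ⟨h1, ?_⟩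
    intro n hn
    have : ({n} : Set ℕ) ∈ (freeOf A hA).choose := by rw [hn]; exact Ultrafilter.mem_pure.2 rfl
    exact Ultrafilter.compl_mem_iff_notMem.mp (h2 (finite_singleton n).compl_mem_cofinite) this

noncomputable def Yset : Set (Ultrafilter ℕ) :=
  Set.range (pure : ℕ → Ultrafilter ℕ) ∪ {v | ∃ A : Set ℕ, A.Infinite ∧ v = uFun A}

lemma cluster (m n : ℕ → ℕ) :
    ∃ w : Ultrafilter ℕ, (w : Filter ℕ) ≤ cofinite ∧ w.map m ∈ Yset ∧ w.map n ∈ Yset := by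
  set j := enc.symm (m, n) with hj
  obtain ⟨_, _, _, w, hwcof, hm, hn⟩ := patch_spec j
  have hencj : enc j = (m, n) := enc.apply_symm_apply _
  refine ⟨w, hwcof, ?_, ?_⟩
  · rcases hm with h | ⟨q, hq, he⟩
    · rw [hencj] at h
      exact Or.inl h
    · right
      have h1 := (patch_spec j).2.1 q hq
      rw [hencj] at he
      exact ⟨q.1, h1.1, he.trans (uFun_patch hq).symm⟩
  · rcases hn with h | ⟨q, hq, he⟩
    · rw [hencj] at h
      exact Or.inl h
    · right
      have h1 := (patch_spec j).2.1 q hq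
      rw [hencj] at he
      exact ⟨q.1, h1.1, he.trans (uFun_patch hq).symm⟩



lemma nhds_pair {Y : Set (Ultrafilter ℕ)} {p : ↥Y × ↥Y} {S : Set (↥Y × ↥Y)} (hS : S ∈ 𝓝 p) :
    ∃ s t : Set ℕ, s ∈ (p.1 : Ultrafilter ℕ) ∧ t ∈ (p.2 : Ultrafilter ℕ) ∧
      ∀ x : ↥Y × ↥Y, s ∈ (x.1 : Ultrafilter ℕ) → t ∈ (x.2 : Ultrafilter ℕ) → x ∈ S := by
  rw [nhds_prod_eq] at hS
  obtain ⟨U, hU, V, hV, hUV⟩ := Filter.mem_prod_iff.1 hS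
  rw [nhds_subtype] at hU hV
  obtain ⟨U', hU', hU'sub⟩ := hU
  obtain ⟨V', hV', hV'sub⟩ := hV
  obtain ⟨BU, ⟨s, rfl⟩, hps, hBU⟩ := ultrafilterBasis_is_basis.mem_nhds_iff.1 hU'
  obtain ⟨BV, ⟨t, rfl⟩, hpt, hBV⟩ := ultrafilterBasis_is_basis.mem_nhds_iff.1 hV'
  refine ⟨s, t, hps, hpt, fun x hxs hxt => ?_⟩
  exact hUV ⟨hU'sub (hBU hxs), hV'sub (hBV hxt)⟩

end HSaux

/-- There is a space `Y` in the class HS whose square is pseudocompact. -/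
theorem stmt14 : ∃ Y : Set (Ultrafilter ℕ), IsHS Y ∧ Pseudocompact (↥Y × ↥Y) := by
  refine ⟨HSaux.Yset, ⟨HSaux.uFun, HSaux.uFun_spec, rfl⟩, ?_⟩
  intro f hf
  by_contra hcon
  push_neg at hcon
  have hpure : ∀ a : ℕ, (pure a : Ultrafilter ℕ) ∈ HSaux.Yset := fun a => Or.inl ⟨a, rfl⟩
  have seq : ∀ k : ℕ, ∃ ab : ℕ × ℕ, (k : ℝ) <
      |f (⟨pure ab.1, hpure ab.1⟩, ⟨pure ab.2, hpure ab.2⟩)| := by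
    intro k
    obtain ⟨p, hp⟩ := hcon (k : ℝ)
    have hopen : {x : ↥HSaux.Yset × ↥HSaux.Yset | (k : ℝ) < |f x|} ∈ 𝓝 p := by
      have ho : IsOpen {x : ↥HSaux.Yset × ↥HSaux.Yset | (k : ℝ) < |f x|} :=
        isOpen_lt continuous_const hf.abs
      exact ho.mem_nhds hp
    obtain ⟨s, t, hs, ht, hst⟩ := HSaux.nhds_pair hopen
    obtain ⟨a, ha⟩ := Ultrafilter.nonempty_of_mem hs
    obtain ⟨b, hb⟩ := Ultrafilter.nonempty_of_mem ht
    exact ⟨(a, b), hst (⟨pure a, hpure a⟩, ⟨pure b, hpure b⟩)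
      (Ultrafilter.mem_pure.2 ha) (Ultrafilter.mem_pure.2 hb)⟩
  choose ab hab using seq
  set m : ℕ → ℕ := fun k => (ab k).1 with hm
  set n : ℕ → ℕ := fun k => (ab k).2 with hn
  obtain ⟨w, hwcof, hwm, hwn⟩ := HSaux.cluster m n
  set P : ↥HSaux.Yset × ↥HSaux.Yset := (⟨w.map m, hwm⟩, ⟨w.map n, hwn⟩) with hP
  have hS : {x : ↥HSaux.Yset × ↥HSaux.Yset | |f x - f P| < 1} ∈ 𝓝 P := by
    have h1 : Metric.ball (f P) 1 ∈ 𝓝 (f P) := Metric.ball_mem_nhds _ one_pos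
    have h2 := hf.continuousAt (x := P) h1
    refine mem_of_superset h2 ?_
    intro x hx
    simpa [Metric.mem_ball, Real.dist_eq] using hx
  obtain ⟨s, t, hs, ht, hst⟩ := HSaux.nhds_pair hS
  have h1 : m ⁻¹' s ∈ w := Ultrafilter.mem_map.1 hs
  have h2 : n ⁻¹' t ∈ w := Ultrafilter.mem_map.1 ht
  set k₀ : ℕ := ⌈|f P|⌉₊ + 1 with hk₀
  have h3 : {k : ℕ | k₀ ≤ k} ∈ w := by
    apply hwcof
    rw [Filter.mem_cofinite]
    have he : {k : ℕ | k₀ ≤ k}ᶜ = Set.Iio k₀ := by ext k; simp [not_le]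
    rw [he]
    exact Set.finite_Iio k₀
  obtain ⟨k, hk⟩ := Ultrafilter.nonempty_of_mem (inter_mem (inter_mem h1 h2) h3)
  obtain ⟨⟨hks, hkt⟩, hkk⟩ := hk
  set x : ↥HSaux.Yset × ↥HSaux.Yset :=
    (⟨pure (m k), hpure (m k)⟩, ⟨pure (n k), hpure (n k)⟩) with hx'
  have hx : x ∈ {x : ↥HSaux.Yset × ↥HSaux.Yset | |f x - f P| < 1} :=
    hst x (Ultrafilter.mem_pure.2 hks) (Ultrafilter.mem_pure.2 hkt)
  have hfk : (k : ℝ) < |f x| := hab k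
  have habs : |f x| - |f P| ≤ |f x - f P| := by
    have := abs_sub_abs_le_abs_sub (f x) (f P); linarith
  have hceil : |f P| ≤ (⌈|f P|⌉₊ : ℝ) := Nat.le_ceil _
  have hk0k : (k₀ : ℝ) ≤ (k : ℝ) := Nat.cast_le.2 hkk
  have hcast : (k₀ : ℝ) = (⌈|f P|⌉₊ : ℝ) + 1 := by rw [hk₀]; push_cast; ring
  simp only [Set.mem_setOf_eq] at hx
  linarith

end HSproof
end
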